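/- arXiv:0805.3688 — 7 statements merged into one kernel-verified Lean document; each statement's English description precedes it below -/
import Mathlib

section
/- Bipolar theorem: For n ≥ 1 and a subset W ⊆ (ℝmax^n)^2, W is the polar of a cone (i.e., there exists V ⊆ ℝmax^n with W = V°) if, and only if, the following three conditions hold: (i) W is a topologically closed subsemimodule of (ℝmax^n)^2; (ii) for all f, g ∈ ℝmax^n, f ≤ g implies (f,g) ∈ W; (iii) (f,g) ∈ W and (g,h) ∈ W imply (f,h) ∈ W. -/
open scoped Classical

noncomputable section

/-- The max-plus semiring `ℝmax = ℝ ∪ {-∞}`. Its `Add` is the max-plus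
"multiplication" `a ⊗ b = a + b` (with `-∞` absorbing), its `max` is the
max-plus "addition". -/
abbrev Rmax := WithBot ℝ

/-- The order topology on `WithBot ℝ` (the topology of the metric
`d(a,b) = |exp a - exp b|`). -/
instance : TopologicalSpace Rmax := Preorder.topology Rmax
instance : OrderTopology Rmax := ⟨rfl⟩

/-- Vectors of the max-plus semimodule `ℝmax^n`. -/
abbrev RmaxVec (n : ℕ) := Fin n → Rmax

/-- The max-plus linear combination `xλ ⊕ yμ`. -/
def maxComb {n : ℕ} (x y : RmaxVec n) (lam mu : Rmax) : RmaxVec n :=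
  fun i => max (x i + lam) (y i + mu)

/-- `V ⊆ ℝmax^n` is a (max-plus) subsemimodule. -/
def IsSubsemimodule {n : ℕ} (V : Set (RmaxVec n)) : Prop :=
  ∀ x ∈ V, ∀ y ∈ V, ∀ lam mu : Rmax, maxComb x y lam mu ∈ V

/-- `W ⊆ (ℝmax^n)² ≅ ℝmax^{2n}` is a (max-plus) subsemimodule,
with the entrywise operations. -/
def IsSubsemimodulePair {n : ℕ} (W : Set (RmaxVec n × RmaxVec n)) : Prop :=
  ∀ p ∈ W, ∀ q ∈ W, ∀ lam mu : Rmax,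
    (maxComb p.1 q.1 lam mu, maxComb p.2 q.2 lam mu) ∈ W

/-- A pre-congruence: a subsemimodule of `(ℝmax^n)²` containing the diagonal
and transitive. -/
def IsPrecongruence {n : ℕ} (W : Set (RmaxVec n × RmaxVec n)) : Prop :=
  IsSubsemimodulePair W ∧ (∀ f : RmaxVec n, (f, f) ∈ W) ∧
    ∀ f g h : RmaxVec n, (f, g) ∈ W → (g, h) ∈ W → (f, h) ∈ W

/-- A polar cone: a pre-congruence such that `f ≤ g` implies `(f,g) ∈ W`. -/
def IsPolarCone {n : ℕ} (W : Set (RmaxVec n × RmaxVec n)) : Prop :=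
  IsPrecongruence W ∧ ∀ f g : RmaxVec n, f ≤ g → (f, g) ∈ W

/-- A congruence: a symmetric pre-congruence. -/
def IsCongruence {n : ℕ} (W : Set (RmaxVec n × RmaxVec n)) : Prop :=
  IsPrecongruence W ∧ ∀ f g : RmaxVec n, (f, g) ∈ W → (g, f) ∈ W

/-- The max-plus bracket `⟨y, x⟩ = max_i (y_i + x_i)`. -/
def mpBracket {n : ℕ} (y x : RmaxVec n) : Rmax :=
  Finset.univ.sup fun i => y i + x i

/-- The polar `V°` of `V ⊆ ℝmax^n`. -/
def mpPolar {n : ℕ} (V : Set (RmaxVec n)) : Set (RmaxVec n × RmaxVec n) :=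
  { p | ∀ x ∈ V, mpBracket p.1 x ≤ mpBracket p.2 x }

/-- The orthogonal `V⊥` of `V ⊆ ℝmax^n`. -/
def mpOrtho {n : ℕ} (V : Set (RmaxVec n)) : Set (RmaxVec n × RmaxVec n) :=
  { p | ∀ x ∈ V, mpBracket p.1 x = mpBracket p.2 x }

/-- The dual polar `W⋄` of `W ⊆ (ℝmax^n)²`. -/
def mpDiamond {n : ℕ} (W : Set (RmaxVec n × RmaxVec n)) : Set (RmaxVec n) :=
  { x | ∀ p ∈ W, mpBracket p.1 x ≤ mpBracket p.2 x }

/-- The dual orthogonal `W⊤` of `W ⊆ (ℝmax^n)²`. -/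
def mpTop {n : ℕ} (W : Set (RmaxVec n × RmaxVec n)) : Set (RmaxVec n) :=
  { x | ∀ p ∈ W, mpBracket p.1 x = mpBracket p.2 x }

namespace MPaux

noncomputable instance : ConditionallyCompleteLinearOrder Rmax :=
  { (WithBot.conditionallyCompleteLattice : ConditionallyCompleteLattice Rmax),
    (inferInstance : LinearOrder Rmax) with
    csSup_of_not_bddAbove := fun s hs => by
      have h1 : sSup s = ⊥ := if_pos (Or.inr hs)
      have h2 : sSup (∅ : Set Rmax) = ⊥ := WithBot.sSup_empty
      rw [h1, h2]
    csInf_of_not_bddBelow := fun s hs => absurd (OrderBot.bddBelow s) hs }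

/-! ### scalar lemmas -/

theorem rmax_exists_coe {a : Rmax} (h : a ≠ ⊥) : ∃ r : ℝ, a = (r : Rmax) := by
  induction a using WithBot.recBotCoe with
  | bot => exact absurd rfl h
  | coe a => exact ⟨a, rfl⟩

theorem max_add_right (a b c : Rmax) : max a b + c = max (a + c) (b + c) :=
  (max_add_add_right a b c).symm

theorem add_le_add_right' {a b : Rmax} (c : Rmax) (h : a ≤ b) : a + c ≤ b + c :=
  add_le_add_left h c

theorem le_of_add_le_add_right' {a b : Rmax} {c : ℝ} (h : a + (c:Rmax) ≤ b + (c:Rmax)) :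
    a ≤ b :=
  (WithBot.add_le_add_iff_right (WithBot.coe_ne_bot)).1 h

/-! ### vectors -/

variable {n : ℕ}

/-- scalar translate of a vector -/
def vadd (v : RmaxVec n) (c : Rmax) : RmaxVec n := fun i => v i + c

/-- the vector with `lam` in coordinate `j` and `⊥` elsewhere -/
def unit (j : Fin n) (lam : Rmax) : RmaxVec n := fun i => if i = j then lam else ⊥

/-- the all-`⊥` vector -/
def botVec : RmaxVec n := fun _ => ⊥

/-- the all-zero vector -/
def zeroVec : RmaxVec n := fun _ => (0 : Rmax)

@[simp] theorem vadd_apply (v : RmaxVec n) (c : Rmax) (i : Fin n) : vadd v c i = v i + c := rfl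

@[simp] theorem unit_same (j : Fin n) (lam : Rmax) : unit j lam j = lam := if_pos rfl

theorem unit_other {i j : Fin n} (h : i ≠ j) (lam : Rmax) : unit j lam i = ⊥ := if_neg h

theorem unit_le_iff {j : Fin n} {lam : Rmax} {v : RmaxVec n} :
    unit j lam ≤ v ↔ lam ≤ v j := by
  constructor
  · intro h; simpa using h j
  · intro h i
    by_cases hij : i = j
    · subst hij; simpa using h
    · simp [unit_other hij]

theorem unit_mono {j : Fin n} {lam mu : Rmax} (h : lam ≤ mu) : unit j lam ≤ unit j mu :=
  unit_le_iff.2 (by simpa using h)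

theorem bot_le' (v : RmaxVec n) : (botVec : RmaxVec n) ≤ v := fun i => bot_le

theorem vadd_unit (j : Fin n) (lam c : Rmax) : vadd (unit j lam) c = unit j (lam + c) := by
  funext i
  by_cases hij : i = j
  · subst hij; simp [vadd, unit]
  · simp [vadd, unit_other hij, unit, hij, WithBot.bot_add]

theorem vadd_vadd (v : RmaxVec n) (c d : ℝ) :
    vadd (vadd v (c : Rmax)) (d : Rmax) = vadd v ((c + d : ℝ) : Rmax) := by
  funext i
  simp [vadd, add_assoc, ← WithBot.coe_add]

theorem vadd_cancel (v : RmaxVec n) (c : ℝ) :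
    vadd (vadd v (c : Rmax)) ((-c : ℝ) : Rmax) = v := by
  rw [vadd_vadd]
  funext i
  simp [vadd]

theorem vadd_mono {v w : RmaxVec n} (c : Rmax) (h : v ≤ w) : vadd v c ≤ vadd w c :=
  fun i => add_le_add_left (h i) c

/-! ### bracket lemmas -/

theorem le_mpBracket (y x : RmaxVec n) (i : Fin n) : y i + x i ≤ mpBracket y x :=
  Finset.le_sup (f := fun i => y i + x i) (Finset.mem_univ i)

theorem mpBracket_le_iff {y x : RmaxVec n} {c : Rmax} :
    mpBracket y x ≤ c ↔ ∀ i, y i + x i ≤ c := by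
  simp [mpBracket, Finset.sup_le_iff]

theorem mpBracket_mono_left {y y' : RmaxVec n} (x : RmaxVec n) (h : y ≤ y') :
    mpBracket y x ≤ mpBracket y' x := by
  refine mpBracket_le_iff.2 fun i => le_trans ?_ (le_mpBracket y' x i)
  exact add_le_add_left (h i) _

theorem mpBracket_sup (y z x : RmaxVec n) :
    mpBracket (y ⊔ z) x = max (mpBracket y x) (mpBracket z x) := by
  classical
  have : (fun i => (y ⊔ z) i + x i)
      = (fun i => y i + x i) ⊔ (fun i => z i + x i) := by
    funext i
    show max (y i) (z i) + x i = max (y i + x i) (z i + x i)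
    exact max_add_right _ _ _
  show Finset.univ.sup (fun i => (y ⊔ z) i + x i) = _
  rw [this, Finset.sup_sup]
  rfl

theorem mpBracket_vadd (y x : RmaxVec n) (c : Rmax) :
    mpBracket (vadd y c) x = mpBracket y x + c := by
  classical
  show Finset.univ.sup (fun i => (y i + c) + x i) = Finset.univ.sup (fun i => y i + x i) + c
  have h1 : (fun i : Fin n => (y i + c) + x i) = fun i => (y i + x i) + c := by
    funext i
    rw [add_assoc, add_comm c (x i), ← add_assoc]
  rw [h1]
  refine (Finset.comp_sup_eq_sup_comp (fun a : Rmax => a + c) (fun a b => ?_) ?_).symm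
  · exact max_add_right a b c
  · exact WithBot.bot_add c

theorem mpBracket_unit (j : Fin n) (lam : Rmax) (x : RmaxVec n) :
    mpBracket (unit j lam) x = lam + x j := by
  classical
  apply le_antisymm
  · refine mpBracket_le_iff.2 fun i => ?_
    by_cases hij : i = j
    · subst hij; simp
    · simp [unit_other hij, WithBot.bot_add]
  · simpa using le_mpBracket (unit j lam) x j

theorem mpBracket_botVec (x : RmaxVec n) : mpBracket (botVec : RmaxVec n) x = ⊥ := by
  classical
  refine le_antisymm (mpBracket_le_iff.2 fun i => ?_) bot_le
  simp [botVec, WithBot.bot_add]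


variable {n : ℕ}

/-! ### continuity -/

def addRightIso (r : ℝ) : Rmax ≃o Rmax where
  toFun := fun a => a + (r : Rmax)
  invFun := fun a => a + ((-r : ℝ) : Rmax)
  left_inv := fun a => by
    induction a using WithBot.recBotCoe with
    | bot => simp [WithBot.bot_add]
    | coe a => show (a : Rmax) + _ + _ = _; rw [← WithBot.coe_add, ← WithBot.coe_add]; norm_num
  right_inv := fun a => by
    induction a using WithBot.recBotCoe with
    | bot => simp [WithBot.bot_add]
    | coe a => show (a : Rmax) + _ + _ = _; rw [← WithBot.coe_add, ← WithBot.coe_add]; norm_num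
  map_rel_iff' := by
    intro a b
    exact WithBot.add_le_add_iff_right (WithBot.coe_ne_bot)

theorem continuous_add_const (c : Rmax) : Continuous (fun a : Rmax => a + c) := by
  induction c using WithBot.recBotCoe with
  | bot =>
    have : (fun a : Rmax => a + ⊥) = fun _ => (⊥ : Rmax) := by
      funext a; exact WithBot.add_bot a
    rw [this]; exact continuous_const
  | coe r => exact (addRightIso r).toHomeomorph.continuous

theorem continuous_finsetSup {α : Type*} [TopologicalSpace α] {ι : Type*} (s : Finset ι)
    (F : ι → α → Rmax) (h : ∀ i, Continuous (F i)) :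
    Continuous (fun a => s.sup (fun i => F i a)) := by
  classical
  induction s using Finset.cons_induction with
  | empty => simpa using continuous_const
  | cons j s hj ih =>
    have : (fun a => (Finset.cons j s hj).sup fun i => F i a)
        = fun a => (F j a) ⊔ (s.sup fun i => F i a) := by
      funext a; simp [Finset.sup_cons]
    rw [this]
    exact (h j).max ih

theorem continuous_mpBracket_left (x : RmaxVec n) :
    Continuous (fun y : RmaxVec n => mpBracket y x) := by
  apply continuous_finsetSup
  intro i
  exact (continuous_add_const (x i)).comp (continuous_apply i)

theorem isClosed_mpPolar (V : Set (RmaxVec n)) : IsClosed (mpPolar V) := by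
  have : mpPolar V = ⋂ x ∈ V, { p : RmaxVec n × RmaxVec n | mpBracket p.1 x ≤ mpBracket p.2 x } := by
    ext p; simp [mpPolar]
  rw [this]
  refine isClosed_biInter fun x _ => isClosed_le ?_ ?_
  · exact (continuous_mpBracket_left x).comp continuous_fst
  · exact (continuous_mpBracket_left x).comp continuous_snd

end MPaux

namespace MPaux
variable {n : ℕ}

/-! ### maxComb lemmas -/

theorem maxComb_eq_sup_vadd (x y : RmaxVec n) (lam mu : Rmax) :
    maxComb x y lam mu = vadd x lam ⊔ vadd y mu := rfl

theorem maxComb_self_zero (x y : RmaxVec n) : maxComb x y 0 0 = x ⊔ y := by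
  funext i
  show max (x i + 0) (y i + 0) = max (x i) (y i)
  rw [add_zero, add_zero]

theorem maxComb_scale (x y : RmaxVec n) (c : Rmax) : maxComb x y c ⊥ = vadd x c := by
  funext i
  show max (x i + c) (y i + ⊥) = x i + c
  rw [WithBot.add_bot]
  exact max_bot_right _

theorem mpBracket_maxComb (y z x : RmaxVec n) (lam mu : Rmax) :
    mpBracket (maxComb y z lam mu) x = max (mpBracket y x + lam) (mpBracket z x + mu) := by
  rw [maxComb_eq_sup_vadd, mpBracket_sup, mpBracket_vadd, mpBracket_vadd]

/-! ### the polar is a closed polar cone (easy direction) -/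

theorem mpPolar_isSubsemimodulePair (V : Set (RmaxVec n)) :
    IsSubsemimodulePair (mpPolar V) := by
  intro p hp q hq lam mu x hx
  rw [mpBracket_maxComb, mpBracket_maxComb]
  exact max_le_max (add_le_add_left (hp x hx) lam) (add_le_add_left (hq x hx) mu)

theorem mpPolar_order (V : Set (RmaxVec n)) (f g : RmaxVec n) (h : f ≤ g) :
    (f, g) ∈ mpPolar V := fun x _ => mpBracket_mono_left x h

theorem mpPolar_trans (V : Set (RmaxVec n)) (f g h : RmaxVec n)
    (h1 : (f, g) ∈ mpPolar V) (h2 : (g, h) ∈ mpPolar V) : (f, h) ∈ mpPolar V :=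
  fun x hx => le_trans (h1 x hx) (h2 x hx)

/-! ### basic operations in a closed polar cone -/

section W
variable {W : Set (RmaxVec n × RmaxVec n)}

theorem Wsup (hsub : IsSubsemimodulePair W) {a b c d : RmaxVec n}
    (h1 : (a, b) ∈ W) (h2 : (c, d) ∈ W) :
    (a ⊔ c, b ⊔ d) ∈ W := by
  have := hsub (a, b) h1 (c, d) h2 0 0
  rwa [maxComb_self_zero, maxComb_self_zero] at this

theorem Wscale (hsub : IsSubsemimodulePair W) {a b : RmaxVec n}
    (h1 : (a, b) ∈ W) (c : Rmax) :
    (vadd a c, vadd b c) ∈ W := by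
  have := hsub (a, b) h1 (a, b) h1 c ⊥
  rwa [maxComb_scale, maxComb_scale] at this

/-- `n`-ary combination. -/
theorem Wsup_finset (hsub : IsSubsemimodulePair W) {ι : Type*} (s : Finset ι)
    (u : ι → RmaxVec n) (v0 v : RmaxVec n)
    (hbase : (v0, v) ∈ W) (h : ∀ j ∈ s, (u j, v) ∈ W) :
    (v0 ⊔ s.sup u, v) ∈ W := by
  classical
  induction s using Finset.cons_induction with
  | empty => simpa using hbase
  | cons j s hj ih =>
    rw [Finset.sup_cons]
    have h1 : (u j, v) ∈ W := h j (Finset.mem_cons_self j s)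
    have h2 := ih (fun k hk => h k (Finset.mem_cons_of_mem hk))
    have h3 := Wsup hsub h2 h1
    rw [sup_idem] at h3
    have he : (v0 ⊔ s.sup u) ⊔ u j = v0 ⊔ (u j ⊔ s.sup u) := by
      rw [sup_assoc, sup_comm (s.sup u) (u j)]
    rwa [he] at h3

end W
end MPaux
namespace MPaux
variable {n : ℕ}

theorem unit_bot (j : Fin n) : unit j (⊥ : Rmax) = botVec := by
  funext i
  by_cases hij : i = j
  · subst hij; simp [unit, botVec]
  · simp [unit_other hij, botVec]

theorem zeroVec_vadd_apply (c : Rmax) (i : Fin n) : vadd (zeroVec : RmaxVec n) c i = c := by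
  simp [vadd, zeroVec]

/-- The set of admissible scalars in row `j` above the vector `h`. -/
def LamSet (W : Set (RmaxVec n × RmaxVec n)) (j : Fin n) (h : RmaxVec n) : Set Rmax :=
  {lam | (unit j lam ⊔ h, h) ∈ W}

/-- The indices which carry nontrivial constraints. -/
def goodJ (W : Set (RmaxVec n × RmaxVec n)) : Finset (Fin n) :=
  Finset.univ.filter (fun j => ∃ lam : Rmax, (unit j lam, (zeroVec : RmaxVec n)) ∉ W)

def sigS (W : Set (RmaxVec n × RmaxVec n)) (j : Fin n) (h : RmaxVec n) : Rmax :=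
  sSup (LamSet W j h)

def embJ (J : Finset (Fin n)) (v : Fin n → ℝ) : RmaxVec n :=
  fun i => if i ∈ J then ((v i : ℝ) : Rmax) else ⊥

def nextH (W : Set (RmaxVec n × RmaxVec n)) (v : Fin n → ℝ) : Fin n → ℝ :=
  fun j => WithBot.unbotD (v j) (sigS W j (embJ (goodJ W) v))

def iterH (W : Set (RmaxVec n × RmaxVec n)) : ℕ → Fin n → ℝ
  | 0 => fun _ => 0
  | m + 1 => nextH W (iterH W m)

section core
variable {W : Set (RmaxVec n × RmaxVec n)}
variable (hcl : IsClosed W)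
variable (hsub : IsSubsemimodulePair W)
variable (hord : ∀ f g : RmaxVec n, f ≤ g → (f, g) ∈ W)
variable (htrans : ∀ f g h : RmaxVec n, (f, g) ∈ W → (g, h) ∈ W → (f, h) ∈ W)

/-- membership of `h j` -/
theorem mem_LamSet_self (hord : ∀ f g : RmaxVec n, f ≤ g → (f, g) ∈ W)
    (j : Fin n) (h : RmaxVec n) : h j ∈ LamSet W j h := by
  have he : unit j (h j) ⊔ h = h := by
    funext i
    by_cases hij : i = j
    · subst hij; simp
    · simp [unit_other hij]
  show (unit j (h j) ⊔ h, h) ∈ W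
  rw [he]
  exact hord h h le_rfl

theorem LamSet_lower (hord : ∀ f g : RmaxVec n, f ≤ g → (f, g) ∈ W)
    (htrans : ∀ f g h : RmaxVec n, (f, g) ∈ W → (g, h) ∈ W → (f, h) ∈ W)
    (j : Fin n) (h : RmaxVec n) {lam mu : Rmax} (hle : mu ≤ lam)
    (hmem : lam ∈ LamSet W j h) : mu ∈ LamSet W j h := by
  refine htrans _ _ _ (hord _ _ ?_) hmem
  exact sup_le_sup_right (unit_mono hle) h

theorem LamSet_closed (hcl : IsClosed W) (j : Fin n) (h : RmaxVec n) :
    IsClosed (LamSet W j h) := by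
  have : LamSet W j h = (fun lam : Rmax => ((unit j lam ⊔ h : RmaxVec n), h)) ⁻¹' W := rfl
  rw [this]
  refine IsClosed.preimage ?_ hcl
  refine Continuous.prodMk ?_ continuous_const
  refine continuous_pi fun i => ?_
  by_cases hij : i = j
  · subst hij
    have : (fun lam : Rmax => (unit i lam ⊔ h) i) = fun lam => lam ⊔ h i := by
      funext lam; simp
    rw [this]
    exact continuous_id.max continuous_const
  · have : (fun lam : Rmax => (unit j lam ⊔ h) i) = fun _ => h i := by
      funext lam; simp [unit_other hij]
    rw [this]
    exact continuous_const

end core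
end MPaux
namespace MPaux
variable {n : ℕ}

theorem add_coe_cancel (a : Rmax) (c : ℝ) : a + (c : Rmax) + ((-c : ℝ) : Rmax) = a := by
  induction a using WithBot.recBotCoe with
  | bot => simp [WithBot.bot_add]
  | coe a =>
    rw [← WithBot.coe_add, ← WithBot.coe_add]
    norm_num

section core
variable {W : Set (RmaxVec n × RmaxVec n)}

/-- From membership in `LamSet` we get the plain pair. -/
theorem unit_pair_of_mem_LamSet
    (hord : ∀ f g : RmaxVec n, f ≤ g → (f, g) ∈ W)
    (htrans : ∀ f g h : RmaxVec n, (f, g) ∈ W → (g, h) ∈ W → (f, h) ∈ W)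
    {j : Fin n} {h : RmaxVec n} {lam : Rmax} (hmem : lam ∈ LamSet W j h) :
    (unit j lam, h) ∈ W :=
  htrans _ _ _ (hord _ _ le_sup_left) hmem

/-- Conversely. -/
theorem mem_LamSet_of_unit_pair (hsub : IsSubsemimodulePair W)
    (hord : ∀ f g : RmaxVec n, f ≤ g → (f, g) ∈ W)
    {j : Fin n} {h : RmaxVec n} {lam : Rmax} (hmem : (unit j lam, h) ∈ W) :
    lam ∈ LamSet W j h := by
  have := Wsup hsub hmem (hord h h le_rfl)
  rwa [sup_idem] at this

/-- For `j ∈ goodJ W` the set `LamSet W j (embJ (goodJ W) v)` is bounded above. -/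
theorem LamSet_bddAbove
    (hsub : IsSubsemimodulePair W)
    (hord : ∀ f g : RmaxVec n, f ≤ g → (f, g) ∈ W)
    (htrans : ∀ f g h : RmaxVec n, (f, g) ∈ W → (g, h) ∈ W → (f, h) ∈ W)
    {j : Fin n} (hj : j ∈ goodJ W) (hJne : (goodJ W).Nonempty) (v : Fin n → ℝ) :
    BddAbove (LamSet W j (embJ (goodJ W) v)) := by
  obtain ⟨lam1, hlam1⟩ := (Finset.mem_filter.1 hj).2
  set J := goodJ W
  set mv : ℝ := J.sup' hJne v with hmv
  refine ⟨lam1 + (mv : Rmax), fun lam hlam => ?_⟩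
  -- first: (unit j lam, embJ J v) ∈ W
  have h1 : (unit j lam, embJ J v) ∈ W := unit_pair_of_mem_LamSet hord htrans hlam
  -- (embJ J v, vadd zeroVec mv) ∈ W
  have h2 : (embJ J v, vadd (zeroVec : RmaxVec n) (mv : Rmax)) ∈ W := by
    refine hord _ _ fun i => ?_
    rw [zeroVec_vadd_apply]
    by_cases hiJ : i ∈ J
    · simp only [embJ, if_pos hiJ]
      exact_mod_cast Finset.le_sup' v hiJ
    · simp [embJ, if_neg hiJ]
  have h3 : (unit j lam, vadd (zeroVec : RmaxVec n) (mv : Rmax)) ∈ W := htrans _ _ _ h1 h2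
  have h4 := Wscale hsub h3 ((-mv : ℝ) : Rmax)
  rw [vadd_unit, vadd_cancel] at h4
  -- so lam + (-mv) is in the basic set; lam1 is not; the set is a lower set
  by_contra hcon
  push_neg at hcon
  have hle : lam1 ≤ lam + ((-mv : ℝ) : Rmax) := by
    have := lt_of_not_ge (fun hh : lam ≤ lam1 + (mv : Rmax) => absurd hh (by exact not_le_of_gt hcon))
    -- lam1 + mv < lam  →  lam1 ≤ lam + (-mv)
    have h5 : lam1 + (mv : Rmax) ≤ lam := le_of_lt this
    calc lam1 = lam1 + (mv : Rmax) + ((-mv : ℝ) : Rmax) := (add_coe_cancel _ _).symm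
    _ ≤ lam + ((-mv : ℝ) : Rmax) := add_le_add_left h5 _
  -- lower set property transfers membership to lam1
  have : (unit j lam1, (zeroVec : RmaxVec n)) ∈ W := by
    refine htrans _ _ _ (hord _ _ (unit_mono hle)) h4
  exact hlam1 this

end core
end MPaux
namespace MPaux
variable {n : ℕ}

section core
variable {W : Set (RmaxVec n × RmaxVec n)}
variable (hcl : IsClosed W) (hsub : IsSubsemimodulePair W)
variable (hord : ∀ f g : RmaxVec n, f ≤ g → (f, g) ∈ W)
variable (htrans : ∀ f g h : RmaxVec n, (f, g) ∈ W → (g, h) ∈ W → (f, h) ∈ W)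

theorem embJ_apply_mem {J : Finset (Fin n)} {v : Fin n → ℝ} {j : Fin n} (hj : j ∈ J) :
    embJ J v j = ((v j : ℝ) : Rmax) := if_pos hj

theorem sig_spec
    (hcl : IsClosed W) (hsub : IsSubsemimodulePair W)
    (hord : ∀ f g : RmaxVec n, f ≤ g → (f, g) ∈ W)
    (htrans : ∀ f g h : RmaxVec n, (f, g) ∈ W → (g, h) ∈ W → (f, h) ∈ W)
    {j : Fin n} (hj : j ∈ goodJ W) (hJne : (goodJ W).Nonempty) (v : Fin n → ℝ) :
    sigS W j (embJ (goodJ W) v) ∈ LamSet W j (embJ (goodJ W) v) ∧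
      ((v j : ℝ) : Rmax) ≤ sigS W j (embJ (goodJ W) v) ∧
      ((nextH W v j : ℝ) : Rmax) = sigS W j (embJ (goodJ W) v) := by
  have hne : (LamSet W j (embJ (goodJ W) v)).Nonempty := by
    refine ⟨embJ (goodJ W) v j, mem_LamSet_self hord j _⟩
  have hbdd := LamSet_bddAbove hsub hord htrans hj hJne v
  have hmem : sigS W j (embJ (goodJ W) v) ∈ LamSet W j (embJ (goodJ W) v) :=
    (LamSet_closed hcl j _).csSup_mem hne hbdd
  have hle : ((v j : ℝ) : Rmax) ≤ sigS W j (embJ (goodJ W) v) := by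
    have := le_csSup hbdd (mem_LamSet_self hord j (embJ (goodJ W) v))
    rwa [embJ_apply_mem hj] at this
  refine ⟨hmem, hle, ?_⟩
  obtain ⟨r, hr⟩ := rmax_exists_coe (ne_bot_of_le_ne_bot WithBot.coe_ne_bot hle)
  rw [nextH, hr, WithBot.unbotD_coe]

theorem deflation
    (hcl : IsClosed W) (hsub : IsSubsemimodulePair W)
    (hord : ∀ f g : RmaxVec n, f ≤ g → (f, g) ∈ W)
    (htrans : ∀ f g h : RmaxVec n, (f, g) ∈ W → (g, h) ∈ W → (f, h) ∈ W)
    (hJne : (goodJ W).Nonempty) (v : Fin n → ℝ) :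
    (embJ (goodJ W) (nextH W v), embJ (goodJ W) v) ∈ W := by
  set J := goodJ W with hJ
  have hcomb := Wsup_finset hsub J
      (fun j => unit j (sigS W j (embJ J v)) ⊔ embJ J v) (embJ J v) (embJ J v)
      (hord _ _ le_rfl)
      (fun j hj => (sig_spec hcl hsub hord htrans hj hJne v).1)
  have he : (embJ J v) ⊔ (J.sup fun j => unit j (sigS W j (embJ J v)) ⊔ embJ J v)
      = embJ J (nextH W v) := by
    funext i
    rw [Pi.sup_apply, Finset.sup_apply]
    by_cases hiJ : i ∈ J
    · have h1 : ((nextH W v i : ℝ) : Rmax) = sigS W i (embJ J v) :=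
        (sig_spec hcl hsub hord htrans hiJ hJne v).2.2
      have h2 : ((v i : ℝ) : Rmax) ≤ sigS W i (embJ J v) :=
        (sig_spec hcl hsub hord htrans hiJ hJne v).2.1
      rw [embJ_apply_mem hiJ (v := nextH W v), h1]
      apply le_antisymm
      · refine sup_le ?_ (Finset.sup_le fun j hj => ?_)
        · rw [embJ_apply_mem hiJ]; exact h2
        · show (unit j (sigS W j (embJ J v)) ⊔ embJ J v) i ≤ _
          by_cases hij : i = j
          · subst hij
            rw [Pi.sup_apply, unit_same]
            refine sup_le le_rfl ?_
            rw [embJ_apply_mem hiJ]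
            exact h2
          · have : unit j (sigS W j (embJ J v)) i = ⊥ := unit_other hij _
            rw [Pi.sup_apply, this, bot_sup_eq, embJ_apply_mem hiJ]
            exact h2
      · refine le_trans (le_trans ?_
          (Finset.le_sup (f := fun j => (unit j (sigS W j (embJ J v)) ⊔ embJ J v) i) hiJ))
          le_sup_right
        show sigS W i (embJ J v) ≤ (unit i (sigS W i (embJ J v)) ⊔ embJ J v) i
        rw [Pi.sup_apply, unit_same]
        exact le_sup_left
    · have h1 : embJ J (nextH W v) i = ⊥ := if_neg hiJ
      have h2 : embJ J v i = ⊥ := if_neg hiJ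
      rw [h1]
      refine le_antisymm ?_ bot_le
      rw [h2]
      refine sup_le le_rfl (Finset.sup_le fun j hj => ?_)
      show (unit j (sigS W j (embJ J v)) ⊔ embJ J v) i ≤ ⊥
      have hij : i ≠ j := fun hh => hiJ (hh ▸ hj)
      rw [Pi.sup_apply, unit_other hij, h2, bot_sup_eq]
  rw [he] at hcomb
  exact hcomb

end core
end MPaux
namespace MPaux
variable {n : ℕ}

theorem tendsto_nhds_bot' {u : ℕ → Rmax}
    (h : ∀ C : ℝ, ∀ᶠ m in Filter.atTop, u m < (C : Rmax)) :
    Filter.Tendsto u Filter.atTop (nhds (⊥ : Rmax)) := by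
  refine tendsto_order.2 ⟨fun a' ha' => absurd ha' (not_lt_bot), fun a' ha' => ?_⟩
  obtain ⟨r, hr⟩ := rmax_exists_coe (ne_bot_of_gt ha')
  subst hr
  exact h r

section core
variable {W : Set (RmaxVec n × RmaxVec n)}

theorem iterH_mono
    (hcl : IsClosed W) (hsub : IsSubsemimodulePair W)
    (hord : ∀ f g : RmaxVec n, f ≤ g → (f, g) ∈ W)
    (htrans : ∀ f g h : RmaxVec n, (f, g) ∈ W → (g, h) ∈ W → (f, h) ∈ W)
    (hJne : (goodJ W).Nonempty) {j : Fin n} (hj : j ∈ goodJ W) (m : ℕ) :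
    iterH W m j ≤ iterH W (m + 1) j := by
  have h1 := (sig_spec hcl hsub hord htrans hj hJne (iterH W m)).2.1
  have h2 := (sig_spec hcl hsub hord htrans hj hJne (iterH W m)).2.2
  rw [← h2] at h1
  exact_mod_cast h1

theorem iterH_mono_le
    (hcl : IsClosed W) (hsub : IsSubsemimodulePair W)
    (hord : ∀ f g : RmaxVec n, f ≤ g → (f, g) ∈ W)
    (htrans : ∀ f g h : RmaxVec n, (f, g) ∈ W → (g, h) ∈ W → (f, h) ∈ W)
    (hJne : (goodJ W).Nonempty) {j : Fin n} (hj : j ∈ goodJ W) :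
    Monotone (fun m => iterH W m j) := by
  refine monotone_nat_of_le_succ fun m => iterH_mono hcl hsub hord htrans hJne hj m

theorem chain_pair
    (hcl : IsClosed W) (hsub : IsSubsemimodulePair W)
    (hord : ∀ f g : RmaxVec n, f ≤ g → (f, g) ∈ W)
    (htrans : ∀ f g h : RmaxVec n, (f, g) ∈ W → (g, h) ∈ W → (f, h) ∈ W)
    (hJne : (goodJ W).Nonempty) {l m : ℕ} (hlm : l ≤ m) :
    (embJ (goodJ W) (iterH W m), embJ (goodJ W) (iterH W l)) ∈ W := by
  induction m with
  | zero =>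
    have : l = 0 := Nat.le_zero.1 hlm
    subst this
    exact hord _ _ le_rfl
  | succ m ih =>
    rcases Nat.lt_or_ge l (m+1) with hl | hl
    · have h1 : (embJ (goodJ W) (iterH W (m+1)), embJ (goodJ W) (iterH W m)) ∈ W :=
        deflation hcl hsub hord htrans hJne (iterH W m)
      exact htrans _ _ _ h1 (ih (Nat.lt_succ_iff.1 hl))
    · have : l = m + 1 := le_antisymm hlm hl
      subst this
      exact hord _ _ le_rfl

theorem embJ_iterH_zero_le : embJ (goodJ W) (iterH W 0) ≤ (zeroVec : RmaxVec n) := by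
  intro i
  by_cases hiJ : i ∈ goodJ W
  · rw [embJ_apply_mem hiJ]
    simp [iterH, zeroVec]
  · show (if _ then _ else _) ≤ _
    rw [if_neg hiJ]
    exact bot_le

theorem chain_zero
    (hcl : IsClosed W) (hsub : IsSubsemimodulePair W)
    (hord : ∀ f g : RmaxVec n, f ≤ g → (f, g) ∈ W)
    (htrans : ∀ f g h : RmaxVec n, (f, g) ∈ W → (g, h) ∈ W → (f, h) ∈ W)
    (hJne : (goodJ W).Nonempty) (m : ℕ) :
    (embJ (goodJ W) (iterH W m), (zeroVec : RmaxVec n)) ∈ W :=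
  htrans _ _ _ (chain_pair hcl hsub hord htrans hJne (Nat.zero_le m))
    (hord _ _ embJ_iterH_zero_le)

/-- coordinates outside `goodJ W` are completely free -/
theorem free_pair
    (hcl : IsClosed W) (hsub : IsSubsemimodulePair W)
    (hord : ∀ f g : RmaxVec n, f ≤ g → (f, g) ∈ W)
    (htrans : ∀ f g h : RmaxVec n, (f, g) ∈ W → (g, h) ∈ W → (f, h) ∈ W)
    {k : Fin n} (hk : k ∉ goodJ W) (lam : Rmax) (z : RmaxVec n) :
    (unit k lam, z) ∈ W := by
  have hall : ∀ mu : Rmax, (unit k mu, (zeroVec : RmaxVec n)) ∈ W := by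
    intro mu
    by_contra hcon
    exact hk (Finset.mem_filter.2 ⟨Finset.mem_univ k, ⟨mu, hcon⟩⟩)
  induction lam using WithBot.recBotCoe with
  | bot =>
    rw [unit_bot]
    exact hord _ _ (bot_le' z)
  | coe l =>
    -- scaled versions
    have hscaled : ∀ s : ℝ, (unit k ((l : ℝ) : Rmax), vadd (zeroVec : RmaxVec n) ((s:ℝ) : Rmax)) ∈ W := by
      intro s
      have := Wscale hsub (hall ((l - s : ℝ) : Rmax)) ((s : ℝ) : Rmax)
      rw [vadd_unit] at this
      have he : ((l - s : ℝ) : Rmax) + ((s : ℝ) : Rmax) = ((l : ℝ) : Rmax) := by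
        rw [← WithBot.coe_add]; norm_num
      rwa [he] at this
    -- limit s → -∞
    have hbot : (unit k ((l : ℝ) : Rmax), (botVec : RmaxVec n)) ∈ W := by
      have htd : Filter.Tendsto
          (fun m : ℕ => ((unit k ((l : ℝ) : Rmax) : RmaxVec n),
            vadd (zeroVec : RmaxVec n) ((-(m:ℝ) : ℝ) : Rmax)))
          Filter.atTop (nhds ((unit k ((l : ℝ) : Rmax) : RmaxVec n), (botVec : RmaxVec n))) := by
        refine Filter.Tendsto.prodMk_nhds tendsto_const_nhds ?_
        rw [show (botVec : RmaxVec n) = fun _ : Fin n => (⊥ : Rmax) from rfl]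
        refine tendsto_pi_nhds.2 fun i => ?_
        have he : (fun m : ℕ => vadd (zeroVec : RmaxVec n) ((-(m:ℝ) : ℝ) : Rmax) i)
            = fun m : ℕ => ((-(m:ℝ) : ℝ) : Rmax) := by
          funext m; rw [zeroVec_vadd_apply]
        rw [he]
        refine tendsto_nhds_bot' fun C => ?_
        have hev : ∀ᶠ m : ℕ in Filter.atTop, (-(m:ℝ)) < C := by
          refine Filter.eventually_atTop.2 ⟨Nat.ceil (|C| + 1), fun m hm => ?_⟩
          have h1 : (|C| + 1 : ℝ) ≤ (m : ℝ) := by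
            calc (|C| + 1 : ℝ) ≤ (Nat.ceil (|C|+1) : ℝ) := Nat.le_ceil _
            _ ≤ (m : ℝ) := by exact_mod_cast hm
          have h2 : -C ≤ |C| := neg_le_abs C
          linarith
        refine hev.mono fun m hm => ?_
        exact_mod_cast WithBot.coe_lt_coe.2 hm
      exact hcl.mem_of_tendsto htd (Filter.Eventually.of_forall
        (fun m : ℕ => hscaled (-(m : ℝ))))
    exact htrans _ _ _ hbot (hord _ _ (bot_le' z))

end core
end MPaux
namespace MPaux
variable {n : ℕ}

section core
variable {W : Set (RmaxVec n × RmaxVec n)}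

theorem iter_bounded
    (hcl : IsClosed W) (hsub : IsSubsemimodulePair W)
    (hord : ∀ f g : RmaxVec n, f ≤ g → (f, g) ∈ W)
    (htrans : ∀ f g h : RmaxVec n, (f, g) ∈ W → (g, h) ∈ W → (f, h) ∈ W)
    (hJne : (goodJ W).Nonempty) :
    ∃ B : ℝ, ∀ m : ℕ, ∀ j ∈ goodJ W, iterH W m j ≤ B := by
  classical
  set J := goodJ W with hJdef
  set M : ℕ → ℝ := fun m => J.sup' hJne (iterH W m) with hM
  by_contra hcon
  push_neg at hcon
  -- M is monotone
  have hMmono : Monotone M := by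
    refine monotone_nat_of_le_succ fun m => ?_
    refine Finset.sup'_le hJne _ fun j hj => ?_
    exact le_trans (iterH_mono hcl hsub hord htrans hJne hj m) (Finset.le_sup' _ hj)
  -- M is unbounded
  have hMunb : ∀ B : ℝ, ∃ m, B < M m := by
    intro B
    obtain ⟨m, j, hj, hBj⟩ := hcon B
    exact ⟨m, lt_of_lt_of_le hBj (Finset.le_sup' _ hj)⟩
  -- pigeonhole: some coordinate attains the max infinitely often
  have hcover : ∀ m : ℕ, ∃ j ∈ J, iterH W m j = M m := by
    intro m
    obtain ⟨j, hj, hje⟩ := Finset.exists_mem_eq_sup' hJne (iterH W m)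
    exact ⟨j, hj, hje.symm⟩
  have hpig : ∃ j ∈ J, {m : ℕ | iterH W m j = M m}.Infinite := by
    by_contra hfin
    push_neg at hfin
    have hfin' : ∀ j ∈ J, {m : ℕ | iterH W m j = M m}.Finite := by
      intro j hj
      have := hfin j hj
      simpa using this
    have hU : (⋃ j ∈ J, {m : ℕ | iterH W m j = M m}).Finite :=
      Set.Finite.biUnion J.finite_toSet hfin'
    have : (Set.univ : Set ℕ) ⊆ ⋃ j ∈ J, {m : ℕ | iterH W m j = M m} := by
      intro m _
      obtain ⟨j, hj, hje⟩ := hcover m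
      exact Set.mem_biUnion hj hje
    exact Set.infinite_univ (Set.Finite.subset hU this)
  obtain ⟨js, hjs, hSinf⟩ := hpig
  -- for every ℓ there is m with attainment and M m large
  have hsel : ∀ L : ℕ, ∃ m, iterH W m js = M m ∧ (L : ℝ) ≤ M m := by
    intro L
    obtain ⟨m0, hm0⟩ := hMunb (L : ℝ)
    obtain ⟨m, hmS, hm0m⟩ := hSinf.exists_gt m0
    exact ⟨m, hmS, le_trans hm0.le (hMmono hm0m.le)⟩
  choose mseq hm1 hm2 using hsel
  -- every scalar pair over js lies in W
  have hallpairs : ∀ lam : Rmax, (unit js lam, (zeroVec : RmaxVec n)) ∈ W := by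
    intro lam
    induction lam using WithBot.recBotCoe with
    | bot => rw [unit_bot]; exact hord _ _ (bot_le' _)
    | coe l =>
      have hstep : ∀ L : ℕ,
          (unit js ((l : ℝ) : Rmax), vadd (zeroVec : RmaxVec n) (((l - M (mseq L) : ℝ)) : Rmax)) ∈ W := by
        intro L
        have h1 : (unit js ((M (mseq L) : ℝ) : Rmax), (zeroVec : RmaxVec n)) ∈ W := by
          refine htrans _ _ _ (hord _ _ ?_) (chain_zero hcl hsub hord htrans hJne (mseq L))
          refine unit_le_iff.2 ?_
          rw [embJ_apply_mem hjs, hm1]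
        have h2 := Wscale hsub h1 (((l - M (mseq L) : ℝ)) : Rmax)
        rw [vadd_unit] at h2
        have he : ((M (mseq L) : ℝ) : Rmax) + (((l - M (mseq L) : ℝ)) : Rmax) = ((l:ℝ) : Rmax) := by
          rw [← WithBot.coe_add]; norm_num
        rwa [he] at h2
      have htd : Filter.Tendsto
          (fun L : ℕ => ((unit js ((l : ℝ) : Rmax) : RmaxVec n),
            vadd (zeroVec : RmaxVec n) (((l - M (mseq L) : ℝ)) : Rmax)))
          Filter.atTop
          (nhds ((unit js ((l : ℝ) : Rmax) : RmaxVec n), (botVec : RmaxVec n))) := by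
        refine Filter.Tendsto.prodMk_nhds tendsto_const_nhds ?_
        rw [show (botVec : RmaxVec n) = fun _ : Fin n => (⊥ : Rmax) from rfl]
        refine tendsto_pi_nhds.2 fun i => ?_
        have he : (fun L : ℕ => vadd (zeroVec : RmaxVec n) (((l - M (mseq L) : ℝ)) : Rmax) i)
            = fun L : ℕ => (((l - M (mseq L) : ℝ)) : Rmax) := by
          funext L; rw [zeroVec_vadd_apply]
        rw [he]
        refine tendsto_nhds_bot' fun C => ?_
        have hev : ∀ᶠ L : ℕ in Filter.atTop, (l - M (mseq L) : ℝ) < C := by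
          refine Filter.eventually_atTop.2 ⟨Nat.ceil (|l - C| + 1), fun L hL => ?_⟩
          have h1 : (|l - C| + 1 : ℝ) ≤ (L : ℝ) := by
            calc (|l - C| + 1 : ℝ) ≤ (Nat.ceil (|l - C|+1) : ℝ) := Nat.le_ceil _
            _ ≤ (L : ℝ) := by exact_mod_cast hL
          have h2 := hm2 L
          have h3 : l - C ≤ |l - C| := le_abs_self _
          linarith
        refine hev.mono fun L hL => ?_
        exact_mod_cast WithBot.coe_lt_coe.2 hL
      have hbot : (unit js ((l : ℝ) : Rmax), (botVec : RmaxVec n)) ∈ W :=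
        hcl.mem_of_tendsto htd (Filter.Eventually.of_forall hstep)
      exact htrans _ _ _ hbot (hord _ _ (bot_le' _))
  obtain ⟨lam0, hlam0⟩ := (Finset.mem_filter.1 hjs).2
  exact hlam0 (hallpairs lam0)

end core
end MPaux
namespace MPaux
variable {n : ℕ}

/-- the limit vector of the tightening iteration -/
def limH (W : Set (RmaxVec n × RmaxVec n)) : RmaxVec n :=
  fun i => if i ∈ goodJ W then ⨆ m : ℕ, ((iterH W m i : ℝ) : Rmax) else ⊥

/-- its real values -/
def limR (W : Set (RmaxVec n × RmaxVec n)) : Fin n → ℝ :=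
  fun i => WithBot.unbotD 0 (limH W i)

section core
variable {W : Set (RmaxVec n × RmaxVec n)}

variable (hcl : IsClosed W) (hsub : IsSubsemimodulePair W)
  (hord : ∀ f g : RmaxVec n, f ≤ g → (f, g) ∈ W)
  (htrans : ∀ f g h : RmaxVec n, (f, g) ∈ W → (g, h) ∈ W → (f, h) ∈ W)
  (hJne : (goodJ W).Nonempty)

include hcl hsub hord htrans hJne

theorem iter_bddAbove {j : Fin n} (hj : j ∈ goodJ W) :
    BddAbove (Set.range fun m : ℕ => ((iterH W m j : ℝ) : Rmax)) := by
  obtain ⟨B, hB⟩ := iter_bounded hcl hsub hord htrans hJne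
  refine ⟨(B : Rmax), ?_⟩
  rintro _ ⟨m, rfl⟩
  show ((iterH W m j : ℝ) : Rmax) ≤ (B : Rmax)
  exact WithBot.coe_le_coe.2 (hB m j hj)

theorem le_limH {j : Fin n} (hj : j ∈ goodJ W) (m : ℕ) :
    ((iterH W m j : ℝ) : Rmax) ≤ limH W j := by
  rw [limH, if_pos hj]
  exact le_ciSup (iter_bddAbove hcl hsub hord htrans hJne hj) m

theorem limH_real {j : Fin n} (hj : j ∈ goodJ W) :
    limH W j = ((limR W j : ℝ) : Rmax) := by
  have h0 : ((iterH W 0 j : ℝ) : Rmax) ≤ limH W j := le_limH hcl hsub hord htrans hJne hj 0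
  have hne : limH W j ≠ ⊥ := ne_bot_of_le_ne_bot WithBot.coe_ne_bot h0
  obtain ⟨r, hr⟩ := rmax_exists_coe hne
  rw [limR, hr, WithBot.unbotD_coe]

theorem limH_nonneg {j : Fin n} (hj : j ∈ goodJ W) : ((0:ℝ) : Rmax) ≤ limH W j := by
  have h0 := le_limH hcl hsub hord htrans hJne hj 0
  have : iterH W 0 j = 0 := rfl
  rwa [this] at h0

theorem tendsto_embJ_limH :
    Filter.Tendsto (fun m : ℕ => embJ (goodJ W) (iterH W m)) Filter.atTop (nhds (limH W)) := by
  refine tendsto_pi_nhds.2 fun i => ?_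
  by_cases hiJ : i ∈ goodJ W
  · have he : (fun m : ℕ => embJ (goodJ W) (iterH W m) i)
        = fun m : ℕ => ((iterH W m i : ℝ) : Rmax) := by
      funext m; exact embJ_apply_mem hiJ
    rw [he, show limH W i = ⨆ m : ℕ, ((iterH W m i : ℝ) : Rmax) from if_pos hiJ]
    refine tendsto_atTop_ciSup ?_ (iter_bddAbove hcl hsub hord htrans hJne hiJ)
    intro a b hab
    show ((iterH W a i : ℝ) : Rmax) ≤ ((iterH W b i : ℝ) : Rmax)
    exact WithBot.coe_le_coe.2 (iterH_mono_le hcl hsub hord htrans hJne hiJ hab)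
  · have he : (fun m : ℕ => embJ (goodJ W) (iterH W m) i) = fun _ : ℕ => (⊥ : Rmax) := by
      funext m; exact if_neg hiJ
    rw [he, show limH W i = ⊥ from if_neg hiJ]
    exact tendsto_const_nhds

theorem limH_pair (m : ℕ) : (limH W, embJ (goodJ W) (iterH W m)) ∈ W := by
  have htd : Filter.Tendsto
      (fun m' : ℕ => (embJ (goodJ W) (iterH W m'), embJ (goodJ W) (iterH W m)))
      Filter.atTop (nhds (limH W, embJ (goodJ W) (iterH W m))) :=
    Filter.Tendsto.prodMk_nhds (tendsto_embJ_limH hcl hsub hord htrans hJne) tendsto_const_nhds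
  refine hcl.mem_of_tendsto htd ?_
  refine Filter.eventually_atTop.2 ⟨m, fun m' hm' => ?_⟩
  exact chain_pair hcl hsub hord htrans hJne hm'

theorem limH_pair_zero : (limH W, (zeroVec : RmaxVec n)) ∈ W :=
  htrans _ _ _ (limH_pair hcl hsub hord htrans hJne 0) (hord _ _ embJ_iterH_zero_le)

/-- tightness of the limit -/
theorem limH_tight {j : Fin n} (hj : j ∈ goodJ W) {lam : Rmax}
    (hlam : lam ∈ LamSet W j (limH W)) : lam ≤ limH W j := by
  have h1 : (unit j lam, limH W) ∈ W := unit_pair_of_mem_LamSet hord htrans hlam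
  have h2 : (unit j lam, embJ (goodJ W) (iterH W 0)) ∈ W :=
    htrans _ _ _ h1 (limH_pair hcl hsub hord htrans hJne 0)
  have h3 : lam ∈ LamSet W j (embJ (goodJ W) (iterH W 0)) :=
    mem_LamSet_of_unit_pair hsub hord h2
  have h4 : lam ≤ sigS W j (embJ (goodJ W) (iterH W 0)) :=
    le_csSup (LamSet_bddAbove hsub hord htrans hj hJne _) h3
  have h5 : sigS W j (embJ (goodJ W) (iterH W 0)) = ((iterH W 1 j : ℝ) : Rmax) :=
    ((sig_spec hcl hsub hord htrans hj hJne (iterH W 0)).2.2).symm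
  rw [h5] at h4
  exact le_trans h4 (le_limH hcl hsub hord htrans hJne hj 1)

end core
end MPaux
namespace MPaux
variable {n : ℕ}

/-- the separating vector -/
def witX (W : Set (RmaxVec n × RmaxVec n)) : RmaxVec n :=
  fun i => if i ∈ goodJ W then ((-(limR W i) : ℝ) : Rmax) else ⊥

theorem coe_add' (u v : ℝ) : ((u : ℝ) : Rmax) + ((v : ℝ) : Rmax) = ((u + v : ℝ) : Rmax) :=
  (WithBot.coe_add u v).symm

section core
variable {W : Set (RmaxVec n × RmaxVec n)}

variable (hcl : IsClosed W) (hsub : IsSubsemimodulePair W)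
  (hord : ∀ f g : RmaxVec n, f ≤ g → (f, g) ∈ W)
  (htrans : ∀ f g h : RmaxVec n, (f, g) ∈ W → (g, h) ∈ W → (f, h) ∈ W)
  (hJne : (goodJ W).Nonempty)

include hcl hsub hord htrans hJne

theorem witX_mem_diamond : witX W ∈ mpDiamond W := by
  classical
  rintro ⟨a, b⟩ hab
  show mpBracket a (witX W) ≤ mpBracket b (witX W)
  by_contra hcon
  have hlt : mpBracket b (witX W) < mpBracket a (witX W) := lt_of_not_ge hcon
  -- attainment of the left bracket
  have hUne : (Finset.univ : Finset (Fin n)).Nonempty := ⟨hJne.choose, Finset.mem_univ _⟩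
  obtain ⟨j, -, hjmax⟩ := Finset.exists_mem_eq_sup (Finset.univ : Finset (Fin n)) hUne
    (fun i => a i + witX W i)
  have hjmax : mpBracket a (witX W) = a j + witX W j := hjmax
  have hne : a j + witX W j ≠ ⊥ := by
    rw [← hjmax]
    exact fun hh => absurd (hh ▸ hlt) (by simp)
  have hxne : witX W j ≠ ⊥ := fun hh => hne (by rw [hh, WithBot.add_bot])
  have hane : a j ≠ ⊥ := fun hh => hne (by rw [hh, WithBot.bot_add])
  have hjJ : j ∈ goodJ W := by
    by_contra hh
    exact hxne (if_neg hh)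
  have hxj : witX W j = ((-(limR W j) : ℝ) : Rmax) := if_pos hjJ
  obtain ⟨al, hal⟩ := rmax_exists_coe hane
  set T : ℝ := al - limR W j with hT
  have hbra : mpBracket a (witX W) = ((T : ℝ) : Rmax) := by
    rw [hjmax, hal, hxj, coe_add', hT]
    norm_num [sub_eq_add_neg]
  -- a positive margin
  have hKey : ∃ ε : ℝ, 0 < ε ∧ ∀ k ∈ goodJ W, ∀ β : ℝ, b k = ((β : ℝ) : Rmax) →
      β - limR W k ≤ T - ε := by
    by_cases hRb : mpBracket b (witX W) = ⊥
    · refine ⟨1, one_pos, fun k hk β hβ => ?_⟩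
      exfalso
      have h1 : b k + witX W k ≤ mpBracket b (witX W) := le_mpBracket b (witX W) k
      rw [hRb, hβ] at h1
      rw [show witX W k = ((-(limR W k) : ℝ) : Rmax) from if_pos hk] at h1
      rw [← WithBot.coe_add] at h1
      exact absurd h1 (by simp)
    · obtain ⟨ρ, hRb⟩ := rmax_exists_coe hRb
      have hρT : ρ < T := by
        have := hlt
        rw [hRb, hbra] at this
        exact_mod_cast this
      refine ⟨(T - ρ)/2, by linarith, fun k hk β hβ => ?_⟩
      have h1 : b k + witX W k ≤ mpBracket b (witX W) := le_mpBracket b (witX W) k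
      rw [hRb, hβ] at h1
      rw [show witX W k = ((-(limR W k) : ℝ) : Rmax) from if_pos hk] at h1
      rw [← WithBot.coe_add] at h1
      have h2 : β + -(limR W k) ≤ ρ := by exact_mod_cast h1
      linarith
  obtain ⟨ε, hε, hKey⟩ := hKey
  -- build the contradiction pair
  have h1 : (unit j (a j), b) ∈ W :=
    htrans _ _ _ (hord _ _ (unit_le_iff.2 le_rfl)) hab
  -- strip b to its goodJ coordinates
  set bJ : RmaxVec n := fun k => if k ∈ goodJ W then b k else ⊥ with hbJ
  have h2 : (b, bJ) ∈ W := by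
    have hcomb := Wsup_finset hsub (Finset.univ \ goodJ W)
      (fun k => unit k (b k)) bJ bJ (hord _ _ le_rfl)
      (fun k hk => free_pair hcl hsub hord htrans
        (fun hh => ((Finset.mem_sdiff.1 hk).2 hh)) (b k) bJ)
    have he : bJ ⊔ (Finset.univ \ goodJ W).sup (fun k => unit k (b k)) = b := by
      funext i
      rw [Pi.sup_apply, Finset.sup_apply]
      by_cases hiJ : i ∈ goodJ W
      · have hb1 : bJ i = b i := if_pos hiJ
        rw [hb1]
        refine le_antisymm (sup_le le_rfl (Finset.sup_le fun k hk => ?_)) le_sup_left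
        show unit k (b k) i ≤ b i
        have hik : i ≠ k := fun hh => (Finset.mem_sdiff.1 hk).2 (hh ▸ hiJ)
        rw [unit_other hik]
        exact bot_le
      · have hb1 : bJ i = ⊥ := if_neg hiJ
        rw [hb1, bot_sup_eq]
        refine le_antisymm (Finset.sup_le fun k hk => ?_) ?_
        · show unit k (b k) i ≤ b i
          by_cases hik : i = k
          · subst hik; rw [unit_same]
          · rw [unit_other hik]; exact bot_le
        · have hle := Finset.le_sup (f := fun k => unit k (b k) i)
            (Finset.mem_sdiff.2 ⟨Finset.mem_univ i, hiJ⟩)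
          simpa using hle

    rw [he] at hcomb
    exact hcomb
  have h3 : (unit j (a j), bJ) ∈ W := htrans _ _ _ h1 h2
  set μ : ℝ := limR W j + ε - al with hμ
  have h4 := Wscale hsub h3 ((μ : ℝ) : Rmax)
  rw [vadd_unit, hal] at h4
  have he4 : ((al : ℝ) : Rmax) + ((μ : ℝ) : Rmax) = (((limR W j + ε : ℝ)) : Rmax) := by
    rw [coe_add']
    congr 1
    rw [hμ]; ring
  rw [he4] at h4
  have h5 : vadd bJ ((μ : ℝ) : Rmax) ≤ limH W := by
    intro k
    rw [vadd_apply]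
    by_cases hkJ : k ∈ goodJ W
    · rw [show bJ k = b k from if_pos hkJ]
      by_cases hbk : b k = ⊥
      · rw [hbk, WithBot.bot_add]; exact bot_le
      · obtain ⟨β, hbk⟩ := rmax_exists_coe hbk
        rw [hbk, limH_real hcl hsub hord htrans hJne hkJ, coe_add']
        have hKey' := hKey k hkJ β hbk
        refine WithBot.coe_le_coe.2 ?_
        have hT' : β - limR W k ≤ al - limR W j - ε := by
          rw [hT] at hKey'; linarith
        rw [hμ]
        linarith
    · rw [show bJ k = ⊥ from if_neg hkJ, WithBot.bot_add]
      exact bot_le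
  have h6 : (unit j (((limR W j + ε : ℝ)) : Rmax), limH W) ∈ W :=
    htrans _ _ _ h4 (hord _ _ h5)
  have h7 := mem_LamSet_of_unit_pair hsub hord h6
  have h8 := limH_tight hcl hsub hord htrans hJne hjJ h7
  rw [limH_real hcl hsub hord htrans hJne hjJ] at h8
  have : limR W j + ε ≤ limR W j := by exact_mod_cast h8
  linarith

end core
end MPaux
namespace MPaux
variable {n : ℕ}

section core
variable {W : Set (RmaxVec n × RmaxVec n)}

theorem key0
    (hcl : IsClosed W) (hsub : IsSubsemimodulePair W)
    (hord : ∀ f g : RmaxVec n, f ≤ g → (f, g) ∈ W)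
    (htrans : ∀ f g h : RmaxVec n, (f, g) ∈ W → (g, h) ∈ W → (f, h) ∈ W)
    (i0 : Fin n) (t : ℝ)
    (hnot : (unit i0 ((t : ℝ) : Rmax), (zeroVec : RmaxVec n)) ∉ W) :
    ∃ x ∈ mpDiamond W, mpBracket (zeroVec : RmaxVec n) x < ((t : ℝ) : Rmax) + x i0 := by
  have hi0 : i0 ∈ goodJ W :=
    Finset.mem_filter.2 ⟨Finset.mem_univ i0, ⟨((t : ℝ) : Rmax), hnot⟩⟩
  have hJne : (goodJ W).Nonempty := ⟨i0, hi0⟩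
  refine ⟨witX W, witX_mem_diamond hcl hsub hord htrans hJne, ?_⟩
  have hx_i0 : witX W i0 = ((-(limR W i0) : ℝ) : Rmax) := if_pos hi0
  -- upper bound for the zero bracket
  have hup : mpBracket (zeroVec : RmaxVec n) (witX W) ≤ ((0 : ℝ) : Rmax) := by
    refine mpBracket_le_iff.2 fun i => ?_
    have hz : (zeroVec : RmaxVec n) i + witX W i = witX W i := by
      rw [show (zeroVec : RmaxVec n) i = 0 from rfl, zero_add]
    rw [hz]
    by_cases hiJ : i ∈ goodJ W
    · rw [show witX W i = ((-(limR W i) : ℝ) : Rmax) from if_pos hiJ]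
      refine WithBot.coe_le_coe.2 ?_
      have h0 := limH_nonneg hcl hsub hord htrans hJne hiJ
      rw [limH_real hcl hsub hord htrans hJne hiJ] at h0
      have : (0:ℝ) ≤ limR W i := by exact_mod_cast h0
      linarith
    · rw [show witX W i = ⊥ from if_neg hiJ]
      exact bot_le
  -- limR W i0 < t
  have hltt : limR W i0 < t := by
    by_contra hcon
    push_neg at hcon
    have hpair : (unit i0 (limH W i0), (zeroVec : RmaxVec n)) ∈ W :=
      htrans _ _ _ (hord _ _ (unit_le_iff.2 le_rfl))
        (limH_pair_zero hcl hsub hord htrans hJne)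
    have hle : ((t : ℝ) : Rmax) ≤ limH W i0 := by
      rw [limH_real hcl hsub hord htrans hJne hi0]
      exact WithBot.coe_le_coe.2 hcon
    exact hnot (htrans _ _ _ (hord _ _ (unit_mono hle)) hpair)
  -- conclude
  have heq : ((t : ℝ) : Rmax) + witX W i0 = ((t - limR W i0 : ℝ) : Rmax) := by
    rw [hx_i0, coe_add']
    norm_num [sub_eq_add_neg]
  rw [heq]
  refine lt_of_le_of_lt hup ?_
  exact WithBot.coe_lt_coe.2 (by linarith)

end core

/-! ### shifting -/

def vshift (v : RmaxVec n) (G : Fin n → ℝ) : RmaxVec n := fun i => v i + ((G i : ℝ) : Rmax)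

def shiftW (W : Set (RmaxVec n × RmaxVec n)) (G : Fin n → ℝ) : Set (RmaxVec n × RmaxVec n) :=
  {q | (vshift q.1 G, vshift q.2 G) ∈ W}

theorem vshift_neg_cancel (v : RmaxVec n) (G : Fin n → ℝ) :
    vshift (fun i => v i + ((-(G i) : ℝ) : Rmax)) G = v := by
  funext i
  show (v i + _) + _ = v i
  have := add_coe_cancel (v i) (-(G i))
  rwa [neg_neg] at this

theorem continuous_vshift (G : Fin n → ℝ) : Continuous (fun v : RmaxVec n => vshift v G) := by
  refine continuous_pi fun i => ?_
  exact (continuous_add_const _).comp (continuous_apply i)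

theorem shiftW_closed {W : Set (RmaxVec n × RmaxVec n)} (hcl : IsClosed W) (G : Fin n → ℝ) :
    IsClosed (shiftW W G) := by
  have : shiftW W G = (fun q : RmaxVec n × RmaxVec n => (vshift q.1 G, vshift q.2 G)) ⁻¹' W := rfl
  rw [this]
  exact IsClosed.preimage
    (((continuous_vshift G).comp continuous_fst).prodMk ((continuous_vshift G).comp continuous_snd)) hcl

theorem vshift_maxComb (x y : RmaxVec n) (lam mu : Rmax) (G : Fin n → ℝ) :
    vshift (maxComb x y lam mu) G = maxComb (vshift x G) (vshift y G) lam mu := by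
  funext i
  show max (x i + lam) (y i + mu) + ((G i : ℝ) : Rmax)
      = max ((x i + (G i : ℝ)) + lam) ((y i + (G i : ℝ)) + mu)
  rw [max_add_right]
  congr 1
  · rw [add_assoc, add_assoc, add_comm lam _]
  · rw [add_assoc, add_assoc, add_comm mu _]

theorem shiftW_sub {W : Set (RmaxVec n × RmaxVec n)} (hsub : IsSubsemimodulePair W)
    (G : Fin n → ℝ) : IsSubsemimodulePair (shiftW W G) := by
  rintro p hp q hq lam mu
  show (vshift _ G, vshift _ G) ∈ W
  rw [vshift_maxComb, vshift_maxComb]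
  exact hsub _ hp _ hq lam mu

theorem vshift_mono {v w : RmaxVec n} (G : Fin n → ℝ) (h : v ≤ w) : vshift v G ≤ vshift w G :=
  fun i => add_le_add_left (h i) _

theorem shiftW_ord {W : Set (RmaxVec n × RmaxVec n)}
    (hord : ∀ f g : RmaxVec n, f ≤ g → (f, g) ∈ W) (G : Fin n → ℝ) :
    ∀ f g : RmaxVec n, f ≤ g → (f, g) ∈ shiftW W G :=
  fun f g h => hord _ _ (vshift_mono G h)

theorem shiftW_trans {W : Set (RmaxVec n × RmaxVec n)}
    (htrans : ∀ f g h : RmaxVec n, (f, g) ∈ W → (g, h) ∈ W → (f, h) ∈ W) (G : Fin n → ℝ) :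
    ∀ f g h : RmaxVec n, (f, g) ∈ shiftW W G → (g, h) ∈ shiftW W G → (f, h) ∈ shiftW W G :=
  fun f g h h1 h2 => htrans _ _ _ h1 h2

theorem mpBracket_shift (a x : RmaxVec n) (G : Fin n → ℝ) :
    mpBracket (fun i => a i + ((G i : ℝ) : Rmax)) x = mpBracket a (fun i => x i + ((G i : ℝ) : Rmax)) := by
  show Finset.univ.sup _ = Finset.univ.sup _
  apply Finset.sup_congr rfl
  intro i _
  show a i + _ + x i = a i + (x i + _)
  rw [add_assoc, add_comm ((G i : ℝ) : Rmax) (x i)]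

end MPaux
namespace MPaux
variable {n : ℕ}

theorem coe_max' (r s : ℝ) : ((max r s : ℝ) : Rmax) = max ((r:ℝ):Rmax) ((s:ℝ):Rmax) := by
  rcases le_total r s with h | h
  · rw [max_eq_right h, max_eq_right (WithBot.coe_le_coe.2 h)]
  · rw [max_eq_left h, max_eq_left (WithBot.coe_le_coe.2 h)]

theorem sup_units (v : RmaxVec n) :
    ((botVec : RmaxVec n) ⊔ Finset.univ.sup fun k => unit k (v k)) = v := by
  funext i
  rw [Pi.sup_apply, Finset.sup_apply]
  refine le_antisymm (sup_le bot_le (Finset.sup_le fun k _ => ?_)) ?_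
  · show unit k (v k) i ≤ v i
    by_cases hik : i = k
    · subst hik; rw [unit_same]
    · rw [unit_other hik]; exact bot_le
  · have hle := Finset.le_sup (f := fun k => unit k (v k) i) (Finset.mem_univ i)
    simp only [unit_same] at hle
    exact le_trans hle le_sup_right

section core
variable {W : Set (RmaxVec n × RmaxVec n)}

theorem exists_bad_unit
    (hsub : IsSubsemimodulePair W)
    (hord : ∀ f g : RmaxVec n, f ≤ g → (f, g) ∈ W)
    {f g : RmaxVec n} (hp : (f, g) ∉ W) :
    ∃ (i0 : Fin n) (t0 : ℝ), f i0 = ((t0 : ℝ) : Rmax) ∧ (unit i0 ((t0:ℝ):Rmax), g) ∉ W := by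
  by_contra hcon
  push_neg at hcon
  have hall : ∀ i : Fin n, (unit i (f i), g) ∈ W := by
    intro i
    by_cases hfi : f i = ⊥
    · rw [hfi, unit_bot]
      exact hord _ _ (bot_le' g)
    · obtain ⟨r, hr⟩ := rmax_exists_coe hfi
      rcases hcon i r (by rw [← hr]) with h
      rwa [hr]
  have hcomb := Wsup_finset hsub Finset.univ (fun i => unit i (f i)) botVec g
    (hord _ _ (bot_le' g)) (fun i _ => hall i)
  rw [sup_units] at hcomb
  exact hp hcomb

theorem fill_g
    (hcl : IsClosed W) {i0 : Fin n} {t0 : ℝ} {g : RmaxVec n}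
    (h : (unit i0 ((t0:ℝ):Rmax), g) ∉ W) :
    ∃ s : ℝ, (unit i0 ((t0:ℝ):Rmax), fun i => g i ⊔ ((s:ℝ):Rmax)) ∉ W := by
  by_contra hcon
  push_neg at hcon
  apply h
  have htd : Filter.Tendsto
      (fun m : ℕ => ((unit i0 ((t0:ℝ):Rmax) : RmaxVec n),
        fun i => g i ⊔ (((-(m:ℝ)):ℝ):Rmax)))
      Filter.atTop (nhds ((unit i0 ((t0:ℝ):Rmax) : RmaxVec n), g)) := by
    refine Filter.Tendsto.prodMk_nhds tendsto_const_nhds ?_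
    refine tendsto_pi_nhds.2 fun i => ?_
    show Filter.Tendsto (fun m : ℕ => g i ⊔ (((-(m:ℝ)):ℝ):Rmax)) Filter.atTop (nhds (g i))
    by_cases hgi : g i = ⊥
    · rw [hgi]
      have he : (fun m : ℕ => (⊥ : Rmax) ⊔ (((-(m:ℝ)):ℝ):Rmax))
          = fun m : ℕ => (((-(m:ℝ)):ℝ):Rmax) := by
        funext m; rw [bot_sup_eq]
      rw [he]
      refine tendsto_nhds_bot' fun C => ?_
      refine Filter.eventually_atTop.2 ⟨Nat.ceil (|C| + 1), fun m hm => ?_⟩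
      have h1 : (|C| + 1 : ℝ) ≤ (m : ℝ) := by
        calc (|C| + 1 : ℝ) ≤ (Nat.ceil (|C|+1) : ℝ) := Nat.le_ceil _
        _ ≤ (m : ℝ) := by exact_mod_cast hm
      have h2 : -C ≤ |C| := neg_le_abs C
      exact WithBot.coe_lt_coe.2 (by linarith)
    · obtain ⟨r, hr⟩ := rmax_exists_coe hgi
      rw [hr]
      refine Filter.Tendsto.congr' ?_ tendsto_const_nhds
      refine (Filter.eventually_atTop.2 ⟨Nat.ceil |r| + 1, fun m hm => ?_⟩ :
        ∀ᶠ m : ℕ in Filter.atTop, ((r:ℝ):Rmax) = ((r:ℝ):Rmax) ⊔ (((-(m:ℝ)):ℝ):Rmax))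
      rw [sup_eq_left.2 ?_]
      refine WithBot.coe_le_coe.2 ?_
      have h1 : (|r| : ℝ) ≤ Nat.ceil |r| := Nat.le_ceil _
      have h2 : ((Nat.ceil |r| + 1 : ℕ) : ℝ) ≤ (m : ℝ) := by exact_mod_cast hm
      have h3 : -r ≤ |r| := neg_le_abs r
      push_cast at h2
      linarith
  exact hcl.mem_of_tendsto htd (Filter.Eventually.of_forall fun m => hcon (-(m:ℝ)))

theorem separation
    (hcl : IsClosed W) (hsub : IsSubsemimodulePair W)
    (hord : ∀ f g : RmaxVec n, f ≤ g → (f, g) ∈ W)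
    (htrans : ∀ f g h : RmaxVec n, (f, g) ∈ W → (g, h) ∈ W → (f, h) ∈ W)
    {f g : RmaxVec n} (hp : (f, g) ∉ W) :
    ∃ x ∈ mpDiamond W, mpBracket g x < mpBracket f x := by
  obtain ⟨i0, t0, hfi0, hnot1⟩ := exists_bad_unit hsub hord hp
  obtain ⟨s, hnot2⟩ := fill_g hcl hnot1
  -- real form of the filled vector
  set G : Fin n → ℝ := fun i => max (WithBot.unbotD s (g i)) s with hG
  have hcoeG : ∀ i, ((G i : ℝ) : Rmax) = g i ⊔ ((s:ℝ):Rmax) := by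
    intro i
    by_cases hgi : g i = ⊥
    · have hGi : G i = max s s := by rw [hG]; simp [hgi]
      rw [hGi, hgi, bot_sup_eq]
      norm_num
    · obtain ⟨r, hr⟩ := rmax_exists_coe hgi
      have hGi : G i = max r s := by rw [hG]; simp [hr]
      rw [hGi, hr, coe_max']
  -- the shifted cone
  set W2 := shiftW W G with hW2
  have hcl2 := shiftW_closed hcl G
  have hsub2 := shiftW_sub hsub G
  have hord2 := shiftW_ord hord G
  have htrans2 := shiftW_trans htrans G
  have hnot3 : (unit i0 (((t0 - G i0 : ℝ)):Rmax), (zeroVec : RmaxVec n)) ∉ W2 := by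
    intro hmem
    apply hnot2
    have he1 : vshift (unit i0 (((t0 - G i0 : ℝ)):Rmax)) G = unit i0 ((t0:ℝ):Rmax) := by
      funext i
      by_cases hij : i = i0
      · subst hij
        show unit i (((t0 - G i : ℝ)):Rmax) i + ((G i : ℝ) : Rmax) = unit i ((t0:ℝ):Rmax) i
        rw [unit_same, unit_same, coe_add']
        norm_num
      · show unit i0 _ i + _ = unit i0 _ i
        rw [unit_other hij, unit_other hij, WithBot.bot_add]
    have he2 : vshift (zeroVec : RmaxVec n) G = fun i => g i ⊔ ((s:ℝ):Rmax) := by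
      funext i
      show (0 : Rmax) + ((G i : ℝ) : Rmax) = g i ⊔ ((s:ℝ):Rmax)
      rw [zero_add, hcoeG]
    rw [hW2, shiftW] at hmem
    simp only [Set.mem_setOf_eq] at hmem
    rwa [he1, he2] at hmem
  obtain ⟨xb, hxb, hxblt⟩ := key0 hcl2 hsub2 hord2 htrans2 i0 (t0 - G i0) hnot3
  -- transport the witness back
  set x : RmaxVec n := fun i => xb i + ((-(G i) : ℝ) : Rmax) with hx
  have hxdia : x ∈ mpDiamond W := by
    rintro ⟨a, b⟩ hab
    have hab2 : ((fun i => a i + ((-(G i) : ℝ) : Rmax)), (fun i => b i + ((-(G i) : ℝ) : Rmax))) ∈ W2 := by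
      rw [hW2, shiftW]
      simp only [Set.mem_setOf_eq]
      rw [show vshift (fun i => a i + ((-(G i) : ℝ) : Rmax)) G = a from vshift_neg_cancel a G,
        show vshift (fun i => b i + ((-(G i) : ℝ) : Rmax)) G = b from vshift_neg_cancel b G]
      exact hab
    have h0 := hxb _ hab2
    show mpBracket a x ≤ mpBracket b x
    rw [hx]
    rw [← mpBracket_shift a xb (fun i => -(G i)), ← mpBracket_shift b xb (fun i => -(G i))]
    exact h0
  refine ⟨x, hxdia, ?_⟩
  -- left side: bracket g x ≤ bracket zeroVec xb
  have hgle : mpBracket g x ≤ mpBracket (zeroVec : RmaxVec n) xb := by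
    have h1 : mpBracket g x ≤ mpBracket (fun i => g i ⊔ ((s:ℝ):Rmax)) x :=
      mpBracket_mono_left x (fun i => le_sup_left)
    have h2 : mpBracket (fun i => g i ⊔ ((s:ℝ):Rmax)) x = mpBracket (zeroVec : RmaxVec n) xb := by
      show Finset.univ.sup _ = Finset.univ.sup _
      apply Finset.sup_congr rfl
      intro i _
      show (g i ⊔ ((s:ℝ):Rmax)) + x i = (0 : Rmax) + xb i
      rw [← hcoeG, zero_add, hx]
      show ((G i : ℝ) : Rmax) + (xb i + ((-(G i) : ℝ) : Rmax)) = xb i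
      rw [add_comm ((G i : ℝ) : Rmax) _, add_assoc, coe_add']
      norm_num
    rw [← h2]
    exact h1
  -- right side
  have hfge : (((t0 - G i0 : ℝ)) : Rmax) + xb i0 ≤ mpBracket f x := by
    have h1 : f i0 + x i0 ≤ mpBracket f x := le_mpBracket f x i0
    have h2 : f i0 + x i0 = (((t0 - G i0 : ℝ)) : Rmax) + xb i0 := by
      rw [hfi0, hx]
      show ((t0:ℝ):Rmax) + (xb i0 + ((-(G i0) : ℝ) : Rmax)) = _
      rw [add_comm (xb i0) _, ← add_assoc, coe_add']
      rw [show (t0 + -(G i0) : ℝ) = t0 - G i0 from by ring]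
    rw [← h2]
    exact h1
  exact lt_of_le_of_lt hgle (lt_of_lt_of_le hxblt hfge)

end core
end MPaux
namespace MPaux
variable {n : ℕ}

theorem reverse_direction {W : Set (RmaxVec n × RmaxVec n)}
    (hcl : IsClosed W) (hsub : IsSubsemimodulePair W)
    (hord : ∀ f g : RmaxVec n, f ≤ g → (f, g) ∈ W)
    (htrans : ∀ f g h : RmaxVec n, (f, g) ∈ W → (g, h) ∈ W → (f, h) ∈ W) :
    W = mpPolar (mpDiamond W) := by
  ext p
  constructor
  · intro hp x hx
    exact hx p hp
  · intro hp
    by_contra hW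
    rcases p with ⟨f, g⟩
    obtain ⟨x, hxd, hlt⟩ := separation hcl hsub hord htrans hW
    exact absurd (hp x hxd) (not_le_of_gt hlt)

end MPaux


/-- **Bipolar theorem** (Theorem 1.1 / Theorem 4.6 of the paper).
A subset `W ⊆ (ℝmax^n)²` is the polar of a cone if, and only if,
(i) `W` is a closed max-plus subsemimodule, (ii) `f ≤ g` implies `(f,g) ∈ W`,
and (iii) `W` is transitive. -/
theorem bipolar_theorem (n : ℕ) (hn : 1 ≤ n) (W : Set (RmaxVec n × RmaxVec n)) :
    (∃ V : Set (RmaxVec n), W = mpPolar V) ↔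
      (IsClosed W ∧ IsSubsemimodulePair W) ∧
      (∀ f g : RmaxVec n, f ≤ g → (f, g) ∈ W) ∧
      (∀ f g h : RmaxVec n, (f, g) ∈ W → (g, h) ∈ W → (f, h) ∈ W) := by
  constructor
  · rintro ⟨V, rfl⟩
    exact ⟨⟨MPaux.isClosed_mpPolar V, MPaux.mpPolar_isSubsemimodulePair V⟩,
      MPaux.mpPolar_order V, MPaux.mpPolar_trans V⟩
  · rintro ⟨⟨hcl, hsub⟩, hord, htrans⟩
    exact ⟨mpDiamond W, MPaux.reverse_direction hcl hsub hord htrans⟩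
end
end

section
/- Biorthogonal theorem: For n ≥ 1 and a subset W ⊆ (ℝmax^n)^2, W is the orthogonal of a cone (i.e., there exists V ⊆ ℝmax^n with W = V⊥) if, and only if, the following four conditions hold: (i) W is a topologically closed subsemimodule of (ℝmax^n)^2; (ii) (f,f) ∈ W for every f ∈ ℝmax^n; (iii) (f,g) ∈ W implies (g,f) ∈ W; (iv) (f,g) ∈ W and (g,h) ∈ W imply (f,h) ∈ W. -/
open scoped Classical

noncomputable section

namespace BiorthAux

open Filter

/-! ### Arithmetic helpers on `Rmax` -/

lemma rm_cases (a : Rmax) : a = ⊥ ∨ ∃ r : ℝ, a = (r:Rmax) := by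
  induction a using WithBot.recBotCoe with
  | bot => exact Or.inl rfl
  | coe r => exact Or.inr ⟨r, rfl⟩

lemma rm_cancel (b : Rmax) (r : ℝ) : b + (r:Rmax) + ((-r:ℝ):Rmax) = b := by
  induction b using WithBot.recBotCoe with
  | bot => simp
  | coe t => rw [← WithBot.coe_add, ← WithBot.coe_add]; norm_num

lemma sub_le_of_le_add {a b : Rmax} {r : ℝ} (h : a ≤ b + (r:Rmax)) :
    a + ((-r:ℝ):Rmax) ≤ b := by
  have := add_le_add_left h (((-r:ℝ)):Rmax)
  rwa [rm_cancel] at this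

lemma swap_neg_le {a : Rmax} {μ s : ℝ} (h : a + ((-μ:ℝ):Rmax) ≤ (s:Rmax)) :
    a + ((-s:ℝ):Rmax) ≤ (μ:Rmax) := by
  induction a using WithBot.recBotCoe with
  | bot => simp
  | coe t =>
    rw [← WithBot.coe_add] at h ⊢
    rw [WithBot.coe_le_coe] at h ⊢
    linarith

lemma max_add_right (a b c : Rmax) : max a b + c = max (a + c) (b + c) := by
  rcases max_cases a b with ⟨h1,h2⟩|⟨h1,h2⟩ <;> rw [h1]
  · exact (max_eq_left (add_le_add_left h2 c)).symm
  · exact (max_eq_right (add_le_add_left h2.le c)).symm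

lemma sup_add {ι : Type*} (s : Finset ι) (f : ι → Rmax) (c : Rmax) :
    s.sup f + c = s.sup fun i => f i + c := by
  induction s using Finset.cons_induction with
  | empty => simp
  | cons a s ha ih =>
    simp only [Finset.sup_cons]
    rw [max_add_right, ih]

lemma sup_max {ι : Type*} (s : Finset ι) (f g : ι → Rmax) :
    (s.sup fun i => max (f i) (g i)) = max (s.sup f) (s.sup g) := by
  induction s using Finset.cons_induction with
  | empty => simp
  | cons a s ha ih =>
    simp only [Finset.sup_cons]
    rw [ih, max_max_max_comm]

lemma bracket_maxComb {n : ℕ} (a a' x : RmaxVec n) (l m : Rmax) :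
    mpBracket (maxComb a a' l m) x = max (mpBracket a x + l) (mpBracket a' x + m) := by
  unfold mpBracket maxComb
  rw [sup_add, sup_add, ← sup_max]
  congr 1; funext i
  rw [max_add_right, add_right_comm, add_right_comm (a' i)]

lemma bracket_max {n : ℕ} (a b x : RmaxVec n) :
    mpBracket (fun j => max (a j) (b j)) x = max (mpBracket a x) (mpBracket b x) := by
  unfold mpBracket
  rw [← sup_max]; congr 1; funext i; rw [max_add_right]


lemma maxComb_zero {n : ℕ} (a b : RmaxVec n) :
    maxComb a b 0 0 = fun j => max (a j) (b j) := by
  funext j; simp [maxComb]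

lemma maxComb_self {n : ℕ} (a : RmaxVec n) : maxComb a a 0 0 = a := by
  funext j; simp [maxComb]

lemma maxComb_left {n : ℕ} (a b : RmaxVec n) (lam : Rmax) :
    maxComb a b lam 0 = fun j => max (a j + lam) (b j) := by
  funext j; simp [maxComb]

lemma le_mpBracket {n : ℕ} (y x : RmaxVec n) (j : Fin n) :
    y j + x j ≤ mpBracket y x := by
  unfold mpBracket
  exact Finset.le_sup (f := fun i => y i + x i) (Finset.mem_univ j)

lemma mpBracket_le {n : ℕ} {y x : RmaxVec n} {c : Rmax}
    (h : ∀ j, y j + x j ≤ c) : mpBracket y x ≤ c := by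
  unfold mpBracket
  exact Finset.sup_le fun j _ => h j

/-! ### Topological helpers -/

lemma continuous_add_const (c : Rmax) : Continuous fun a : Rmax => a + c := by
  induction c using WithBot.recBotCoe with
  | bot =>
    have : (fun a : Rmax => a + ⊥) = fun _ => ⊥ := by funext a; exact WithBot.add_bot a
    rw [this]; exact continuous_const
  | coe r =>
    let e : Rmax ≃o Rmax :=
      { toFun := fun a => a + (r:Rmax)
        invFun := fun a => a + ((-r:ℝ):Rmax)
        left_inv := fun a => rm_cancel a r
        right_inv := fun a => by
          have := rm_cancel a (-r)
          rwa [neg_neg] at this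
        map_rel_iff' := fun {a b} =>
          WithBot.add_le_add_iff_right (WithBot.coe_ne_bot) }
    exact e.continuous

lemma continuous_bracket {n : ℕ} (x : RmaxVec n) :
    Continuous fun y : RmaxVec n => mpBracket y x := by
  have : ∀ s : Finset (Fin n), Continuous fun y : RmaxVec n => s.sup fun i => y i + x i := by
    intro s
    induction s using Finset.cons_induction with
    | empty => simpa using continuous_const
    | cons a s ha ih =>
      simp only [Finset.sup_cons]
      exact ((continuous_add_const (x a)).comp (continuous_apply a)).max ih
  exact this _

lemma tendsto_coe_rmax {a : ℕ → ℝ} {l : ℝ} (h : Tendsto a atTop (nhds l)) :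
    Tendsto (fun k => ((a k : ℝ) : Rmax)) atTop (nhds (l : Rmax)) := by
  rw [tendsto_order]
  constructor
  · intro b hb
    induction b using WithBot.recBotCoe with
    | bot => exact Eventually.of_forall fun k => WithBot.bot_lt_coe _
    | coe s =>
      have hs : s < l := by exact_mod_cast hb
      filter_upwards [(tendsto_order.1 h).1 s hs] with k hk
      exact_mod_cast hk
  · intro b hb
    induction b using WithBot.recBotCoe with
    | bot => exact absurd hb (by simp)
    | coe s =>
      have hs : l < s := by exact_mod_cast hb
      filter_upwards [(tendsto_order.1 h).2 s hs] with k hk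
      exact_mod_cast hk

lemma tendsto_neg_nat_bot :
    Tendsto (fun k : ℕ => ((-(k:ℝ) : ℝ) : Rmax)) atTop (nhds (⊥ : Rmax)) := by
  rw [tendsto_order]
  constructor
  · intro a ha; exact absurd ha not_lt_bot
  · intro b hb
    induction b using WithBot.recBotCoe with
    | bot => exact absurd hb (lt_irrefl _)
    | coe s =>
      obtain ⟨N, hN⟩ := exists_nat_gt (-s)
      filter_upwards [eventually_ge_atTop N] with k hk
      have hk' : (N:ℝ) ≤ k := by exact_mod_cast hk
      have : -(k:ℝ) < s := by linarith
      exact_mod_cast this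

lemma le_of_forall_coe_lt {s t : Rmax} (h : ∀ μ : ℝ, t < (μ:Rmax) → s ≤ (μ:Rmax)) :
    s ≤ t := by
  by_contra hc
  push_neg at hc
  obtain ⟨u, hu1, hu2⟩ := exists_between hc
  induction u using WithBot.recBotCoe with
  | bot => exact absurd hu1 (by simp)
  | coe μ => exact absurd (h μ hu1) (not_le.2 hu2)

/-! ### The easy direction -/

lemma isClosed_mpOrtho {n : ℕ} (V : Set (RmaxVec n)) : IsClosed (mpOrtho V) := by
  have heq : mpOrtho V = ⋂ x ∈ V,
      {p : RmaxVec n × RmaxVec n | mpBracket p.1 x ≤ mpBracket p.2 x} ∩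
      {p : RmaxVec n × RmaxVec n | mpBracket p.2 x ≤ mpBracket p.1 x} := by
    ext p
    simp only [mpOrtho, Set.mem_setOf_eq, Set.mem_iInter, Set.mem_inter_iff]
    exact ⟨fun h x hx => ⟨(h x hx).le, (h x hx).ge⟩,
      fun h x hx => le_antisymm (h x hx).1 (h x hx).2⟩
  rw [heq]
  refine isClosed_biInter fun x hx => ?_
  have h1 : Continuous fun p : RmaxVec n × RmaxVec n => mpBracket p.1 x :=
    (continuous_bracket x).comp continuous_fst
  have h2 : Continuous fun p : RmaxVec n × RmaxVec n => mpBracket p.2 x :=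
    (continuous_bracket x).comp continuous_snd
  exact (isClosed_le h1 h2).inter (isClosed_le h2 h1)

/-! ### The hard direction -/

section Hard

variable {n : ℕ} {W : Set (RmaxVec n × RmaxVec n)}
variable (hcl : IsClosed W) (hmod : IsSubsemimodulePair W)
variable (hrefl : ∀ f : RmaxVec n, (f, f) ∈ W)
variable (hsymm : ∀ f g : RmaxVec n, (f, g) ∈ W → (g, f) ∈ W)
variable (htrans : ∀ f g h : RmaxVec n, (f, g) ∈ W → (g, h) ∈ W → (f, h) ∈ W)

include hmod hrefl hsymm htrans in
/-- The key claim at "level `c`": if `g ≤ F`, both bounded below by the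
constant `c`, and `F, g` have equal brackets against every element of
`mpTop W`, then `(F, g) ∈ W`. -/
lemma claim_c (hcl : IsClosed W) (F g : RmaxVec n) (hle : g ≤ F) (c : ℝ)
    (hgc : ∀ j, (c:Rmax) ≤ g j) (hFc : ∀ j, ∃ r : ℝ, F j = (r:Rmax))
    (hFg : ∀ x ∈ mpTop W, mpBracket F x = mpBracket g x) :
    (F, g) ∈ W := by
  by_contra hnot
  -- the class of `g`
  set V : Set (RmaxVec n) := {h | (h, g) ∈ W} with hV
  have hgV : g ∈ V := hrefl g
  -- `V` is closed under pointwise max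
  have hVmax : ∀ h ∈ V, ∀ h' ∈ V, (fun j => max (h j) (h' j)) ∈ V := by
    intro h hh h' hh'
    have hc := hmod (h, g) hh (h', g) hh' 0 0
    simp only [maxComb_zero] at hc
    rw [show (fun j => max (g j) (g j)) = g from funext fun j => max_self _] at hc
    exact hc
  -- Lemma A : any element between `g` and an element of `V` is in `V`
  have hVA : ∀ z h', h' ∈ V → z ≤ h' → g ≤ z → z ∈ V := by
    intro z h' hh' hzh hgz
    have h1 := hmod (h', g) hh' (z, z) (hrefl z) 0 0
    simp only [maxComb_zero] at h1
    have e1 : (fun i => max (h' i) (z i)) = h' := funext fun i => max_eq_left (hzh i)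
    have e2 : (fun i => max (g i) (z i)) = z := funext fun i => max_eq_right (hgz i)
    rw [e1, e2] at h1
    exact htrans z h' g (hsymm _ _ h1) hh'
  by_cases hcase : ∀ δ : ℝ, 0 < δ → ∃ h ∈ V, ∀ j, F j ≤ h j + (δ:Rmax)
  · -- Case 1 : `F` is approximated from above by elements of `V`, scaled down;
    -- conclude `(F, g) ∈ W` by closedness, a contradiction.
    have hδpos : ∀ k : ℕ, (0:ℝ) < 1/((k:ℝ)+1) := fun k => by positivity
    choose h hh1 hh2 using fun k : ℕ => hcase (1/((k:ℝ)+1)) (hδpos k)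
    set z : ℕ → RmaxVec n :=
      fun k j => max (F j + ((-(1/((k:ℝ)+1)):ℝ):Rmax)) (g j) with hz
    have hzV : ∀ k, z k ∈ V := by
      intro k
      refine hVA (z k) (fun j => max (h k j) (g j)) (hVmax _ (hh1 k) _ hgV) ?_ ?_
      · intro j
        exact max_le_max (sub_le_of_le_add (hh2 k j)) le_rfl
      · intro j; exact le_max_right _ _
    have hzW : ∀ k, (z k, g) ∈ W := hzV
    have htend : Tendsto (fun k => (z k, g)) atTop (nhds (F, g)) := by
      refine Tendsto.prodMk_nhds ?_ tendsto_const_nhds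
      rw [tendsto_pi_nhds]
      intro j
      obtain ⟨r, hr⟩ := hFc j
      have h1 : Tendsto (fun k : ℕ => F j + ((-(1/((k:ℝ)+1)):ℝ):Rmax)) atTop (nhds (F j)) := by
        rw [hr]
        have he : ∀ k : ℕ, (r:Rmax) + ((-(1/((k:ℝ)+1)):ℝ):Rmax) = ((r - 1/((k:ℝ)+1) : ℝ):Rmax) := by
          intro k; rw [← WithBot.coe_add, sub_eq_add_neg]
        simp only [he]
        refine tendsto_coe_rmax ?_
        have h0 : Tendsto (fun k : ℕ => 1/((k:ℝ)+1)) atTop (nhds 0) :=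
          tendsto_one_div_add_atTop_nhds_zero_nat
        have h1 := (tendsto_const_nhds (x := r) (f := atTop (α := ℕ))).sub h0
        rwa [sub_zero] at h1
      have h2 := h1.max (tendsto_const_nhds (x := g j))
      have e : max (F j) (g j) = F j := max_eq_left (hle j)
      rw [e] at h2
      simp only [hz]
      exact h2
    exact hnot (hcl.mem_of_tendsto htend (Eventually.of_forall hzW))
  · -- Case 2 : construct a separating element of `mpTop W`.
    push_neg at hcase
    obtain ⟨δ0, hδ0, hsep⟩ := hcase
    set S : Fin n → Set ℝ := fun j => {r | ∃ h ∈ V, (r:Rmax) ≤ h j} with hS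
    have hSne : ∀ j, (S j).Nonempty := fun j => ⟨c, g, hgV, hgc j⟩
    set x : RmaxVec n :=
      fun j => if BddAbove (S j) then ((-(sSup (S j)):ℝ):Rmax) else ⊥ with hx
    -- K1 : elements of `V` pair with `x` below `0`
    have hx1 : ∀ j, ∀ h ∈ V, h j + x j ≤ ((0:ℝ):Rmax) := by
      intro j h hh
      by_cases hbd : BddAbove (S j)
      · rw [hx]; simp only [hbd, if_true]
        rcases rm_cases (h j) with hj | ⟨r, hj⟩
        · rw [hj]; simp
        · have hr : r ∈ S j := ⟨h, hh, hj.ge⟩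
          have := le_csSup hbd hr
          rw [hj, ← WithBot.coe_add, WithBot.coe_le_coe]
          linarith
      · rw [hx]; simp only [hbd, if_false]
        simp
    -- F2 : from strict bracket bounds, get a dominating element of `V`
    have hx2 : ∀ (b : RmaxVec n) (μ : ℝ), (∀ j, b j + x j < (μ:Rmax)) →
        ∃ h ∈ V, ∀ j, b j ≤ h j + (μ:Rmax) := by
      intro b μ hb
      have hjh : ∀ j, ∃ h ∈ V, b j ≤ h j + (μ:Rmax) := by
        intro j
        rcases rm_cases (b j) with hbj | ⟨r, hbj⟩
        · exact ⟨g, hgV, by rw [hbj]; exact bot_le⟩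
        · have hget : ∃ t ∈ S j, r - μ < t := by
            by_cases hbd : BddAbove (S j)
            · have he : b j + x j = ((r - sSup (S j) : ℝ):Rmax) := by
                rw [hbj, hx]; simp only [hbd, if_true]
                rw [← WithBot.coe_add, sub_eq_add_neg]
              have hlt : r - sSup (S j) < μ := by
                have h1 := hb j
                rw [he, WithBot.coe_lt_coe] at h1
                exact h1
              exact exists_lt_of_lt_csSup (hSne j) (by linarith)
            · rw [not_bddAbove_iff] at hbd
              obtain ⟨t, ht1, ht2⟩ := hbd (r - μ)
              exact ⟨t, ht1, ht2⟩
          obtain ⟨t, ⟨h, hh, hth⟩, htr⟩ := hget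
          refine ⟨h, hh, ?_⟩
          rw [hbj]
          calc (r:Rmax) ≤ ((t + μ : ℝ):Rmax) := by
                rw [WithBot.coe_le_coe]; linarith
          _ = (t:Rmax) + (μ:Rmax) := by rw [← WithBot.coe_add]
          _ ≤ h j + (μ:Rmax) := add_le_add_left hth _
      choose hf hf1 hf2 using hjh
      have hsupV : ∀ s : Finset (Fin n),
          (fun j => max (g j) (s.sup fun i => hf i j)) ∈ V := by
        intro s
        induction s using Finset.cons_induction with
        | empty => simpa using hgV
        | cons a s ha ih =>
          have hmem := hVmax _ (hf1 a) _ ih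
          have e : (fun j => max (hf a j) (max (g j) (s.sup fun i => hf i j)))
              = fun j => max (g j) ((Finset.cons a s ha).sup fun i => hf i j) := by
            funext j
            rw [Finset.sup_cons, max_left_comm]
          rw [e] at hmem
          exact hmem
      refine ⟨_, hsupV Finset.univ, fun j => (hf2 j).trans (add_le_add_left ?_ _)⟩
      exact le_trans (Finset.le_sup (f := fun i => hf i j) (Finset.mem_univ j))
        (le_max_right _ _)
    -- F3 : `x` is in `mpTop W`
    have hx3 : x ∈ mpTop W := by
      have hhalf : ∀ p ∈ W, mpBracket p.1 x ≤ mpBracket p.2 x := by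
        rintro ⟨a, b⟩ hab
        apply le_of_forall_coe_lt
        intro μ hμ
        have hbj : ∀ j, b j + x j < (μ:Rmax) := fun j =>
          lt_of_le_of_lt (le_mpBracket b x j) hμ
        obtain ⟨h, hh, hbh⟩ := hx2 b μ hbj
        have hw := hmod (a, b) hab (h, h) (hrefl h) ((-μ:ℝ):Rmax) 0
        simp only [maxComb_left] at hw
        have e2 : (fun i => max (b i + ((-μ:ℝ):Rmax)) (h i)) = h :=
          funext fun i => max_eq_right (sub_le_of_le_add (hbh i))
        rw [e2] at hw
        have hwV : (fun i => max (a i + ((-μ:ℝ):Rmax)) (h i)) ∈ V :=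
          htrans _ _ _ hw hh
        refine mpBracket_le fun j => ?_
        by_cases hbd : BddAbove (S j)
        · have hwj : (fun i => max (a i + ((-μ:ℝ):Rmax)) (h i)) j ≤ ((sSup (S j) : ℝ):Rmax) := by
            rcases rm_cases ((fun i => max (a i + ((-μ:ℝ):Rmax)) (h i)) j) with hj | ⟨r, hj⟩
            · rw [hj]; exact bot_le
            · rw [hj, WithBot.coe_le_coe]
              exact le_csSup hbd ⟨_, hwV, hj.ge⟩
          have haj : a j + ((-μ:ℝ):Rmax) ≤ ((sSup (S j) : ℝ):Rmax) :=
            le_trans (le_max_left _ _) hwj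
          have := swap_neg_le haj
          rw [hx]; simp only [hbd, if_true]
          exact this
        · rw [hx]; simp only [hbd, if_false]
          simp
      intro p hp
      exact le_antisymm (hhalf p hp) (hhalf (p.2, p.1) (hsymm _ _ hp))
    -- F4 : the bracket of `F` against `x` is at least `δ0`
    have hx4 : ((δ0:ℝ):Rmax) ≤ mpBracket F x := by
      by_contra h4
      push_neg at h4
      have hFj : ∀ j, F j + x j < ((δ0:ℝ):Rmax) := fun j =>
        lt_of_le_of_lt (le_mpBracket F x j) h4
      obtain ⟨h, hh, hFh⟩ := hx2 F δ0 hFj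
      obtain ⟨j, hj⟩ := hsep h hh
      exact absurd (hFh j) (not_le.2 hj)
    -- Final contradiction
    have hgb : mpBracket g x ≤ ((0:ℝ):Rmax) :=
      mpBracket_le fun j => hx1 j g hgV
    have heq := hFg x hx3
    have : ((δ0:ℝ):Rmax) ≤ ((0:ℝ):Rmax) := hx4.trans (heq ▸ hgb)
    rw [WithBot.coe_le_coe] at this
    linarith

include hcl hmod hrefl hsymm htrans in
lemma key_le (F g : RmaxVec n) (hle : g ≤ F)
    (hFg : ∀ x ∈ mpTop W, mpBracket F x = mpBracket g x) : (F, g) ∈ W := by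
  have hclaim : ∀ c : ℝ,
      ((fun j => max (F j) ((c:ℝ):Rmax)), fun j => max (g j) ((c:ℝ):Rmax)) ∈ W := by
    intro c
    refine claim_c hmod hrefl hsymm htrans hcl
      (fun j => max (F j) ((c:ℝ):Rmax)) (fun j => max (g j) ((c:ℝ):Rmax))
      (fun j => max_le_max (hle j) le_rfl) c (fun j => le_max_right _ _) ?_ ?_
    · intro j
      rcases rm_cases (F j) with hF | ⟨r, hF⟩
      · refine ⟨c, ?_⟩
        show max (F j) ((c:ℝ):Rmax) = ((c:ℝ):Rmax)
        rw [hF]; exact max_eq_right bot_le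
      · refine ⟨max r c, ?_⟩
        show max (F j) ((c:ℝ):Rmax) = ((max r c : ℝ):Rmax)
        rw [hF, WithBot.coe_max]
    · intro x hx
      have h := hFg x hx
      have e1 : (fun j => max (F j) ((c:ℝ):Rmax))
          = fun j => max (F j) ((fun _ : Fin n => ((c:ℝ):Rmax)) j) := rfl
      have e2 : (fun j => max (g j) ((c:ℝ):Rmax))
          = fun j => max (g j) ((fun _ : Fin n => ((c:ℝ):Rmax)) j) := rfl
      rw [e1, e2, bracket_max, bracket_max, h]
  have htend : Tendsto (fun k : ℕ =>
      ((fun j => max (F j) ((-(k:ℝ):ℝ):Rmax)), fun j => max (g j) ((-(k:ℝ):ℝ):Rmax)))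
      atTop (nhds (F, g)) := by
    have haux : ∀ y : RmaxVec n,
        Tendsto (fun k : ℕ => fun j => max (y j) ((-(k:ℝ):ℝ):Rmax)) atTop (nhds y) := by
      intro y
      rw [tendsto_pi_nhds]
      intro j
      have h1 := (tendsto_const_nhds (x := y j) (f := atTop (α := ℕ))).max tendsto_neg_nat_bot
      rwa [max_eq_left (bot_le : (⊥:Rmax) ≤ y j)] at h1
    exact (haux F).prodMk_nhds (haux g)
  exact hcl.mem_of_tendsto htend (Eventually.of_forall fun k => hclaim (-(k:ℝ)))

include hcl hmod hrefl hsymm htrans in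
lemma ortho_top_subset : mpOrtho (mpTop W) ⊆ W := by
  rintro ⟨f, g⟩ hfg
  have hfg' : ∀ x ∈ mpTop W, mpBracket f x = mpBracket g x := hfg
  have h1 : ((fun j => max (f j) (g j)), g) ∈ W := by
    refine key_le hcl hmod hrefl hsymm htrans _ g (fun j => le_max_right _ _) ?_
    intro x hx
    rw [bracket_max, hfg' x hx, max_self]
  have h2 : ((fun j => max (f j) (g j)), f) ∈ W := by
    refine key_le hcl hmod hrefl hsymm htrans _ f (fun j => le_max_left _ _) ?_
    intro x hx
    rw [bracket_max, hfg' x hx, max_self, ← hfg' x hx]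
  exact htrans f _ g (hsymm _ _ h2) h1

end Hard

end BiorthAux

/-- **Biorthogonal theorem** (Theorem 1.2 of the paper).
A subset `W ⊆ (ℝmax^n)²` is the orthogonal of a cone if, and only if,
(i) `W` is a closed max-plus subsemimodule, (ii) `W` contains the diagonal,
(iii) `W` is symmetric, and (iv) `W` is transitive. -/
theorem biorthogonal_theorem (n : ℕ) (hn : 1 ≤ n)
    (W : Set (RmaxVec n × RmaxVec n)) :
    (∃ V : Set (RmaxVec n), W = mpOrtho V) ↔
      (IsClosed W ∧ IsSubsemimodulePair W) ∧
      (∀ f : RmaxVec n, (f, f) ∈ W) ∧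
      (∀ f g : RmaxVec n, (f, g) ∈ W → (g, f) ∈ W) ∧
      (∀ f g h : RmaxVec n, (f, g) ∈ W → (g, h) ∈ W → (f, h) ∈ W) := by
  constructor
  · rintro ⟨V, rfl⟩
    refine ⟨⟨BiorthAux.isClosed_mpOrtho V, ?_⟩, ?_, ?_, ?_⟩
    · intro p hp q hq lam mu x hx
      show mpBracket (maxComb p.1 q.1 lam mu) x = mpBracket (maxComb p.2 q.2 lam mu) x
      rw [BiorthAux.bracket_maxComb, BiorthAux.bracket_maxComb, hp x hx, hq x hx]
    · intro f x hx; rfl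
    · intro f g hfg x hx; exact (hfg x hx).symm
    · intro f g h hfg hgh x hx; exact (hfg x hx).trans (hgh x hx)
  · rintro ⟨⟨hcl, hmod⟩, hrefl, hsymm, htrans⟩
    refine ⟨mpTop W, Set.Subset.antisymm ?_ ?_⟩
    · intro p hp x hx
      exact hx p hp
    · exact BiorthAux.ortho_top_subset hcl hmod hrefl hsymm htrans
end
end

section
/- A subsemimodule W ⊆ (ℝmax^n)^2 is a closed polar cone if, and only if, W = (W⋄)°. -/
open scoped Classical

noncomputable section

-- auxiliary development
namespace TropAux

lemma add_coe_le_add_coe_iff (a b : Rmax) (r : ℝ) : a + (r : Rmax) ≤ b + (r : Rmax) ↔ a ≤ b := by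
  induction a using WithBot.recBotCoe with
  | bot => simp [WithBot.bot_add]
  | coe x =>
    induction b using WithBot.recBotCoe with
    | bot => simp [WithBot.bot_add, ← WithBot.coe_add]
    | coe y =>
      rw [← WithBot.coe_add, ← WithBot.coe_add, WithBot.coe_le_coe, WithBot.coe_le_coe]
      exact add_le_add_iff_right r

def addRIso (r : ℝ) : Rmax ≃o Rmax where
  toFun a := a + (r : Rmax)
  invFun a := a + ((-r : ℝ) : Rmax)
  left_inv a := by
    induction a using WithBot.recBotCoe with
    | bot => simp [WithBot.bot_add]
    | coe x => show (↑x + ↑r + ↑(-r) : Rmax) = ↑x; rw [← WithBot.coe_add, ← WithBot.coe_add]; norm_num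
  right_inv a := by
    induction a using WithBot.recBotCoe with
    | bot => simp [WithBot.bot_add]
    | coe x => show (↑x + ↑(-r) + ↑r : Rmax) = ↑x; rw [← WithBot.coe_add, ← WithBot.coe_add]; norm_num
  map_rel_iff' {a b} := add_coe_le_add_coe_iff a b r

lemma continuous_add_const (c : Rmax) : Continuous (fun a : Rmax => a + c) := by
  induction c using WithBot.recBotCoe with
  | bot => simpa [WithBot.add_bot] using (continuous_const : Continuous fun _ : Rmax => (⊥ : Rmax))
  | coe r => exact (addRIso r).continuous

lemma monotone_add_const (c : Rmax) : Monotone (fun a : Rmax => a + c) :=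
  fun _ _ h => add_le_add_left h c

lemma continuous_mpBracket {n : ℕ} (x : RmaxVec n) :
    Continuous (fun u : RmaxVec n => mpBracket u x) := by
  have : ∀ s : Finset (Fin n), Continuous (fun u : RmaxVec n => s.sup fun i => u i + x i) := by
    intro s
    induction s using Finset.induction_on with
    | empty => simpa using (continuous_const : Continuous fun _ : RmaxVec n => (⊥ : Rmax))
    | insert _ _ _ ih =>
      simp only [Finset.sup_insert]
      exact Continuous.max ((continuous_add_const _).comp (continuous_apply _)) ih
  exact this Finset.univ

lemma le_mpBracket {n : ℕ} (y x : RmaxVec n) (i : Fin n) : y i + x i ≤ mpBracket y x :=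
  Finset.le_sup (f := fun i => y i + x i) (Finset.mem_univ i)

lemma mpBracket_le {n : ℕ} {y x : RmaxVec n} {c : Rmax} (h : ∀ i, y i + x i ≤ c) :
    mpBracket y x ≤ c := Finset.sup_le fun i _ => h i

lemma mpBracket_mono {n : ℕ} {u v : RmaxVec n} (x : RmaxVec n) (h : u ≤ v) :
    mpBracket u x ≤ mpBracket v x :=
  Finset.sup_mono_fun fun i _ => add_le_add_left (h i) _

lemma mpBracket_maxComb {n : ℕ} (u v x : RmaxVec n) (lam mu : Rmax) :
    mpBracket (maxComb u v lam mu) x = max (mpBracket u x + lam) (mpBracket v x + mu) := by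
  unfold mpBracket maxComb
  have h1 : (Finset.univ : Finset (Fin n)).sup (fun i => max (u i + lam) (v i + mu) + x i)
      = (Finset.univ : Finset (Fin n)).sup
        (fun i => max ((u i + x i) + lam) ((v i + x i) + mu)) := by
    apply Finset.sup_congr rfl
    intro i _
    rw [(monotone_add_const (x i)).map_max]
    congr 1 <;> exact add_right_comm _ _ _
  rw [h1]
  have h2 : (Finset.univ : Finset (Fin n)).sup
        (fun i => max ((u i + x i) + lam) ((v i + x i) + mu))
      = max ((Finset.univ : Finset (Fin n)).sup fun i => (u i + x i) + lam)
          ((Finset.univ : Finset (Fin n)).sup fun i => (v i + x i) + mu) :=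
    Finset.sup_sup
  rw [h2]
  congr 1
  · exact (Finset.comp_sup_eq_sup_comp (fun a => a + lam)
      (fun a b => (monotone_add_const lam).map_max) (WithBot.bot_add lam)).symm
  · exact (Finset.comp_sup_eq_sup_comp (fun a => a + mu)
      (fun a b => (monotone_add_const mu).map_max) (WithBot.bot_add mu)).symm



variable {n : ℕ}

def delta {n : ℕ} (j : Fin n) (t : Rmax) : RmaxVec n := fun i => if i = j then t else ⊥

lemma delta_le {j : Fin n} {t : Rmax} {u : RmaxVec n} (h : t ≤ u j) : delta j t ≤ u := by
  intro i
  dsimp [delta]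
  by_cases hij : i = j
  · subst hij; simp only [if_pos rfl]; exact h
  · simp [hij]

lemma delta_mono (j : Fin n) {s t : Rmax} (h : s ≤ t) : delta j s ≤ delta j t := by
  intro i
  dsimp [delta]
  by_cases hij : i = j <;> simp [hij, h]

lemma scale_mem {W : Set (RmaxVec n × RmaxVec n)} (hW : IsSubsemimodulePair W)
    {p : RmaxVec n × RmaxVec n} (hp : p ∈ W) (lam : Rmax) :
    ((fun i => p.1 i + lam), (fun i => p.2 i + lam)) ∈ W := by
  have h := hW p hp p hp lam lam
  have e1 : maxComb p.1 p.1 lam lam = fun i => p.1 i + lam := by funext i; simp [maxComb]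
  have e2 : maxComb p.2 p.2 lam lam = fun i => p.2 i + lam := by funext i; simp [maxComb]
  rwa [e1, e2] at h

lemma sup_mem {W : Set (RmaxVec n × RmaxVec n)} (hW : IsSubsemimodulePair W)
    (horder : ∀ u v : RmaxVec n, u ≤ v → (u, v) ∈ W)
    (τ w : RmaxVec n) (h : ∀ j, (delta j (τ j), w) ∈ W) : (τ, w) ∈ W := by
  have key : ∀ s : Finset (Fin n), ((fun i => if i ∈ s then τ i else ⊥), w) ∈ W := by
    intro s
    induction s using Finset.induction_on with
    | empty =>
      refine horder _ _ ?_
      intro i; simp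
    | @insert j s hj ih =>
      have h2 := hW _ (h j) _ ih (0 : Rmax) (0 : Rmax)
      have e1 : maxComb (delta j (τ j)) (fun i => if i ∈ s then τ i else ⊥) 0 0
          = fun i => if i ∈ insert j s then τ i else ⊥ := by
        funext i
        by_cases hij : i = j
        · subst hij; simp [maxComb, delta, hj]
        · by_cases his : i ∈ s <;> simp [maxComb, delta, hij, his]
      have e2 : maxComb w w 0 0 = w := by funext i; simp [maxComb]
      rw [e1, e2] at h2
      exact h2
  simpa using key Finset.univ

lemma exists_sup_of_closed {T : Set Rmax} (hT : IsClosed T)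
    (hdown : ∀ {t1 t2 : Rmax}, t1 ≤ t2 → t2 ∈ T → t1 ∈ T)
    {s0 : ℝ} (hs0 : (s0 : Rmax) ∈ T) {M : ℝ} (hM : (M : Rmax) ∉ T) :
    ∃ ν : ℝ, (ν : Rmax) ∈ T ∧ ∀ t : ℝ, (t : Rmax) ∈ T → t ≤ ν := by
  set R : Set ℝ := {t : ℝ | (t : Rmax) ∈ T} with hR
  have hub : ∀ t ∈ R, t ≤ M := by
    intro t ht
    by_contra hlt
    exact hM (hdown (by exact_mod_cast le_of_lt (lt_of_not_ge hlt)) ht)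
  have hne : R.Nonempty := ⟨s0, hs0⟩
  have hbdd : BddAbove R := ⟨M, hub⟩
  refine ⟨sSup R, ?_, fun t ht => le_csSup hbdd ht⟩
  have hcls : (↑(sSup R) : Rmax) ∈ closure T := by
    rw [mem_closure_iff_nhds]
    intro U hU
    obtain ⟨l, hl, hsub⟩ := exists_Ioc_subset_of_mem_nhds hU ⟨⊥, WithBot.bot_lt_coe _⟩
    induction l using WithBot.recBotCoe with
    | bot =>
      exact ⟨(s0 : Rmax), hsub ⟨WithBot.bot_lt_coe _, by exact_mod_cast le_csSup hbdd hs0⟩, hs0⟩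
    | coe s =>
      have hs : s < sSup R := by exact_mod_cast hl
      obtain ⟨t, htR, hst⟩ := exists_lt_of_lt_csSup hne hs
      exact ⟨(t : Rmax), hsub ⟨by exact_mod_cast hst, by exact_mod_cast le_csSup hbdd htR⟩, htR⟩
  rwa [hT.closure_eq] at hcls



lemma sup_coe_cases (c : Rmax) (x : ℝ) :
    ∃ m : ℝ, c ⊔ ((x : ℝ) : Rmax) = ((m : ℝ) : Rmax) ∧ c ≤ ((m : ℝ) : Rmax) := by
  induction c using WithBot.recBotCoe with
  | bot => exact ⟨x, bot_sup_eq _, bot_le⟩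
  | coe s =>
    refine ⟨max s x, ?_, by exact_mod_cast le_max_left s x⟩
    rw [← WithBot.coe_sup]

lemma separation {W : Set (RmaxVec n × RmaxVec n)} (hcl : IsClosed W) (hW : IsSubsemimodulePair W)
    (htrans : ∀ f g h : RmaxVec n, (f, g) ∈ W → (g, h) ∈ W → (f, h) ∈ W)
    (horder : ∀ u v : RmaxVec n, u ≤ v → (u, v) ∈ W)
    {f g : RmaxVec n} (hfg : (f, g) ∉ W) :
    ∃ y ∈ mpDiamond W, ¬ mpBracket f y ≤ mpBracket g y := by
  classical
  -- continuity of t ↦ (delta j t, w)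
  have hcontdelta : ∀ (j : Fin n) (w : RmaxVec n), Continuous (fun t : Rmax => (delta j t, w)) := by
    intro j w
    refine Continuous.prodMk (continuous_pi ?_) continuous_const
    intro i
    by_cases hij : i = j
    · simpa [delta, hij] using (continuous_id' : Continuous fun t : Rmax => t)
    · simpa [delta, hij] using (continuous_const : Continuous fun _ : Rmax => (⊥ : Rmax))
  have hdown : ∀ (j : Fin n) (w : RmaxVec n) {t1 t2 : Rmax}, t1 ≤ t2 →
      (delta j t2, w) ∈ W → (delta j t1, w) ∈ W := by
    intro j w t1 t2 h12 h2
    exact htrans _ _ _ (horder _ _ (delta_mono j h12)) h2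
  -- Step 1: a coordinate i0 where the unit below f is not W-related to g
  have hex_i0 : ∃ i0 : Fin n, (delta i0 (f i0), g) ∉ W := by
    by_contra hall
    push_neg at hall
    exact hfg (sup_mem hW horder f g hall)
  obtain ⟨i0, hi0⟩ := hex_i0
  obtain ⟨r, hr⟩ : ∃ r : ℝ, f i0 = (r : Rmax) := by
    rcases hb : f i0 with _ | r
    · exfalso
      refine hi0 (horder _ _ (delta_le ?_))
      rw [hb]; exact bot_le
    · exact ⟨r, rfl⟩
  -- Step 1b: a real t' < r with (delta i0 t', g) ∉ W
  have hTopen : IsOpen {t : Rmax | (delta i0 t, g) ∉ W} := by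
    have : {t : Rmax | (delta i0 t, g) ∉ W} = ((fun t : Rmax => (delta i0 t, g)) ⁻¹' W)ᶜ := rfl
    rw [this]
    exact (hcl.preimage (hcontdelta i0 g)).isOpen_compl
  have hrmem : (r : Rmax) ∈ {t : Rmax | (delta i0 t, g) ∉ W} := by rw [← hr]; exact hi0
  obtain ⟨l, hl, hsub⟩ :=
    exists_Ioc_subset_of_mem_nhds (hTopen.mem_nhds hrmem) ⟨⊥, WithBot.bot_lt_coe r⟩
  obtain ⟨t', ht'r, ht'notT⟩ : ∃ t' : ℝ, t' < r ∧ (delta i0 ((t' : ℝ) : Rmax), g) ∉ W := by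
    induction l using WithBot.recBotCoe with
    | bot =>
      refine ⟨r - 1, by linarith, hsub ⟨WithBot.bot_lt_coe _, ?_⟩⟩
      exact_mod_cast (by linarith : r - 1 ≤ r)
    | coe s =>
      have hs : s < r := by exact_mod_cast hl
      refine ⟨(s + r) / 2, by linarith, hsub ⟨?_, ?_⟩⟩
      · exact_mod_cast (by linarith : s < (s + r) / 2)
      · exact_mod_cast (by linarith : (s + r) / 2 ≤ r)
  -- Step 2: push it to a truncation g_N of g
  set gN : ℕ → RmaxVec n := fun N j => g j ⊔ ((-(N : ℝ) : ℝ) : Rmax) with hgNdef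
  have hkeylim : ∀ c : Rmax,
      Filter.Tendsto (fun N : ℕ => c ⊔ ((-(N : ℝ) : ℝ) : Rmax)) Filter.atTop (nhds c) := by
    intro c
    induction c using WithBot.recBotCoe with
    | bot =>
      have hbot : ∀ N : ℕ, (⊥ : Rmax) ⊔ ((-(N : ℝ) : ℝ) : Rmax) = ((-(N : ℝ) : ℝ) : Rmax) :=
        fun N => bot_sup_eq _
      refine Filter.Tendsto.congr (fun N => (hbot N).symm) ?_
      rw [nhds_bot_order, Filter.tendsto_iInf]
      intro l
      rw [Filter.tendsto_iInf]
      intro hl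
      rw [Filter.tendsto_principal]
      induction l using WithBot.recBotCoe with
      | bot => exact absurd hl (lt_irrefl _)
      | coe sl =>
        obtain ⟨N0, hN0⟩ := exists_nat_gt (-sl)
        filter_upwards [Filter.eventually_ge_atTop N0] with N hN
        rw [Set.mem_Iio, WithBot.coe_lt_coe]
        have h2 : (N0 : ℝ) ≤ N := by exact_mod_cast hN
        linarith
    | coe s =>
      have hev : ∀ᶠ N : ℕ in Filter.atTop,
          ((s : ℝ) : Rmax) ⊔ ((-(N : ℝ) : ℝ) : Rmax) = ((s : ℝ) : Rmax) := by
        obtain ⟨N0, hN0⟩ := exists_nat_gt (-s)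
        filter_upwards [Filter.eventually_ge_atTop N0] with N hN
        rw [sup_eq_left, WithBot.coe_le_coe]
        have h2 : (N0 : ℝ) ≤ N := by exact_mod_cast hN
        linarith
      exact Filter.Tendsto.congr' (hev.mono fun N h => h.symm) tendsto_const_nhds
  have hgNlim : Filter.Tendsto gN Filter.atTop (nhds g) := by
    rw [tendsto_pi_nhds]
    intro j
    exact hkeylim (g j)
  have hexN : ∃ N : ℕ, (delta i0 ((t' : ℝ) : Rmax), gN N) ∉ W := by
    by_contra hall
    push_neg at hall
    exact ht'notT (hcl.mem_of_tendsto (Filter.Tendsto.prodMk_nhds tendsto_const_nhds hgNlim)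
      (Filter.Eventually.of_forall hall))
  obtain ⟨N, hN⟩ := hexN
  set w0 : RmaxVec n := gN N with hw0
  -- per-coordinate residual sets
  have hTclosed : ∀ j : Fin n, IsClosed {t : Rmax | (delta j t, w0) ∈ W} :=
    fun j => hcl.preimage (hcontdelta j w0)
  have hbase : ∀ j : Fin n, ((-(N : ℝ) : ℝ) : Rmax) ∈ {t : Rmax | (delta j t, w0) ∈ W} := by
    intro j
    refine horder _ _ (delta_le ?_)
    show ((-(N : ℝ) : ℝ) : Rmax) ≤ g j ⊔ ((-(N : ℝ) : ℝ) : Rmax)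
    exact le_sup_right
  set P : Fin n → Prop := fun j => ∀ M : ℝ, (delta j ((M : ℝ) : Rmax), w0) ∈ W with hPdef
  have hexnu : ∀ j : Fin n, ∃ ν : ℝ, ¬ P j →
      ((delta j ((ν : ℝ) : Rmax), w0) ∈ W ∧
        ∀ t : ℝ, (delta j ((t : ℝ) : Rmax), w0) ∈ W → t ≤ ν) := by
    intro j
    by_cases hPj : P j
    · exact ⟨0, fun h => absurd hPj h⟩
    · rw [hPdef] at hPj
      obtain ⟨M, hM⟩ := not_forall.mp hPj
      obtain ⟨ν, h1, h2⟩ := exists_sup_of_closed (hTclosed j)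
        (fun h12 h2 => hdown j w0 h12 h2) (hbase j) hM
      exact ⟨ν, fun _ => ⟨h1, h2⟩⟩
  choose ν hν using hexnu
  set y : RmaxVec n := fun j => if P j then ⊥ else ((-(ν j) : ℝ) : Rmax) with hy
  have hPi0 : ¬ P i0 := fun hp => hN (hp t')
  have hνi0 : ν i0 < t' := by
    by_contra hge
    exact hN (hdown i0 w0 (by exact_mod_cast le_of_not_gt hge) (hν i0 hPi0).1)
  -- the bracket with g is ≤ 0
  have hgy : mpBracket g y ≤ ((0 : ℝ) : Rmax) := by
    apply mpBracket_le
    intro j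
    by_cases hPj : P j
    · have hyj : y j = ⊥ := if_pos hPj
      rw [hyj, WithBot.add_bot]; exact bot_le
    · have hyj : y j = ((-(ν j) : ℝ) : Rmax) := if_neg hPj
      obtain ⟨m, hm, hgm⟩ := sup_coe_cases (g j) (-(N : ℝ))
      have hw0j : w0 j = ((m : ℝ) : Rmax) := hm
      have hmT : (delta j ((m : ℝ) : Rmax), w0) ∈ W := by
        rw [← hw0j]; exact horder _ _ (delta_le le_rfl)
      have hmle : m ≤ ν j := (hν j hPj).2 m hmT
      rw [hyj]
      calc g j + ((-(ν j) : ℝ) : Rmax) ≤ (m : Rmax) + ((-(ν j) : ℝ) : Rmax) :=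
            add_le_add_left hgm _
        _ = ((m + -(ν j) : ℝ) : Rmax) := (WithBot.coe_add _ _).symm
        _ ≤ ((0 : ℝ) : Rmax) := by exact_mod_cast (by linarith : m + -(ν j) ≤ (0 : ℝ))
  -- strict separation at (f, g)
  have hfy : ¬ mpBracket f y ≤ mpBracket g y := by
    intro hle
    have h1 : f i0 + y i0 ≤ ((0 : ℝ) : Rmax) :=
      le_trans (le_trans (le_mpBracket f y i0) hle) hgy
    have hyi0 : y i0 = ((-(ν i0) : ℝ) : Rmax) := if_neg hPi0
    rw [hr, hyi0, ← WithBot.coe_add] at h1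
    have : r + -(ν i0) ≤ 0 := by exact_mod_cast h1
    linarith
  -- y belongs to the diamond
  have hyD : y ∈ mpDiamond W := by
    intro p hp
    apply mpBracket_le
    intro i
    by_cases hPi : P i
    · have hyi : y i = ⊥ := if_pos hPi
      rw [hyi, WithBot.add_bot]; exact bot_le
    · have hyi : y i = ((-(ν i) : ℝ) : Rmax) := if_neg hPi
      by_cases hbi : p.1 i = ⊥
      · rw [hbi, WithBot.bot_add]; exact bot_le
      · obtain ⟨a, ha⟩ := WithBot.ne_bot_iff_exists.mp hbi
        rw [hyi, ← ha, ← WithBot.coe_add]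
        by_contra hcon
        rw [not_le] at hcon
        set e : ℝ := a + -(ν i) with he
        have hvj : ∀ j : Fin n, ¬ P j → ∀ b : ℝ, p.2 j = ((b : ℝ) : Rmax) → b - ν j < e := by
          intro j hPj b hb
          have hj := le_mpBracket p.2 y j
          have hyj : y j = ((-(ν j) : ℝ) : Rmax) := if_neg hPj
          rw [hb, hyj, ← WithBot.coe_add] at hj
          have hlt := lt_of_le_of_lt hj hcon
          have : b + -(ν j) < e := by exact_mod_cast hlt
          linarith
        have hune : (Finset.univ : Finset (Fin n)).Nonempty := ⟨i, Finset.mem_univ i⟩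
        set F : Fin n → ℝ :=
          fun j => if ¬ P j ∧ p.2 j ≠ ⊥ then e + ν j - WithBot.unbotD 0 (p.2 j) else 1 with hF
        set ε : ℝ := Finset.univ.inf' hune F with hεdef
        have hεpos : 0 < ε := by
          rw [hεdef, Finset.lt_inf'_iff]
          intro j _
          by_cases hcond : ¬ P j ∧ p.2 j ≠ ⊥
          · have hFj : F j = e + ν j - WithBot.unbotD 0 (p.2 j) := if_pos hcond
            rw [hFj]
            obtain ⟨hPj, hbj⟩ := hcond
            obtain ⟨b, hb⟩ := WithBot.ne_bot_iff_exists.mp hbj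
            have hlt := hvj j hPj b hb.symm
            rw [← hb, WithBot.unbotD_coe]
            linarith
          · have hFj : F j = 1 := if_neg hcond
            rw [hFj]; norm_num
        have hεle : ∀ j, ¬ P j → ∀ b : ℝ, p.2 j = ((b : ℝ) : Rmax) → b + (ε - e) ≤ ν j := by
          intro j hPj b hb
          have h1 : ε ≤ F j := by rw [hεdef]; exact Finset.inf'_le F (Finset.mem_univ j)
          have hFj : F j = e + ν j - WithBot.unbotD 0 (p.2 j) :=
            if_pos ⟨hPj, by rw [hb]; exact WithBot.coe_ne_bot⟩
          rw [hFj, hb, WithBot.unbotD_coe] at h1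
          linarith
        set lam : Rmax := ((ε - e : ℝ) : Rmax) with hlam
        set τ : RmaxVec n := fun j => if P j then p.2 j + lam else ((ν j : ℝ) : Rmax) with hτ
        have hτmem : ∀ j, (delta j (τ j), w0) ∈ W := by
          intro j
          by_cases hPj : P j
          · have hτj : τ j = p.2 j + lam := if_pos hPj
            by_cases hbj : p.2 j = ⊥
            · have : τ j = ⊥ := by rw [hτj, hbj, WithBot.bot_add]
              rw [this]; exact horder _ _ (delta_le bot_le)
            · obtain ⟨b, hb⟩ := WithBot.ne_bot_iff_exists.mp hbj
              have : τ j = ((b + (ε - e) : ℝ) : Rmax) := by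
                rw [hτj, ← hb, hlam, ← WithBot.coe_add]
              rw [this]; exact hPj (b + (ε - e))
          · have hτj : τ j = ((ν j : ℝ) : Rmax) := if_neg hPj
            rw [hτj]; exact (hν j hPj).1
        have hτW : (τ, w0) ∈ W := sup_mem hW horder τ w0 hτmem
        have hvle : (fun j => p.2 j + lam) ≤ τ := by
          intro j
          by_cases hPj : P j
          · have hτj : τ j = p.2 j + lam := if_pos hPj
            rw [hτj]
          · have hτj : τ j = ((ν j : ℝ) : Rmax) := if_neg hPj
            by_cases hbj : p.2 j = ⊥
            · show p.2 j + lam ≤ τ j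
              rw [hbj, WithBot.bot_add]; exact bot_le
            · obtain ⟨b, hb⟩ := WithBot.ne_bot_iff_exists.mp hbj
              show p.2 j + lam ≤ τ j
              rw [hτj, ← hb, hlam, ← WithBot.coe_add]
              exact_mod_cast hεle j hPj b hb.symm
        have h1 := scale_mem hW hp lam
        have h2 : ((fun j => p.1 j + lam), τ) ∈ W := htrans _ _ _ h1 (horder _ _ hvle)
        have h3 : ((fun j => p.1 j + lam), w0) ∈ W := htrans _ _ _ h2 hτW
        have h4 : (delta i (((a + (ε - e) : ℝ)) : Rmax), w0) ∈ W := by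
          refine htrans _ _ _ (horder _ _ (delta_le ?_)) h3
          show ((a + (ε - e) : ℝ) : Rmax) ≤ p.1 i + lam
          rw [← ha, hlam, ← WithBot.coe_add]
        have h5 : a + (ε - e) ≤ ν i := (hν i hPi).2 _ h4
        rw [he] at h5
        linarith
  exact ⟨y, hyD, hfy⟩

lemma mpPolar_closed (V : Set (RmaxVec n)) : IsClosed (mpPolar V) := by
  have h : mpPolar V
      = ⋂ x ∈ V, {p : RmaxVec n × RmaxVec n | mpBracket p.1 x ≤ mpBracket p.2 x} := by
    ext p; simp [mpPolar]
  rw [h]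
  exact isClosed_biInter fun x _ => isClosed_le
    ((continuous_mpBracket x).comp continuous_fst) ((continuous_mpBracket x).comp continuous_snd)

lemma mpPolar_polarCone (V : Set (RmaxVec n)) : IsPolarCone (mpPolar V) := by
  refine ⟨⟨?_, ?_, ?_⟩, ?_⟩
  · intro p hp q hq lam mu x hx
    rw [mpBracket_maxComb, mpBracket_maxComb]
    exact max_le_max (add_le_add_left (hp x hx) _) (add_le_add_left (hq x hx) _)
  · intro f x hx; exact le_rfl
  · intro f g h h1 h2 x hx; exact le_trans (h1 x hx) (h2 x hx)
  · intro f g hfg x hx; exact mpBracket_mono x hfg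

end TropAux

/-- Theorem 4.6 of the paper, polar-cone part: a subsemimodule
`W ⊆ (ℝmax^n)²` is a closed polar cone if, and only if, `W = (W⋄)°`. -/


theorem closed_polar_cone_iff_bipolar (n : ℕ) (W : Set (RmaxVec n × RmaxVec n))
    (hW : IsSubsemimodulePair W) :
    (IsClosed W ∧ IsPolarCone W) ↔ W = mpPolar (mpDiamond W) := by
  constructor
  · rintro ⟨hcl, ⟨⟨hsub, hdiag, htrans⟩, horder⟩⟩
    apply Set.Subset.antisymm
    · intro p hp x hx
      exact hx p hp
    · intro p hp
      by_contra hpW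
      obtain ⟨y, hy, hlt⟩ := TropAux.separation hcl hW htrans horder
        (f := p.1) (g := p.2) (by rwa [Prod.mk.eta])
      exact hlt (hp y hy)
  · intro h
    constructor
    · rw [h]; exact TropAux.mpPolar_closed _
    · rw [h]; exact TropAux.mpPolar_polarCone _
end
end

section
/- A subsemimodule W ⊆ (ℝmax^n)^2 is a closed congruence if, and only if, W = (W⊤)⊥. -/
open scoped Classical

noncomputable section

/- ---------- basic algebra ---------- -/



lemma max_add_dist (a b c : Rmax) : max a b + c = max (a + c) (b + c) := by
  rcases le_total a b with h | h
  · rw [max_eq_right h, max_eq_right (add_le_add_left h c)]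
  · rw [max_eq_left h, max_eq_left (add_le_add_left h c)]

lemma le_coe_forall (c : Rmax) (h : ∀ T : ℝ, c ≤ (T : Rmax)) : c = ⊥ := by
  induction c using WithBot.recBotCoe with
  | bot => rfl
  | coe s => exact absurd (WithBot.coe_le_coe.mp (h (s - 1))) (by linarith)

lemma shift_le (a c : Rmax) (T : ℝ) (h : a + (T : Rmax) + c ≤ 0) : a + c ≤ ((-T : ℝ) : Rmax) := by
  induction a using WithBot.recBotCoe with
  | bot => simp
  | coe s =>
    induction c using WithBot.recBotCoe with
    | bot => simp
    | coe u =>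
      rw [← WithBot.coe_add, ← WithBot.coe_add, ← WithBot.coe_zero, WithBot.coe_le_coe] at h
      rw [← WithBot.coe_add, WithBot.coe_le_coe]
      linarith

lemma rmax_cases (a : Rmax) : a = ⊥ ∨ ∃ r : ℝ, a = (r : Rmax) := by
  induction a using WithBot.recBotCoe with
  | bot => exact Or.inl rfl
  | coe r => exact Or.inr ⟨r, rfl⟩

lemma maxComb_zero {n : ℕ} (x y : RmaxVec n) :
    maxComb x y 0 0 = fun i => max (x i) (y i) := by
  funext i; simp [maxComb]

lemma maxComb_self {n : ℕ} (x : RmaxVec n) (c : Rmax) :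
    maxComb x x c c = fun i => x i + c := by
  funext i; simp [maxComb]

/- ---------- the core separation lemma ---------- -/

lemma core_sep {n : ℕ} {W : Set (RmaxVec n × RmaxVec n)}
    (hW : IsSubsemimodulePair W)
    (hdiag : ∀ f : RmaxVec n, (f, f) ∈ W)
    (htrans : ∀ f g h : RmaxVec n, (f, g) ∈ W → (g, h) ∈ W → (f, h) ∈ W)
    (hsym : ∀ f g : RmaxVec n, (f, g) ∈ W → (g, f) ∈ W)
    (hcl : IsClosed W)
    (F G : RmaxVec n) (hG : ∀ i, G i ≠ ⊥) (hGF : ∀ i, G i ≤ F i)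
    (hFG : (F, G) ∉ W) :
    ∃ x : RmaxVec n, (∀ p ∈ W, mpBracket p.1 x = mpBracket p.2 x) ∧
      mpBracket G x < mpBracket F x := by
  classical
  -- join with G
  set jG : RmaxVec n → RmaxVec n := fun a => fun i => max (a i) (G i) with hjG
  have Wjoin : ∀ {a b c d : RmaxVec n}, (a, b) ∈ W → (c, d) ∈ W →
      ((fun i => max (a i) (c i)), fun i => max (b i) (d i)) ∈ W := by
    intro a b c d h1 h2
    have := hW (a, b) h1 (c, d) h2 0 0
    simpa [maxComb_zero] using this
  have Wscale : ∀ {a b : RmaxVec n}, (a, b) ∈ W → ∀ c : Rmax,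
      ((fun i => a i + c), fun i => b i + c) ∈ W := by
    intro a b h c
    have := hW (a, b) h (a, b) h c c
    simpa [maxComb_self] using this
  set D : Set (RmaxVec n) := {a | (jG a, G) ∈ W} with hD
  have hGmem : G ∈ D := by
    have : jG G = G := by funext i; simp [hjG]
    simp only [hD, Set.mem_setOf_eq, this]
    exact hdiag G
  have hDlower : ∀ a b : RmaxVec n, (∀ i, a i ≤ b i) → b ∈ D → a ∈ D := by
    intro a b hab hb
    have h1 : (jG b, G) ∈ W := hb
    have h3 := Wjoin h1 (hdiag (jG a))
    have e1 : (fun i => max (jG b i) (jG a i)) = jG b := by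
      funext i
      show max (max (b i) (G i)) (max (a i) (G i)) = max (b i) (G i)
      exact max_eq_left (max_le_max (hab i) le_rfl)
    have e2 : (fun i => max (G i) (jG a i)) = jG a := by
      funext i
      show max (G i) (max (a i) (G i)) = max (a i) (G i)
      exact max_eq_right (le_max_right _ _)
    rw [e1, e2] at h3
    exact htrans _ _ _ (hsym _ _ h3) h1
  have hDjoin : ∀ a b : RmaxVec n, a ∈ D → b ∈ D →
      (fun i => max (a i) (b i)) ∈ D := by
    intro a b ha hb
    have h3 := Wjoin (show (jG a, G) ∈ W from ha) (show (jG b, G) ∈ W from hb)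
    have e1 : (fun i => max (jG a i) (jG b i)) = jG (fun i => max (a i) (b i)) := by
      funext i
      show max (max (a i) (G i)) (max (b i) (G i)) = max (max (a i) (b i)) (G i)
      rw [max_max_max_comm, max_self]
    have e2 : (fun i => max (G i) (G i)) = G := by funext i; rw [max_self]
    rw [e1, e2] at h3
    exact h3
  have hDchain : ∀ {a b : RmaxVec n}, (a, b) ∈ W → ∀ c : ℝ,
      (fun i => b i + (c : Rmax)) ∈ D → (fun i => a i + (c : Rmax)) ∈ D := by
    intro a b hab c hbc
    have h1 := Wscale hab (c : Rmax)
    have h2 := Wjoin h1 (hdiag G)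
    exact htrans _ _ _ h2 hbc
  have hDclosed : IsClosed D := by
    have hcont : Continuous (fun a : RmaxVec n => ((jG a, G) : RmaxVec n × RmaxVec n)) := by
      refine Continuous.prodMk ?_ continuous_const
      exact continuous_pi fun i => ((continuous_apply i).max continuous_const)
    exact hcl.preimage hcont
  -- the sets T j
  set T : Fin n → Set ℝ := fun j => {r | ∃ a ∈ D, (r : Rmax) ≤ a j} with hT
  have hTne : ∀ j, (T j).Nonempty := by
    intro j
    obtain ⟨ρ, hρ⟩ := WithBot.ne_bot_iff_exists.mp (hG j)
    exact ⟨ρ, G, hGmem, le_of_eq hρ⟩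
  have hTdc : ∀ j, ∀ r r' : ℝ, r' ≤ r → r ∈ T j → r' ∈ T j := by
    intro j r r' hle ⟨a, ha, hr⟩
    exact ⟨a, ha, le_trans (WithBot.coe_le_coe.mpr hle) hr⟩
  have hTall : ∀ j, ¬BddAbove (T j) → ∀ r : ℝ, r ∈ T j := by
    intro j hb r
    obtain ⟨y, hy, hry⟩ := not_bddAbove_iff.mp hb r
    exact hTdc j y r (le_of_lt hry) hy
  set x : RmaxVec n := fun j => if BddAbove (T j) then ((-sSup (T j) : ℝ) : Rmax) else ⊥ with hx
  have hx1 : ∀ j, BddAbove (T j) → x j = ((-sSup (T j) : ℝ) : Rmax) := by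
    intro j hb; simp only [hx]; rw [if_pos hb]
  have hx2 : ∀ j, ¬BddAbove (T j) → x j = ⊥ := by
    intro j hb; simp only [hx]; rw [if_neg hb]
  have hxbot : ∀ j, x j = ⊥ → ¬BddAbove (T j) := by
    intro j hj hb
    rw [hx1 j hb] at hj; exact WithBot.coe_ne_bot hj
  have lem_i : ∀ a ∈ D, ∀ j, a j + x j ≤ 0 := by
    intro a ha j
    by_cases hb : BddAbove (T j)
    · rw [hx1 j hb]
      rcases rmax_cases (a j) with ha' | ⟨r, ha'⟩
      · rw [ha']; simp
      · have hr : r ∈ T j := ⟨a, ha, le_of_eq ha'.symm⟩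
        have hrs := le_csSup hb hr
        rw [ha', ← WithBot.coe_add, ← WithBot.coe_zero, WithBot.coe_le_coe]
        linarith
    · rw [hx2 j hb]; simp
  have lem_P : ∀ h : RmaxVec n, (∀ j (r : ℝ), (r : Rmax) < h j → r ∈ T j) → h ∈ D := by
    intro h hP
    set ε : ℕ → ℝ := fun k => 1 / ((k : ℝ) + 1) with hε
    have hεpos : ∀ k, 0 < ε k := by intro k; rw [hε]; positivity
    have hchoice : ∀ k : ℕ, ∃ a ∈ D, ∀ i, h i + ((-ε k : ℝ) : Rmax) ≤ a i := by
      intro k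
      have hc : ∀ j : Fin n, ∃ a ∈ D, h j + ((-ε k : ℝ) : Rmax) ≤ a j := by
        intro j
        rcases rmax_cases (h j) with hh | ⟨ρ, hh⟩
        · exact ⟨G, hGmem, by rw [hh]; simp⟩
        · have hlt : (↑(ρ - ε k) : Rmax) < h j := by
            rw [hh]; exact WithBot.coe_lt_coe.mpr (by have := hεpos k; linarith)
          obtain ⟨a, ha, har⟩ := hP j _ hlt
          refine ⟨a, ha, ?_⟩
          have harw : ρ + -ε k = ρ - ε k := by ring
          rw [hh, ← WithBot.coe_add, harw]
          exact har
      choose c hcD hcle using hc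
      have hsup : ∀ s : Finset (Fin n), (fun i => max (G i) (s.sup fun j => c j i)) ∈ D := by
        intro s
        induction s using Finset.induction with
        | empty =>
          have heq : (fun i => max (G i) ((∅ : Finset (Fin n)).sup fun j => c j i)) = G := by
            funext i; simp
          rw [heq]; exact hGmem
        | insert a s hnot ih =>
          have h1 := hDjoin _ _ (hcD a) ih
          have e : (fun i => max (c a i) (max (G i) (s.sup fun j => c j i))) =
              (fun i => max (G i) ((insert a s).sup fun j => c j i)) := by
            funext i
            rw [Finset.sup_insert]
            exact max_left_comm _ _ _
          rw [e] at h1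
          exact h1
      refine ⟨_, hsup Finset.univ, ?_⟩
      intro i
      refine le_trans (hcle i) ?_
      refine le_trans (Finset.le_sup (f := fun j => c j i) (Finset.mem_univ i)) ?_
      exact le_max_right _ _
    choose aa haaD haale using hchoice
    have htend : Filter.Tendsto (fun k : ℕ => fun i => h i + ((-ε k : ℝ) : Rmax))
        Filter.atTop (nhds h) := by
      rw [tendsto_pi_nhds]
      intro i
      rcases rmax_cases (h i) with hh | ⟨ρ, hh⟩
      · have heq : (fun k : ℕ => h i + ((-ε k : ℝ) : Rmax)) = fun _ => ⊥ := by
          funext k; rw [hh]; simp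
        rw [heq, hh]; exact tendsto_const_nhds
      · have he : (fun k : ℕ => h i + ((-ε k : ℝ) : Rmax)) =
            fun k : ℕ => ((ρ - ε k : ℝ) : Rmax) := by
          funext k
          have : ρ + -ε k = ρ - ε k := by ring
          rw [hh, ← WithBot.coe_add, this]
        rw [he, hh]
        rw [tendsto_order]
        constructor
        · intro b hb
          rcases rmax_cases b with hb' | ⟨s, hb'⟩
          · rw [hb']; exact Filter.Eventually.of_forall fun k => WithBot.bot_lt_coe _
          · rw [hb'] at hb ⊢
            have hs : s < ρ := WithBot.coe_lt_coe.mp hb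
            have hten : Filter.Tendsto (fun k : ℕ => ρ - ε k) Filter.atTop (nhds ρ) := by
              have h0 : Filter.Tendsto ε Filter.atTop (nhds 0) := by
                rw [hε]; exact tendsto_one_div_add_atTop_nhds_zero_nat
              simpa using (tendsto_const_nhds (x := ρ)).sub h0
            filter_upwards [hten.eventually_const_lt hs] with k hk
            exact WithBot.coe_lt_coe.mpr hk
        · intro b hb
          refine Filter.Eventually.of_forall fun k => lt_of_lt_of_le ?_ (le_of_lt hb)
          exact WithBot.coe_lt_coe.mpr (by have := hεpos k; linarith)
    have hev : ∀ᶠ k : ℕ in Filter.atTop, (fun i => h i + ((-ε k : ℝ) : Rmax)) ∈ D :=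
      Filter.Eventually.of_forall fun k => hDlower _ _ (haale k) (haaD k)
    exact hDclosed.mem_of_tendsto htend hev
  -- x is W-invariant
  have lem_le : ∀ a b : RmaxVec n, (a, b) ∈ W → mpBracket a x ≤ mpBracket b x := by
    intro a b hab
    rcases rmax_cases (mpBracket b x) with hτ | ⟨t, hτ⟩
    case inl =>
      have hbx : ∀ j, b j + x j ≤ ⊥ := by
        intro j; rw [← hτ]; exact Finset.le_sup (f := fun i => b i + x i) (Finset.mem_univ j)
      have key : ∀ T : ℝ, mpBracket a x ≤ ((-T : ℝ) : Rmax) := by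
        intro T
        have hbD : (fun i => b i + (T : Rmax)) ∈ D := by
          refine lem_P _ ?_
          intro j r hr
          have hbj : b j ≠ ⊥ := by
            intro hbj; rw [hbj] at hr; simp at hr
          have hxj : x j = ⊥ := by
            have := hbx j
            rcases WithBot.add_eq_bot.mp (le_bot_iff.mp this) with h | h
            · exact absurd h hbj
            · exact h
          exact hTall j (hxbot j hxj) r
        have haD := hDchain hab T hbD
        refine Finset.sup_le fun j _ => ?_
        exact shift_le _ _ _ (lem_i _ haD j)
      rw [hτ, le_coe_forall (mpBracket a x) (fun T => by simpa using key (-T))]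
    case inr =>
      have hbx : ∀ j, b j + x j ≤ (t : Rmax) := by
        intro j; rw [← hτ]; exact Finset.le_sup (f := fun i => b i + x i) (Finset.mem_univ j)
      have hbD : (fun i => b i + ((-t : ℝ) : Rmax)) ∈ D := by
        refine lem_P _ ?_
        intro j r hr
        rcases rmax_cases (b j) with hbj | ⟨β, hbj⟩
        · rw [hbj] at hr; simp at hr
        · rw [hbj, ← WithBot.coe_add, WithBot.coe_lt_coe] at hr
          by_cases hbdd : BddAbove (T j)
          · have h1 := hbx j
            rw [hbj, hx1 j hbdd, ← WithBot.coe_add, WithBot.coe_le_coe] at h1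
            have hrs : r < sSup (T j) := by linarith
            obtain ⟨y, hy, hry⟩ := exists_lt_of_lt_csSup (hTne j) hrs
            exact hTdc j y r (le_of_lt hry) hy
          · exact hTall j hbdd r
      have haD := hDchain hab (-t) hbD
      rw [hτ]
      refine Finset.sup_le fun j _ => ?_
      have := shift_le (a j) (x j) (-t) (lem_i _ haD j)
      simpa using this
  have lem_xtop : ∀ p ∈ W, mpBracket p.1 x = mpBracket p.2 x := by
    intro p hp
    exact le_antisymm (lem_le _ _ hp) (lem_le _ _ (hsym _ _ hp))
  refine ⟨x, lem_xtop, ?_⟩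
  have hGle : mpBracket G x ≤ 0 := Finset.sup_le fun j _ => lem_i G hGmem j
  have hFgt : ¬mpBracket F x ≤ 0 := by
    intro hle
    have hP : ∀ j (r : ℝ), (r : Rmax) < F j → r ∈ T j := by
      intro j r hr
      have hFx : F j + x j ≤ 0 :=
        le_trans (Finset.le_sup (f := fun i => F i + x i) (Finset.mem_univ j)) hle
      by_cases hbdd : BddAbove (T j)
      · rcases rmax_cases (F j) with hFj | ⟨φ, hFj⟩
        · rw [hFj] at hr; simp at hr
        · rw [hFj] at hr
          rw [hFj, hx1 j hbdd, ← WithBot.coe_add, ← WithBot.coe_zero, WithBot.coe_le_coe] at hFx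
          have hrs : r < sSup (T j) := by
            have := WithBot.coe_lt_coe.mp hr
            linarith
          obtain ⟨y, hy, hry⟩ := exists_lt_of_lt_csSup (hTne j) hrs
          exact hTdc j y r (le_of_lt hry) hy
      · exact hTall j hbdd r
    have hFD : F ∈ D := lem_P F hP
    have : jG F = F := by funext i; exact max_eq_left (hGF i)
    have hFW : (F, G) ∈ W := by
      have h' : (jG F, G) ∈ W := hFD
      rwa [this] at h'
    exact hFG hFW
  exact lt_of_le_of_lt hGle (lt_of_not_ge hFgt)

lemma rsup_add {n : ℕ} (f : Fin n → Rmax) (c : Rmax) :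
    Finset.univ.sup f + c = Finset.univ.sup (fun i => f i + c) := by
  rw [Finset.comp_sup_eq_sup_comp (fun a => a + c)]
  · rfl
  · intro x y; exact max_add_dist x y c
  · simp

lemma rsup_max {n : ℕ} (f g : Fin n → Rmax) :
    Finset.univ.sup (fun i => max (f i) (g i)) = max (Finset.univ.sup f) (Finset.univ.sup g) := by
  apply le_antisymm
  · refine Finset.sup_le fun i _ => ?_
    exact max_le_max (Finset.le_sup (f := f) (Finset.mem_univ i))
      (Finset.le_sup (f := g) (Finset.mem_univ i))
  · refine max_le (Finset.sup_le fun i _ => ?_) (Finset.sup_le fun i _ => ?_)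
    · exact le_trans (le_max_left _ _) (Finset.le_sup (f := fun i => max (f i) (g i)) (Finset.mem_univ i))
    · exact le_trans (le_max_right _ _) (Finset.le_sup (f := fun i => max (f i) (g i)) (Finset.mem_univ i))

lemma mpBracket_maxComb {n : ℕ} (a b x : RmaxVec n) (l m : Rmax) :
    mpBracket (maxComb a b l m) x = max (mpBracket a x + l) (mpBracket b x + m) := by
  unfold mpBracket maxComb
  rw [rsup_add, rsup_add, ← rsup_max]
  congr 1; funext i
  show (max (a i + l) (b i + m)) + x i = (a i + x i + l) ⊔ (b i + x i + m)
  rw [max_add_dist, add_right_comm (a i) l (x i), add_right_comm (b i) m (x i)]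

lemma mpBracket_max {n : ℕ} (a b x : RmaxVec n) :
    mpBracket (fun i => max (a i) (b i)) x = max (mpBracket a x) (mpBracket b x) := by
  unfold mpBracket
  rw [← rsup_max]; congr 1; funext i; exact max_add_dist _ _ _

lemma mpBracket_add {n : ℕ} (a x : RmaxVec n) (c : Rmax) :
    mpBracket (fun i => a i + c) x = mpBracket a x + c := by
  unfold mpBracket; rw [rsup_add]; congr 1; funext i
  show (a i + c) + x i = a i + x i + c
  rw [add_right_comm]

lemma le_mpBracket {n : ℕ} (a x : RmaxVec n) (i : Fin n) : a i + x i ≤ mpBracket a x :=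
  Finset.le_sup (f := fun i => a i + x i) (Finset.mem_univ i)

lemma mpBracket_le {n : ℕ} {a x : RmaxVec n} {t : Rmax} (h : ∀ i, a i + x i ≤ t) :
    mpBracket a x ≤ t := Finset.sup_le fun i _ => h i

lemma cont_add_const (c : Rmax) : Continuous (fun a : Rmax => a + c) := by
  induction c using WithBot.recBotCoe with
  | bot => simpa using continuous_const (y := (⊥ : Rmax))
  | coe r =>
    let e : Rmax ≃o Rmax :=
      { toFun := fun a => a + (r : Rmax)
        invFun := fun a => a + ((-r : ℝ) : Rmax)
        left_inv := by
          intro a; induction a using WithBot.recBotCoe with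
          | bot => simp
          | coe s => push_cast [← WithBot.coe_add]; ring_nf
        right_inv := by
          intro a; induction a using WithBot.recBotCoe with
          | bot => simp
          | coe s => push_cast [← WithBot.coe_add]; ring_nf
        map_rel_iff' := by
          intro a b
          simp only [Equiv.coe_fn_mk]
          constructor
          · intro h
            induction a using WithBot.recBotCoe with
            | bot => exact bot_le
            | coe s =>
              induction b using WithBot.recBotCoe with
              | bot => simp [← WithBot.coe_add] at h
              | coe t =>
                rw [← WithBot.coe_add, ← WithBot.coe_add, WithBot.coe_le_coe] at h
                exact WithBot.coe_le_coe.mpr (by linarith)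
          · intro h; exact add_le_add_left h _ }
    exact e.continuous

lemma cont_mpBracket_fst {n : ℕ} (x : RmaxVec n) :
    Continuous (fun p : RmaxVec n × RmaxVec n => mpBracket p.1 x) := by
  unfold mpBracket
  have : ∀ s : Finset (Fin n),
      Continuous (fun p : RmaxVec n × RmaxVec n => s.sup fun i => p.1 i + x i) := by
    intro s
    induction s using Finset.induction with
    | empty => simpa using continuous_const (y := (⊥ : Rmax))
    | insert a s hnot ih =>
      have h1 : Continuous (fun p : RmaxVec n × RmaxVec n => p.1 a + x a) :=
        (cont_add_const (x a)).comp ((continuous_apply a).comp continuous_fst)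
      simpa [Finset.sup_insert] using h1.max ih
  exact this Finset.univ

lemma cont_mpBracket_snd {n : ℕ} (x : RmaxVec n) :
    Continuous (fun p : RmaxVec n × RmaxVec n => mpBracket p.2 x) := by
  unfold mpBracket
  have : ∀ s : Finset (Fin n),
      Continuous (fun p : RmaxVec n × RmaxVec n => s.sup fun i => p.2 i + x i) := by
    intro s
    induction s using Finset.induction with
    | empty => simpa using continuous_const (y := (⊥ : Rmax))
    | insert a s hnot ih =>
      have h1 : Continuous (fun p : RmaxVec n × RmaxVec n => p.2 a + x a) :=
        (cont_add_const (x a)).comp ((continuous_apply a).comp continuous_snd)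
      simpa [Finset.sup_insert] using h1.max ih
  exact this Finset.univ


lemma mpOrtho_closed {n : ℕ} (V : Set (RmaxVec n)) : IsClosed (mpOrtho V) := by
  have : mpOrtho V = ⋂ x ∈ V,
      {p : RmaxVec n × RmaxVec n | mpBracket p.1 x = mpBracket p.2 x} := by
    ext p; simp [mpOrtho, Set.mem_iInter]
  rw [this]
  refine isClosed_biInter fun x _ => ?_
  have h1 : IsClosed {p : RmaxVec n × RmaxVec n | mpBracket p.1 x ≤ mpBracket p.2 x} :=
    isClosed_le (cont_mpBracket_fst x) (cont_mpBracket_snd x)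
  have h2 : IsClosed {p : RmaxVec n × RmaxVec n | mpBracket p.2 x ≤ mpBracket p.1 x} :=
    isClosed_le (cont_mpBracket_snd x) (cont_mpBracket_fst x)
  have : {p : RmaxVec n × RmaxVec n | mpBracket p.1 x = mpBracket p.2 x} =
      {p | mpBracket p.1 x ≤ mpBracket p.2 x} ∩ {p | mpBracket p.2 x ≤ mpBracket p.1 x} := by
    ext p; constructor
    · intro h; exact ⟨le_of_eq h, ge_of_eq h⟩
    · intro ⟨h1, h2⟩; exact le_antisymm h1 h2
  rw [this]; exact h1.inter h2


lemma tendsto_max_neg_nat (a : Rmax) :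
    Filter.Tendsto (fun k : ℕ => max a ((-(k : ℝ) : ℝ) : Rmax)) Filter.atTop (nhds a) := by
  rcases rmax_cases a with ha | ⟨r, ha⟩
  · subst ha
    have he : (fun k : ℕ => max (⊥ : Rmax) ((-(k : ℝ) : ℝ) : Rmax)) =
        fun k : ℕ => ((-(k : ℝ) : ℝ) : Rmax) := by
      funext k; exact max_eq_right bot_le
    rw [he, tendsto_order]
    constructor
    · intro b hb; exact absurd hb not_lt_bot
    · intro b hb
      rcases rmax_cases b with hb' | ⟨s, hb'⟩
      · rw [hb'] at hb; exact absurd hb (lt_irrefl _)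
      · subst hb'
        obtain ⟨N, hN⟩ := exists_nat_gt (-s)
        refine Filter.eventually_atTop.mpr ⟨N, fun k hk => ?_⟩
        refine WithBot.coe_lt_coe.mpr ?_
        have hNk : (N : ℝ) ≤ k := Nat.cast_le.mpr hk
        linarith
  · subst ha
    obtain ⟨N, hN⟩ := exists_nat_ge (-r)
    refine Filter.Tendsto.congr' ?_ (tendsto_const_nhds (x := ((r : ℝ) : Rmax)))
    refine Filter.eventually_atTop.mpr ⟨N, fun k hk => ?_⟩
    have hNk : (N : ℝ) ≤ k := Nat.cast_le.mpr hk
    have hle : (-(k : ℝ)) ≤ r := by linarith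
    exact (max_eq_left (WithBot.coe_le_coe.mpr hle)).symm

/-- Theorem 4.6 of the paper, congruence part: a subsemimodule
`W ⊆ (ℝmax^n)²` is a closed congruence if, and only if, `W = (W⊤)⊥`. -/
theorem closed_congruence_iff_biorthogonal (n : ℕ)
    (W : Set (RmaxVec n × RmaxVec n)) (hW : IsSubsemimodulePair W) :
    (IsClosed W ∧ IsCongruence W) ↔ W = mpOrtho (mpTop W) := by
  constructor
  · rintro ⟨hcl, ⟨⟨hWsub, hdiag, htrans⟩, hsym⟩⟩
    apply Set.Subset.antisymm
    · intro p hp x hx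
      exact hx p hp
    · rintro ⟨f, g⟩ hp
      by_contra hpW
      -- Step 1: perturbation making all coordinates finite
      have hqt : Filter.Tendsto
          (fun k : ℕ => (((fun i => max (f i) ((-(k : ℝ) : ℝ) : Rmax)) : RmaxVec n),
            ((fun i => max (g i) ((-(k : ℝ) : ℝ) : Rmax)) : RmaxVec n)))
          Filter.atTop (nhds (f, g)) := by
        refine Filter.Tendsto.prodMk_nhds ?_ ?_
        · rw [tendsto_pi_nhds]; intro i; exact tendsto_max_neg_nat (f i)
        · rw [tendsto_pi_nhds]; intro i; exact tendsto_max_neg_nat (g i)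
      have hmem : Wᶜ ∈ nhds ((f, g) : RmaxVec n × RmaxVec n) :=
        hcl.isOpen_compl.mem_nhds hpW
      have hqout := hqt.eventually_mem hmem
      obtain ⟨K, hK⟩ := hqout.exists
      set cK : RmaxVec n := fun _ => ((-(K : ℝ) : ℝ) : Rmax) with hcK
      set f' : RmaxVec n := fun i => max (f i) (cK i) with hf'
      set g' : RmaxVec n := fun i => max (g i) (cK i) with hg'
      have hK' : (f', g') ∉ W := hK
      have hf'ne : ∀ i, f' i ≠ ⊥ := by
        intro i h
        have : (⊥ : Rmax) < f' i :=
          lt_of_lt_of_le (WithBot.bot_lt_coe _) (le_max_right _ _)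
        rw [h] at this; exact absurd this (lt_irrefl _)
      have hg'ne : ∀ i, g' i ≠ ⊥ := by
        intro i h
        have : (⊥ : Rmax) < g' i :=
          lt_of_lt_of_le (WithBot.bot_lt_coe _) (le_max_right _ _)
        rw [h] at this; exact absurd this (lt_irrefl _)
      -- Step 2: reduce to an ordered pair
      set Fm : RmaxVec n := fun i => max (f' i) (g' i) with hFm
      have key : ∃ x : RmaxVec n, (∀ p ∈ W, mpBracket p.1 x = mpBracket p.2 x) ∧
          mpBracket f' x ≠ mpBracket g' x := by
        by_cases h1 : (Fm, g') ∈ W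
        · by_cases h2 : (Fm, f') ∈ W
          · exact absurd (htrans f' Fm g' (hsym Fm f' h2) h1) hK'
          · obtain ⟨x, hxtop, hlt⟩ := core_sep hWsub hdiag htrans hsym hcl Fm f'
              hf'ne (fun i => le_max_left _ _) h2
            refine ⟨x, hxtop, ?_⟩
            rw [hFm] at hlt
            rw [mpBracket_max f' g' x] at hlt
            intro heq
            rw [heq, max_self] at hlt
            exact absurd hlt (lt_irrefl _)
        · obtain ⟨x, hxtop, hlt⟩ := core_sep hWsub hdiag htrans hsym hcl Fm g'
            hg'ne (fun i => le_max_right _ _) h1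
          refine ⟨x, hxtop, ?_⟩
          rw [hFm] at hlt
          rw [mpBracket_max f' g' x] at hlt
          intro heq
          rw [heq, max_self] at hlt
          exact absurd hlt (lt_irrefl _)
      obtain ⟨x, hxtop, hne⟩ := key
      -- Step 3: go back to (f, g)
      have hf'b : mpBracket f' x = max (mpBracket f x) (mpBracket cK x) :=
        mpBracket_max f cK x
      have hg'b : mpBracket g' x = max (mpBracket g x) (mpBracket cK x) :=
        mpBracket_max g cK x
      have hne' : mpBracket f x ≠ mpBracket g x := by
        intro heq
        rw [hf'b, hg'b, heq] at hne
        exact hne rfl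
      exact hne' (hp x (show x ∈ mpTop W from hxtop))
  · intro hEq
    refine ⟨?_, ⟨⟨?_, ?_, ?_⟩, ?_⟩⟩
    · rw [hEq]; exact mpOrtho_closed _
    · rw [hEq]
      intro p hp q hq lam mu
      intro x hx
      show mpBracket (maxComb p.1 q.1 lam mu) x = mpBracket (maxComb p.2 q.2 lam mu) x
      rw [mpBracket_maxComb, mpBracket_maxComb, hp x hx, hq x hx]
    · rw [hEq]
      intro f x hx
      rfl
    · rw [hEq]
      intro f g h hfg hgh x hx
      exact (hfg x hx).trans (hgh x hx)
    · rw [hEq]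
      intro f g hfg x hx
      exact (hfg x hx).symm
end
end

section
/- Separation theorem for closed polar cones: Let W ⊆ (ℝmax^n)^2 be a closed polar cone and let s, t ∈ ℝmax^n be such that (s,t) ∉ W. Then there exists y ∈ ℝmax^n such that max_i (f_i + y_i) ≤ max_j (g_j + y_j) for every (f,g) ∈ W, while ¬( max_i (s_i + y_i) ≤ max_j (t_j + y_j) ). -/
open scoped Classical

noncomputable section

open Filter

lemma tendsto_coe_Rmax {u : ℕ → ℝ} {a : ℝ} (h : Tendsto u atTop (nhds a)) :
    Tendsto (fun k => ((u k : ℝ) : Rmax)) atTop (nhds (a : Rmax)) := by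
  rw [tendsto_order]
  refine ⟨fun b hb => ?_, fun b hb => ?_⟩
  · induction b using WithBot.recBotCoe with
    | bot => exact .of_forall fun _ => WithBot.bot_lt_coe _
    | coe b =>
      have hb' : b < a := by exact_mod_cast hb
      exact (h.eventually (eventually_gt_nhds hb')).mono fun k hk => by exact_mod_cast hk
  · induction b using WithBot.recBotCoe with
    | bot => exact absurd hb (by simp)
    | coe b =>
      have hb' : a < b := by exact_mod_cast hb
      exact (h.eventually (eventually_lt_nhds hb')).mono fun k hk => by exact_mod_cast hk

lemma tendsto_neg_nat_bot : Tendsto (fun k : ℕ => ((-(k:ℝ) : ℝ) : Rmax)) atTop (nhds (⊥ : Rmax)) := by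
  rw [tendsto_order]
  refine ⟨fun b hb => absurd hb (by simp), fun b hb => ?_⟩
  induction b using WithBot.recBotCoe with
  | bot => exact absurd hb (lt_irrefl _)
  | coe b =>
    obtain ⟨N, hN⟩ := exists_nat_gt (-b)
    refine eventually_atTop.2 ⟨N, fun k hk => ?_⟩
    have hk' : (N:ℝ) ≤ k := by exact_mod_cast hk
    have : -(k:ℝ) < b := by linarith
    exact_mod_cast this

/-- Main separation construction, for `t'` with no `⊥` entries. -/
lemma separation_main (n : ℕ) (W : Set (RmaxVec n × RmaxVec n))
    (hclosed : IsClosed W) (hW : IsPolarCone W) (s t' : RmaxVec n)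
    (ht'bot : ∀ j, t' j ≠ ⊥) (hm : (s, t') ∉ W) :
    ∃ y : RmaxVec n,
      (∀ p ∈ W, mpBracket p.1 y ≤ mpBracket p.2 y) ∧
      mpBracket t' y ≤ ((0:ℝ) : Rmax) ∧ ((0:ℝ) : Rmax) < mpBracket s y := by
  classical
  obtain ⟨⟨hsub, hdiag, htrans⟩, hpol⟩ := hW
  have hscale : ∀ p ∈ W, ∀ c : Rmax,
      ((fun i => p.1 i + c, fun i => p.2 i + c) : RmaxVec n × RmaxVec n) ∈ W := by
    intro p hp c
    have h1 := hsub p hp p hp c c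
    have e1 : maxComb p.1 p.1 c c = fun i => p.1 i + c := by
      funext i; simp [maxComb]
    have e2 : maxComb p.2 p.2 c c = fun i => p.2 i + c := by
      funext i; simp [maxComb]
    rwa [e1, e2] at h1
  set F : Set (RmaxVec n) := {f | (f, t') ∈ W} with hF
  have hFt' : t' ∈ F := hdiag t'
  have hFdown : ∀ f g : RmaxVec n, f ≤ g → g ∈ F → f ∈ F :=
    fun f g hle hg => htrans f g t' (hpol f g hle) hg
  have hFsup : ∀ f ∈ F, ∀ g ∈ F, f ⊔ g ∈ F := by
    intro f hf g hg
    have h1 := hsub (f, t') hf (g, t') hg 0 0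
    have e : ((maxComb (f, t').1 (g, t').1 0 0, maxComb (f, t').2 (g, t').2 0 0)
        : RmaxVec n × RmaxVec n) = (f ⊔ g, t') := by
      refine Prod.ext ?_ ?_ <;> funext j <;> simp [maxComb, Pi.sup_apply]
    rwa [e] at h1
  have hFbot : (⊥ : RmaxVec n) ∈ F := hFdown ⊥ t' bot_le hFt'
  have hFclosed : IsClosed F := hclosed.preimage (continuous_id.prodMk continuous_const)
  set S : Fin n → Set ℝ := fun i => {r | ∃ h ∈ F, (r : Rmax) ≤ h i} with hS
  have hSne : ∀ i, (S i).Nonempty := by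
    intro i
    obtain ⟨τ, hτ⟩ := WithBot.ne_bot_iff_exists.1 (ht'bot i)
    exact ⟨τ, t', hFt', hτ.le⟩
  have hSdown : ∀ i, ∀ r ∈ S i, ∀ r' : ℝ, r' ≤ r → r' ∈ S i := by
    rintro i r ⟨h, hh, hrh⟩ r' hr'
    exact ⟨h, hh, le_trans (by exact_mod_cast hr') hrh⟩
  have hSbdd : ∀ i, ¬(∀ r : ℝ, r ∈ S i) → BddAbove (S i) := by
    intro i hi
    push_neg at hi
    obtain ⟨r, hr⟩ := hi
    refine ⟨r, fun r' hr' => ?_⟩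
    by_contra hlt
    exact hr (hSdown i r' hr' r (le_of_not_ge hlt))
  set y : RmaxVec n := fun i => if ∀ r : ℝ, r ∈ S i then ⊥ else ((-sSup (S i) : ℝ) : Rmax) with hy
  have hle_sSup : ∀ h ∈ F, ∀ i, ¬(∀ r : ℝ, r ∈ S i) → h i ≤ ((sSup (S i) : ℝ) : Rmax) := by
    intro h hh i hi
    by_cases hb : h i = ⊥
    · rw [hb]; exact bot_le
    · obtain ⟨a, ha⟩ := WithBot.ne_bot_iff_exists.1 hb
      rw [← ha]
      exact_mod_cast le_csSup (hSbdd i hi) ⟨h, hh, ha.le⟩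
  have hLemA : ∀ f : RmaxVec n, (∀ i, ∀ r : ℝ, (r : Rmax) < f i → r ∈ S i) → f ∈ F := by
    intro f hf
    have hk : ∀ k : ℕ, (fun i => f i + ((-(1/((k:ℝ)+1)) : ℝ) : Rmax)) ∈ F := by
      intro k
      have hpos : (0:ℝ) < 1/((k:ℝ)+1) := by positivity
      have hchoice : ∀ i, ∃ h ∈ F, f i + ((-(1/((k:ℝ)+1)) : ℝ) : Rmax) ≤ h i := by
        intro i
        by_cases hb : f i = ⊥
        · exact ⟨t', hFt', by rw [hb, WithBot.bot_add]; exact bot_le⟩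
        · obtain ⟨a, ha⟩ := WithBot.ne_bot_iff_exists.1 hb
          have hlt : ((a - 1/((k:ℝ)+1) : ℝ) : Rmax) < f i := by
            rw [← ha]
            exact_mod_cast (by linarith : a - 1/((k:ℝ)+1) < a)
          obtain ⟨h, hh, hle⟩ := hf i _ hlt
          refine ⟨h, hh, ?_⟩
          rw [← ha, ← WithBot.coe_add, ← sub_eq_add_neg]
          exact hle
      choose H hHF hHle using hchoice
      have hsup : Finset.univ.sup H ∈ F :=
        Finset.sup_induction hFbot (fun a ha b hb => hFsup a ha b hb) (fun i _ => hHF i)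
      refine hFdown _ _ ?_ hsup
      intro i
      calc f i + ((-(1/((k:ℝ)+1)) : ℝ) : Rmax) ≤ H i i := hHle i
        _ ≤ Finset.univ.sup H i := (Finset.le_sup (f := H) (Finset.mem_univ i)) i
    have htend : Tendsto (fun k : ℕ => (fun i => f i + ((-(1/((k:ℝ)+1)) : ℝ) : Rmax)))
        atTop (nhds f) := by
      rw [tendsto_pi_nhds]
      intro i
      by_cases hb : f i = ⊥
      · have e : (fun k : ℕ => f i + ((-(1/((k:ℝ)+1)) : ℝ) : Rmax)) = fun _ : ℕ => (⊥ : Rmax) := by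
          funext k; rw [hb, WithBot.bot_add]
        rw [e, hb]
        exact tendsto_const_nhds
      · obtain ⟨a, ha⟩ := WithBot.ne_bot_iff_exists.1 hb
        have e : (fun k : ℕ => f i + ((-(1/((k:ℝ)+1)) : ℝ) : Rmax))
            = fun k : ℕ => ((a - 1/((k:ℝ)+1) : ℝ) : Rmax) := by
          funext k
          rw [← ha, ← WithBot.coe_add, ← sub_eq_add_neg]
        rw [e, ← ha]
        apply tendsto_coe_Rmax
        have h0 : Tendsto (fun k : ℕ => (1/((k:ℝ)+1) : ℝ)) atTop (nhds 0) :=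
          tendsto_one_div_add_atTop_nhds_zero_nat
        simpa using tendsto_const_nhds.sub h0
    exact hFclosed.mem_of_tendsto htend (Filter.Eventually.of_forall hk)
  refine ⟨y, ?_, ?_, ?_⟩
  · rintro ⟨f, g⟩ hp
    show mpBracket f y ≤ mpBracket g y
    rw [mpBracket, Finset.sup_le_iff]
    intro i _
    by_contra hgt
    rw [not_le] at hgt
    have hvne : f i + y i ≠ ⊥ := (bot_le.trans_lt hgt).ne'
    obtain ⟨v, hv⟩ := WithBot.ne_bot_iff_exists.1 hvne
    obtain ⟨c', hc'le, hc'lt⟩ : ∃ c' : ℝ, mpBracket g y ≤ (c' : Rmax) ∧ ((c' : ℝ) : Rmax) < f i + y i := by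
      by_cases hcb : mpBracket g y = ⊥
      · refine ⟨v - 1, by rw [hcb]; exact bot_le, ?_⟩
        rw [← hv]
        exact_mod_cast (by linarith : v - 1 < v)
      · obtain ⟨u, hu⟩ := WithBot.ne_bot_iff_exists.1 hcb
        exact ⟨u, hu.ge, by rw [hu]; exact hgt⟩
    have key : f i + y i ≤ (c' : Rmax) := by
      have hg' : (fun j => g j + ((-c' : ℝ) : Rmax)) ∈ F := by
        apply hLemA
        intro j r hr
        by_cases hj : ∀ r : ℝ, r ∈ S j
        · exact hj r
        · have hyj : y j = ((-sSup (S j) : ℝ) : Rmax) := by simp [hy, hj]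
          have hgyj : g j + y j ≤ (c' : Rmax) :=
            le_trans (Finset.le_sup (f := fun j => g j + y j) (Finset.mem_univ j)) hc'le
          have hgb : g j ≠ ⊥ := by
            intro hb; rw [hb, WithBot.bot_add] at hr; exact absurd hr not_lt_bot
          obtain ⟨b, hb⟩ := WithBot.ne_bot_iff_exists.1 hgb
          rw [← hb] at hr hgyj
          rw [hyj] at hgyj
          have h1 : r < b - c' := by
            rw [← WithBot.coe_add, ← sub_eq_add_neg] at hr
            exact_mod_cast hr
          have h2 : b - sSup (S j) ≤ c' := by
            rw [← WithBot.coe_add, ← sub_eq_add_neg] at hgyj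
            exact_mod_cast hgyj
          have h3 : r < sSup (S j) := by linarith
          obtain ⟨r', hr', hrr'⟩ := exists_lt_of_lt_csSup (hSne j) h3
          exact hSdown j r' hr' r hrr'.le
      have hpair := hscale (f, g) hp ((-c' : ℝ) : Rmax)
      have hft' : (fun i => f i + ((-c' : ℝ) : Rmax)) ∈ F := htrans _ _ _ hpair hg'
      by_cases hi : ∀ r : ℝ, r ∈ S i
      · have hyi : y i = ⊥ := by simp [hy, hi]
        rw [hyi, WithBot.add_bot]; exact bot_le
      · have hyi : y i = ((-sSup (S i) : ℝ) : Rmax) := by simp [hy, hi]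
        have hfle := hle_sSup _ hft' i hi
        by_cases hfb : f i = ⊥
        · rw [hfb, WithBot.bot_add]; exact bot_le
        · obtain ⟨a, ha⟩ := WithBot.ne_bot_iff_exists.1 hfb
          rw [← ha] at hfle ⊢
          rw [hyi, ← WithBot.coe_add, ← sub_eq_add_neg]
          rw [← WithBot.coe_add, ← sub_eq_add_neg] at hfle
          have h4 : a - c' ≤ sSup (S i) := by exact_mod_cast hfle
          exact_mod_cast (by linarith : a - sSup (S i) ≤ c')
    exact hc'lt.not_ge key
  · rw [mpBracket, Finset.sup_le_iff]
    intro j _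
    by_cases hj : ∀ r : ℝ, r ∈ S j
    · have hyj : y j = ⊥ := by simp [hy, hj]
      rw [hyj, WithBot.add_bot]; exact bot_le
    · obtain ⟨τ, hτ⟩ := WithBot.ne_bot_iff_exists.1 (ht'bot j)
      have hτS : τ ∈ S j := ⟨t', hFt', hτ.le⟩
      have h1 : τ ≤ sSup (S j) := le_csSup (hSbdd j hj) hτS
      have hyj : y j = ((-sSup (S j) : ℝ) : Rmax) := by simp [hy, hj]
      rw [← hτ, hyj, ← WithBot.coe_add, ← sub_eq_add_neg]
      exact_mod_cast (by linarith : τ - sSup (S j) ≤ (0:ℝ))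
  · have hsF : s ∉ F := hm
    have hns := mt (hLemA s) hsF
    push_neg at hns
    obtain ⟨i, r, hri, hrS⟩ := hns
    have hi : ¬(∀ r : ℝ, r ∈ S i) := fun h => hrS (h r)
    have hyi : y i = ((-sSup (S i) : ℝ) : Rmax) := by simp [hy, hi]
    have hsup_le : sSup (S i) ≤ r := by
      refine csSup_le (hSne i) (fun r' hr' => ?_)
      by_contra hlt
      exact hrS (hSdown i r' hr' r (le_of_not_ge hlt))
    have hsb : s i ≠ ⊥ := fun hb => by rw [hb] at hri; exact absurd hri not_lt_bot
    obtain ⟨a, ha⟩ := WithBot.ne_bot_iff_exists.1 hsb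
    have hra : r < a := by rw [← ha] at hri; exact_mod_cast hri
    have hlt0 : ((0:ℝ) : Rmax) < s i + y i := by
      rw [← ha, hyi, ← WithBot.coe_add, ← sub_eq_add_neg]
      exact_mod_cast (by linarith : (0:ℝ) < a - sSup (S i))
    exact hlt0.trans_le (Finset.le_sup (f := fun i => s i + y i) (Finset.mem_univ i))


/-- **Separation theorem for closed polar cones** (Theorem 4.4 of the paper).
If `W ⊆ (ℝmax^n)²` is a closed polar cone and `(s,t) ∉ W`, then there is
`y ∈ ℝmax^n` with `max_i (f_i + y_i) ≤ max_j (g_j + y_j)` for all `(f,g) ∈ W`,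
while `¬(max_i (s_i + y_i) ≤ max_j (t_j + y_j))`. -/
theorem separation_closed_polar_cone (n : ℕ) (W : Set (RmaxVec n × RmaxVec n))
    (hclosed : IsClosed W) (hW : IsPolarCone W) (s t : RmaxVec n)
    (hst : (s, t) ∉ W) :
    ∃ y : RmaxVec n,
      (∀ p ∈ W, mpBracket p.1 y ≤ mpBracket p.2 y) ∧
      ¬ mpBracket s y ≤ mpBracket t y := by
  classical
  obtain ⟨m, hm⟩ : ∃ m : ℕ, (s, fun j => max (t j) ((-(m:ℝ) : ℝ) : Rmax)) ∉ W := by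
    by_contra hcon
    push_neg at hcon
    apply hst
    have htend : Tendsto (fun m : ℕ =>
        ((s, fun j => max (t j) ((-(m:ℝ) : ℝ) : Rmax)) : RmaxVec n × RmaxVec n))
        atTop (nhds (s, t)) := by
      rw [nhds_prod_eq]
      refine Tendsto.prodMk (tendsto_const_nhds : Tendsto (fun _ : ℕ => s) atTop (nhds s)) ?_
      rw [tendsto_pi_nhds]
      intro j
      by_cases hb : t j = ⊥
      · have e : (fun m : ℕ => max (t j) ((-(m:ℝ) : ℝ) : Rmax))
            = fun m : ℕ => ((-(m:ℝ) : ℝ) : Rmax) := by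
          funext m; rw [hb]; exact max_eq_right bot_le
        rw [e, hb]; exact tendsto_neg_nat_bot
      · obtain ⟨τ, hτ⟩ := WithBot.ne_bot_iff_exists.1 hb
        have hev : ∀ᶠ m : ℕ in atTop, max (t j) ((-(m:ℝ) : ℝ) : Rmax) = t j := by
          obtain ⟨N, hN⟩ := exists_nat_ge (-τ)
          refine eventually_atTop.2 ⟨N, fun k hk => ?_⟩
          have hk' : (N:ℝ) ≤ k := by exact_mod_cast hk
          have h1 : ((-(k:ℝ) : ℝ) : Rmax) ≤ t j := by
            rw [← hτ]; exact_mod_cast (by linarith : -(k:ℝ) ≤ τ)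
          exact max_eq_left h1
        exact Tendsto.congr' (hev.mono fun k hk => hk.symm) tendsto_const_nhds
    exact hclosed.mem_of_tendsto htend (Filter.Eventually.of_forall hcon)
  have ht'bot : ∀ j, (max (t j) ((-(m:ℝ) : ℝ) : Rmax)) ≠ ⊥ :=
    fun j => ((WithBot.bot_lt_coe _).trans_le (le_max_right _ _)).ne'
  obtain ⟨y, hA, hty, hsy⟩ := separation_main n W hclosed hW s _ ht'bot hm
  refine ⟨y, hA, ?_⟩
  have hmono : mpBracket t y ≤ mpBracket (fun j => max (t j) ((-(m:ℝ) : ℝ) : Rmax)) y := by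
    simp only [mpBracket]
    exact Finset.sup_mono_fun fun j _ => add_le_add_left (le_max_left _ _) _
  exact not_le.2 ((hmono.trans hty).trans_lt hsy)
end
end

section
/- Separation theorem for closed congruences: Let W ⊆ (ℝmax^n)^2 be a closed congruence and let s, t ∈ ℝmax^n be such that (s,t) ∉ W. Then there exists y ∈ ℝmax^n such that max_i (f_i + y_i) = max_j (g_j + y_j) for every (f,g) ∈ W, while max_i (s_i + y_i) ≠ max_j (t_j + y_j). -/
open scoped Classical

noncomputable section

namespace MPAux

/-- unit vector with value `μ` at `j`, `⊥` elsewhere -/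
def eV {n : ℕ} (j : Fin n) (μ : Rmax) : RmaxVec n := fun i => if i = j then μ else ⊥

/-- shift all entries by the real `r` -/
def shV {n : ℕ} (h : RmaxVec n) (r : ℝ) : RmaxVec n := fun i => h i + ↑r

lemma add_coe_add_coe (a : Rmax) (p q : ℝ) : a + ↑p + ↑q = a + ↑(p + q) := by
  rw [add_assoc, ← WithBot.coe_add]

lemma add_coe_cancel (a : Rmax) (r : ℝ) : a + ↑r + ↑(-r) = a := by
  rw [add_coe_add_coe]; simp

lemma max_add_right (a b c : Rmax) : max a b + c = max (a + c) (b + c) :=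
  Monotone.map_max (fun _ _ h => add_le_add_left h c)

lemma trade {a : Rmax} {p q : ℝ} (h : a + ↑p ≤ ↑q) (p' : ℝ) :
    a + ↑p' ≤ ↑(q - p + p') := by
  calc a + ↑p' = a + ↑p + ↑(p' - p) := by rw [add_coe_add_coe]; ring_nf
  _ ≤ ↑q + ↑(p' - p) := add_le_add_left h _
  _ = ↑(q - p + p') := by rw [← WithBot.coe_add]; ring_nf

lemma eq_bot_of_le_all {a : Rmax} (h : ∀ r : ℝ, a ≤ ↑r) : a = ⊥ := by
  induction a using WithBot.recBotCoe with
  | bot => rfl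
  | coe v => exact absurd (WithBot.coe_le_coe.1 (h (v - 1))) (by linarith)

lemma continuous_coe : Continuous (fun r : ℝ => (r : Rmax)) := by
  refine continuous_generateFrom_iff.mpr ?_
  rintro s ⟨a, rfl | rfl⟩
  · induction a using WithBot.recBotCoe with
    | bot => simpa [WithBot.bot_lt_coe] using isOpen_univ
    | coe q =>
      have : {b : ℝ | (q:Rmax) < ↑b} = Set.Ioi q := by ext r; simp [WithBot.coe_lt_coe]
      simpa [this] using isOpen_Ioi
  · induction a using WithBot.recBotCoe with
    | bot => simpa using isOpen_empty
    | coe q =>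
      have : {b : ℝ | (b:Rmax) < ↑q} = Set.Iio q := by ext r; simp [WithBot.coe_lt_coe]
      simpa [this] using isOpen_Iio

/-- a closed, downward closed, nonempty proper subset of `Rmax` has a greatest element -/
lemma exists_greatest {S : Set Rmax} (hC : IsClosed S)
    (hdown : ∀ a b : Rmax, a ≤ b → b ∈ S → a ∈ S) (hne : S.Nonempty)
    (hproper : ∃ d, d ∉ S) : ∃ c ∈ S, ∀ μ ∈ S, μ ≤ c := by
  by_cases hreal : ∃ r : ℝ, (↑r : Rmax) ∈ S
  · obtain ⟨r0, hr0⟩ := hreal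
    obtain ⟨d, hd⟩ := hproper
    have hdbot : d ≠ ⊥ := by rintro rfl; exact hd (hdown ⊥ _ bot_le hr0)
    obtain ⟨dr, rfl⟩ := WithBot.ne_bot_iff_exists.1 hdbot
    set Sr : Set ℝ := {r : ℝ | (↑r : Rmax) ∈ S} with hSr
    have hSrne : Sr.Nonempty := ⟨r0, hr0⟩
    have hSrbdd : BddAbove Sr := by
      refine ⟨dr, fun r hr => ?_⟩
      by_contra hlt
      exact hd (hdown _ _ (WithBot.coe_le_coe.2 (le_of_not_ge hlt)) hr)
    have hSrclosed : IsClosed Sr := IsClosed.preimage continuous_coe hC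
    have hmem : sSup Sr ∈ Sr := hSrclosed.csSup_mem hSrne hSrbdd
    refine ⟨↑(sSup Sr), hmem, fun μ hμ => ?_⟩
    induction μ using WithBot.recBotCoe with
    | bot => exact bot_le
    | coe v => exact WithBot.coe_le_coe.2 (le_csSup hSrbdd hμ)
  · obtain ⟨a, ha⟩ := hne
    have hab : a = ⊥ := by
      induction a using WithBot.recBotCoe with
      | bot => rfl
      | coe v => exact absurd ⟨v, ha⟩ hreal
    refine ⟨⊥, hab ▸ ha, fun μ hμ => ?_⟩
    induction μ using WithBot.recBotCoe with
    | bot => exact le_rfl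
    | coe v => exact absurd ⟨v, hμ⟩ hreal




lemma shV_shV {n : ℕ} (h : RmaxVec n) (r : ℝ) : shV (shV h r) (-r) = h := by
  funext i; simp [shV, add_coe_add_coe]

lemma shV_eV {n : ℕ} (j : Fin n) (μ : Rmax) (r : ℝ) :
    shV (eV j μ) r = eV j (μ + ↑r) := by
  funext i; simp only [shV, eV]; split <;> simp

lemma eV_le {n : ℕ} (j : Fin n) {μ : Rmax} {f : RmaxVec n} (h : μ ≤ f j) :
    eV j μ ≤ f := by
  intro i; simp only [eV]; split
  · next hij => exact hij ▸ h
  · exact bot_le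

section PolarCone
variable {n : ℕ} {Wp : Set (RmaxVec n × RmaxVec n)} (hP : IsPolarCone Wp)
include hP

lemma mem_shift {p : RmaxVec n × RmaxVec n} (hp : p ∈ Wp) (r : ℝ) :
    (shV p.1 r, shV p.2 r) ∈ Wp := by
  have h := hP.1.1 p hp p hp (↑r) ⊥
  have e : ∀ a : RmaxVec n, maxComb a a (↑r) ⊥ = shV a r := by
    intro a; funext i
    simp only [maxComb, WithBot.add_bot, shV]
    exact max_eq_left bot_le
  rwa [e, e] at h

lemma mem_of_le_of_mem {f' f g : RmaxVec n} (hle : f' ≤ f) (h : (f, g) ∈ Wp) :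
    (f', g) ∈ Wp := hP.1.2.2 _ _ _ (hP.2 _ _ hle) h

/-- box lemma: membership can be checked coordinatewise in the first argument -/
lemma box {g h : RmaxVec n} (hall : ∀ j, (eV j (g j), h) ∈ Wp) : (g, h) ∈ Wp := by
  have key : ∀ A : Finset (Fin n), ((fun i => if i ∈ A then g i else ⊥), h) ∈ Wp := by
    intro A
    induction A using Finset.induction with
    | empty =>
      exact hP.2 _ _ (fun i => by simp)
    | @insert a A hnot ih =>
      have hcomb := hP.1.1 _ ih _ (hall a) 0 0
      have e2 : maxComb h h 0 0 = h := by
        funext i; simp [maxComb]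
      have e1 : maxComb (fun i => if i ∈ A then g i else ⊥) (eV a (g a)) 0 0
          = fun i => if i ∈ insert a A then g i else ⊥ := by
        funext i
        simp only [maxComb, add_zero, eV, Finset.mem_insert]
        by_cases hia : i = a
        · subst hia
          by_cases hiA : i ∈ A <;> simp [hiA]
        · by_cases hiA : i ∈ A <;> simp [hia, hiA]
      rwa [e1, e2] at hcomb
  have := key Finset.univ
  have e : (fun i => if i ∈ (Finset.univ : Finset (Fin n)) then g i else ⊥) = g := by
    funext i; simp
  rwa [e] at this

lemma unbox {g h : RmaxVec n} (hgh : (g, h) ∈ Wp) (j : Fin n) :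
    (eV j (g j), h) ∈ Wp :=
  mem_of_le_of_mem hP (eV_le j le_rfl) hgh

end PolarCone

lemma eV_mono {n : ℕ} (j : Fin n) {a b : Rmax} (hab : a ≤ b) : eV j a ≤ eV j b := by
  intro i; simp only [eV]; split
  · exact hab
  · exact le_rfl

theorem polar_sep {n : ℕ} (Wp : Set (RmaxVec n × RmaxVec n)) (hC : IsClosed Wp)
    (hP : IsPolarCone Wp) (s t : RmaxVec n) (hst : (s, t) ∉ Wp) :
    ∃ x : RmaxVec n, (∀ p ∈ Wp, mpBracket p.1 x ≤ mpBracket p.2 x) ∧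
      mpBracket t x < mpBracket s x := by
  -- step 1: perturb t to have no `⊥` coordinates
  have hk : ∃ k : ℕ, (s, fun i => max (t i) ↑(-(k:ℝ))) ∉ Wp := by
    by_contra hall
    push_neg at hall
    have htend : Filter.Tendsto
        (fun k : ℕ => ((s, fun i => max (t i) ↑(-(k:ℝ))) : RmaxVec n × RmaxVec n))
        Filter.atTop (nhds (s, t)) := by
      refine Filter.Tendsto.prodMk_nhds tendsto_const_nhds ?_
      rw [tendsto_pi_nhds]
      intro i
      by_cases hb : t i = ⊥
      · rw [hb]
        have e : (fun k : ℕ => max (⊥:Rmax) ↑(-(k:ℝ))) = fun k : ℕ => (↑(-(k:ℝ)) : Rmax) := by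
          funext k; exact max_eq_right bot_le
        rw [e]
        refine tendsto_order.2 ⟨fun a ha => absurd ha not_lt_bot, fun a ha => ?_⟩
        obtain ⟨b, rfl⟩ := WithBot.ne_bot_iff_exists.1 (ne_of_gt ha)
        refine Filter.eventually_atTop.2 ⟨⌈-b⌉₊ + 1, fun k hk => ?_⟩
        refine WithBot.coe_lt_coe.2 ?_
        have h1 : (-b : ℝ) ≤ ⌈-b⌉₊ := Nat.le_ceil _
        have h2 : ((⌈-b⌉₊ + 1 : ℕ) : ℝ) ≤ (k : ℝ) := Nat.cast_le.2 hk
        push_cast at h2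
        linarith
      · obtain ⟨v, hv⟩ := WithBot.ne_bot_iff_exists.1 hb
        refine Filter.Tendsto.congr' ?_ tendsto_const_nhds
        refine Filter.eventually_atTop.2 ⟨⌈-v⌉₊, fun k hk => ?_⟩
        have hle : ((↑(-(k:ℝ)) : Rmax)) ≤ t i := by
          rw [← hv]
          refine WithBot.coe_le_coe.2 ?_
          have h1 : (-v : ℝ) ≤ ⌈-v⌉₊ := Nat.le_ceil _
          have h2 : ((⌈-v⌉₊ : ℕ) : ℝ) ≤ (k : ℝ) := Nat.cast_le.2 hk
          linarith
        exact (max_eq_left hle).symm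
    exact hst (hC.mem_of_tendsto htend (Filter.Eventually.of_forall hall))
  obtain ⟨k₀, hk₀⟩ := hk
  set u : RmaxVec n := fun i => max (t i) ↑(-(k₀:ℝ)) with hu
  set S : Fin n → Set Rmax := fun j => {μ | (eV j μ, u) ∈ Wp} with hS
  have hSdown : ∀ j, ∀ a b : Rmax, a ≤ b → b ∈ S j → a ∈ S j := by
    intro j a b hab hb
    exact mem_of_le_of_mem hP (eV_mono j hab) hb
  have hSu : ∀ j, u j ∈ S j := fun j => hP.2 _ _ (eV_le j le_rfl)
  have hSclosed : ∀ j, IsClosed (S j) := by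
    intro j
    have hcont : Continuous fun μ : Rmax => ((eV j μ, u) : RmaxVec n × RmaxVec n) := by
      refine Continuous.prodMk ?_ continuous_const
      refine continuous_pi fun i => ?_
      simp only [eV]
      split
      · exact continuous_id
      · exact continuous_const
    exact IsClosed.preimage hcont hC
  have hSshift : ∀ j (μ : Rmax) (r : ℝ), μ ∈ S j → (eV j (μ + ↑r), shV u r) ∈ Wp := by
    intro j μ r hμ
    have h2 := mem_shift hP hμ r
    rwa [shV_eV] at h2
  have hSunshift : ∀ j (μ : Rmax) (r : ℝ), (eV j μ, shV u r) ∈ Wp → μ + ↑(-r) ∈ S j := by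
    intro j μ r h
    have h2 := mem_shift hP h (-r)
    rw [shV_eV, shV_shV] at h2
    exact h2
  have hSpec : ∀ j : Fin n, ¬(∀ μ, μ ∈ S j) → ∃ r : ℝ, (↑r ∈ S j ∧ ∀ μ ∈ S j, μ ≤ ↑r) := by
    intro j hj
    push_neg at hj
    obtain ⟨d, hd⟩ := hj
    obtain ⟨c, hcS, hcB⟩ := exists_greatest (hSclosed j) (hSdown j) ⟨u j, hSu j⟩ ⟨d, hd⟩
    have hub : (↑(-(k₀:ℝ)) : Rmax) ≤ u j := by rw [hu]; exact le_max_right _ _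
    have hcbot : c ≠ ⊥ := by
      intro hcb
      have hb2 : u j ≤ c := hcB _ (hSu j)
      rw [hcb, le_bot_iff] at hb2
      rw [hb2] at hub
      exact absurd hub (by simp)
    obtain ⟨r, rfl⟩ := WithBot.ne_bot_iff_exists.1 hcbot
    exact ⟨r, hcS, hcB⟩
  choose rr hrS hrB using hSpec
  set x : RmaxVec n := fun j => if h : ∀ μ, μ ∈ S j then ⊥ else ↑(-(rr j h)) with hx
  have hxpos : ∀ j (h : ¬∀ μ, μ ∈ S j), x j = ↑(-(rr j h)) := fun j h => dif_neg h
  have hxbot : ∀ j (h : ∀ μ, μ ∈ S j), x j = ⊥ := fun j h => dif_pos h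
  refine ⟨x, ?_, ?_⟩
  · -- monotonicity along Wp
    rintro ⟨f, g⟩ hfg
    simp only
    have claim : ∀ r : ℝ, mpBracket g x ≤ ↑r → ∀ j, f j + x j ≤ (↑r : Rmax) := by
      intro r hr
      have hgu : (g, shV u r) ∈ Wp := by
        refine box hP fun j => ?_
        by_cases hj : ∀ μ, μ ∈ S j
        · have hmem : g j + ↑(-r) ∈ S j := hj _
          have h2 := hSshift j _ r hmem
          rwa [add_coe_add_coe, show -r + r = 0 by ring, WithBot.coe_zero, add_zero] at h2
        · have hle1 : g j + x j ≤ mpBracket g x := by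
            exact Finset.le_sup (f := fun i => g i + x i) (Finset.mem_univ j)
          have hle2 : g j + ↑(-(rr j hj)) ≤ (↑r : Rmax) := by
            rw [← hxpos j hj]; exact hle1.trans hr
          have hle3 : g j + ↑(-r) ≤ (↑(rr j hj) : Rmax) := by
            have h3 := trade hle2 (-r)
            rwa [show r - (-(rr j hj)) + (-r) = rr j hj by ring] at h3
          have hmem : g j + ↑(-r) ∈ S j := hSdown j _ _ hle3 (hrS j hj)
          have h2 := hSshift j _ r hmem
          rwa [add_coe_add_coe, show -r + r = 0 by ring, WithBot.coe_zero, add_zero] at h2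
      have hfu : (f, shV u r) ∈ Wp := hP.1.2.2 _ _ _ hfg hgu
      intro j
      by_cases hj : ∀ μ, μ ∈ S j
      · rw [hxbot j hj, WithBot.add_bot]; exact bot_le
      · have h1 : (eV j (f j), shV u r) ∈ Wp := unbox hP hfu j
        have h2 : f j + ↑(-r) ∈ S j := hSunshift j _ r h1
        have h3 : f j + ↑(-r) ≤ ↑(rr j hj) := hrB j hj _ h2
        have h4 := trade h3 (-(rr j hj))
        rw [show (rr j hj) - (-r) + (-(rr j hj)) = r by ring] at h4
        rw [hxpos j hj]; exact h4
    by_cases hbot : mpBracket g x = ⊥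
    · have hall : ∀ r : ℝ, mpBracket f x ≤ ↑r := fun r =>
        Finset.sup_le fun j _ => claim r (hbot ▸ bot_le) j
      rw [hbot, eq_bot_of_le_all hall]
    · obtain ⟨b, hb⟩ := WithBot.ne_bot_iff_exists.1 hbot
      rw [← hb]
      exact Finset.sup_le fun j _ => claim b (le_of_eq hb.symm) j
  · -- separation
    have htx : mpBracket t x ≤ (0 : Rmax) := by
      refine Finset.sup_le fun j _ => ?_
      by_cases hj : ∀ μ, μ ∈ S j
      · rw [hxbot j hj, WithBot.add_bot]; exact bot_le
      · rw [hxpos j hj]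
        have h1 : t j ≤ ↑(rr j hj) := by
          refine le_trans ?_ ((hrB j hj) _ (hSu j))
          rw [hu]; exact le_max_left _ _
        calc t j + ↑(-(rr j hj)) ≤ ↑(rr j hj) + ↑(-(rr j hj)) := add_le_add_left h1 _
        _ = (0:Rmax) := by rw [← WithBot.coe_add]; norm_num
    obtain ⟨i0, hi0⟩ : ∃ i0, (eV i0 (s i0), u) ∉ Wp := by
      by_contra hall; push_neg at hall; exact hk₀ (box hP hall)
    have hi0S : s i0 ∉ S i0 := hi0
    have hj0 : ¬(∀ μ, μ ∈ S i0) := fun h => hi0S (h _)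
    have hlt : (↑(rr i0 hj0) : Rmax) < s i0 := by
      by_contra hle
      exact hi0S (hSdown i0 _ _ (not_lt.1 hle) (hrS i0 hj0))
    have hsbot : s i0 ≠ ⊥ := by
      intro h; rw [h] at hlt; exact absurd hlt not_lt_bot
    obtain ⟨v, hv⟩ := WithBot.ne_bot_iff_exists.1 hsbot
    have hvlt : rr i0 hj0 < v := WithBot.coe_lt_coe.1 (by rw [hv]; exact hlt)
    have hpos : (0:Rmax) < s i0 + x i0 := by
      rw [← hv, hxpos i0 hj0, ← WithBot.coe_add,
        show (0:Rmax) = ((0:ℝ):Rmax) from rfl]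
      exact WithBot.coe_lt_coe.2 (by linarith)
    have hfin : s i0 + x i0 ≤ mpBracket s x := by
      exact Finset.le_sup (f := fun i => s i + x i) (Finset.mem_univ i0)
    exact lt_of_le_of_lt htx (lt_of_lt_of_le hpos hfin)

section Assembly
variable {n : ℕ}

/-- pointwise max of two vectors -/
def m2 (f g : RmaxVec n) : RmaxVec n := fun i => max (f i) (g i)

lemma mc0 (a b : RmaxVec n) : maxComb a b 0 0 = m2 a b := by
  funext i; simp [maxComb, m2]

lemma m2_self (f : RmaxVec n) : m2 f f = f := by funext i; simp [m2]

variable {W : Set (RmaxVec n × RmaxVec n)} (hW : IsCongruence W)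

/-- the polar cone associated to a congruence -/
def Wpol (W : Set (RmaxVec n × RmaxVec n)) : Set (RmaxVec n × RmaxVec n) :=
  {p | (m2 p.1 p.2, p.2) ∈ W}

include hW

lemma Wpol_polar : IsPolarCone (Wpol W) := by
  obtain ⟨⟨hsub, hdiag, htrans⟩, hsymm⟩ := hW
  refine ⟨⟨?_, ?_, ?_⟩, ?_⟩
  · -- subsemimodule
    rintro ⟨f1, f2⟩ h1 ⟨g1, g2⟩ h2 lam mu
    have hc := hsub _ h1 _ h2 lam mu
    simp only [Wpol, Set.mem_setOf_eq] at hc ⊢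
    have e : m2 (maxComb f1 g1 lam mu) (maxComb f2 g2 lam mu)
        = maxComb (m2 f1 f2) (m2 g1 g2) lam mu := by
      funext i
      simp only [m2, maxComb, max_add_right]
      exact (max_max_max_comm _ _ _ _).symm
    rwa [e]
  · intro f
    simp only [Wpol, Set.mem_setOf_eq, m2_self]
    exact hdiag f
  · intro f g h h1 h2
    simp only [Wpol, Set.mem_setOf_eq] at h1 h2 ⊢
    have step1 := hsub _ h1 _ (hdiag h) 0 0
    rw [mc0, mc0] at step1
    have step2 := htrans _ _ _ step1 h2
    have step3 := hsymm _ _ step2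
    have step4 := hsub _ step3 _ (hdiag (m2 f h)) 0 0
    rw [mc0, mc0] at step4
    have e1 : m2 h (m2 f h) = m2 f h := by
      funext i; simp only [m2]
      rw [max_left_comm, max_self]
    have e2 : m2 (m2 (m2 f g) h) (m2 f h) = m2 (m2 f g) h := by
      funext i; simp only [m2]
      exact max_eq_left (max_le_max (le_max_left _ _) le_rfl)
    rw [e1, e2] at step4
    exact htrans _ _ _ step4 step2
  · intro f g hfg
    simp only [Wpol, Set.mem_setOf_eq]
    have e : m2 f g = g := by funext i; exact max_eq_right (hfg i)
    rw [e]; exact hdiag g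

lemma Wpol_closed (hC : IsClosed W) : IsClosed (Wpol W) := by
  have hcont : Continuous fun p : RmaxVec n × RmaxVec n =>
      ((m2 p.1 p.2, p.2) : RmaxVec n × RmaxVec n) := by
    refine Continuous.prodMk ?_ continuous_snd
    refine continuous_pi fun i => ?_
    exact Continuous.max ((continuous_apply i).comp continuous_fst)
      ((continuous_apply i).comp continuous_snd)
  exact IsClosed.preimage hcont hC

lemma mem_Wpol {f g : RmaxVec n} (hfg : (f, g) ∈ W) : (f, g) ∈ Wpol W := by
  have hc := hW.1.1 _ hfg _ (hW.1.2.1 g) 0 0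
  rw [mc0, mc0, m2_self] at hc
  exact hc

lemma mem_Wpol' {f g : RmaxVec n} (hfg : (f, g) ∈ W) : (g, f) ∈ Wpol W :=
  mem_Wpol hW (hW.2 _ _ hfg)

lemma Wpol_back {f g : RmaxVec n} (h1 : (f, g) ∈ Wpol W) (h2 : (g, f) ∈ Wpol W) :
    (f, g) ∈ W := by
  simp only [Wpol, Set.mem_setOf_eq] at h1 h2
  have h3 := hW.2 _ _ h2
  have e : m2 g f = m2 f g := by funext i; exact max_comm _ _
  rw [e] at h3
  exact hW.1.2.2 _ _ _ h3 h1

end Assembly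
end MPAux


/-- **Separation theorem for closed congruences** (Theorem 4.9 of the paper).
If `W ⊆ (ℝmax^n)²` is a closed congruence and `(s,t) ∉ W`, then there is
`y ∈ ℝmax^n` with `max_i (f_i + y_i) = max_j (g_j + y_j)` for all `(f,g) ∈ W`,
while `max_i (s_i + y_i) ≠ max_j (t_j + y_j)`. -/
theorem separation_closed_congruence (n : ℕ) (W : Set (RmaxVec n × RmaxVec n))
    (hclosed : IsClosed W) (hW : IsCongruence W) (s t : RmaxVec n)
    (hst : (s, t) ∉ W) :
    ∃ y : RmaxVec n,
      (∀ p ∈ W, mpBracket p.1 y = mpBracket p.2 y) ∧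
      mpBracket s y ≠ mpBracket t y := by
  have hP := MPAux.Wpol_polar hW
  have hC := MPAux.Wpol_closed hW hclosed
  by_cases hcase : (s, t) ∈ MPAux.Wpol W
  · have hcase2 : (t, s) ∉ MPAux.Wpol W := fun h2 => hst (MPAux.Wpol_back hW hcase h2)
    obtain ⟨x, hmono, hlt⟩ := MPAux.polar_sep _ hC hP t s hcase2
    exact ⟨x, fun p hp => le_antisymm (hmono _ (MPAux.mem_Wpol hW hp))
      (hmono _ (MPAux.mem_Wpol' hW hp)), hlt.ne⟩
  · obtain ⟨x, hmono, hlt⟩ := MPAux.polar_sep _ hC hP s t hcase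
    exact ⟨x, fun p hp => le_antisymm (hmono _ (MPAux.mem_Wpol hW hp))
      (hmono _ (MPAux.mem_Wpol' hW hp)), hlt.ne'⟩
end
end

section
/- Let W ⊆ (ℝmax^n)^2 be a congruence (not necessarily closed) and let f, g ∈ ℝmax^n be such that (f,g) ∈ W. Then for every index i and every γ ∈ ℝmax with γ ≤ f_i, one has (g, g ⊕ e_i γ) ∈ W, where g ⊕ e_i γ is the vector obtained from g by replacing its i-th entry by max(g_i, γ). -/
open scoped Classical

noncomputable section

/-- Lemma 4.2 of the paper: if `W` is a congruence (not necessarily closed),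
`(f,g) ∈ W` and `γ ≤ f_i`, then `(g, g ⊕ e_i γ) ∈ W`. -/
theorem congruence_add_unit (n : ℕ) (W : Set (RmaxVec n × RmaxVec n))
    (hW : IsCongruence W) (f g : RmaxVec n) (hfg : (f, g) ∈ W)
    (i : Fin n) (γ : Rmax) (hγ : γ ≤ f i) :
    (g, fun j => if j = i then max (g j) γ else g j) ∈ W := by
  obtain ⟨⟨hmod, hdiag, htrans⟩, hsym⟩ := hW
  by_cases hfi : f i = ⊥
  · have hγb : γ = ⊥ := le_bot_iff.mp (hfi ▸ hγ)
    have heq : (fun j => if j = i then max (g j) γ else g j) = g := by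
      funext j; split <;> simp [hγb]
    rw [heq]; exact hdiag g
  · obtain ⟨a, ha⟩ := WithBot.ne_bot_iff_exists.mp hfi
    have hfa : f i = (a : Rmax) := ha.symm
    set δ : Rmax := γ + ((-a : ℝ) : Rmax) with hδ
    have hfiδ : f i + δ = γ := by
      rw [hfa, hδ, add_comm γ, ← add_assoc, ← WithBot.coe_add, add_neg_cancel]
      simp
    have hδ0 : δ ≤ 0 := by
      rw [hδ]
      calc γ + ((-a : ℝ) : Rmax) ≤ (a : Rmax) + ((-a : ℝ) : Rmax) :=
            add_le_add_left (hfa ▸ hγ) _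
        _ = 0 := by rw [← WithBot.coe_add, add_neg_cancel]; rfl
    set h : RmaxVec n := maxComb g f 0 δ with hh
    have step1 : (h, g) ∈ W := by
      have h1 := hmod (g, g) (hdiag g) (f, g) hfg 0 δ
      have hg : maxComb g g 0 δ = g := by
        funext j
        simp only [maxComb, add_zero]
        exact max_eq_left ((add_le_add_right hδ0 _).trans (by rw [add_zero]))
      rw [hg] at h1
      exact h1
    set g' : RmaxVec n := (fun j => if j = i then max (g j) γ else g j) with hg'
    have hgg' : g ≤ g' := by
      intro j; rw [hg']; dsimp only; split
      · exact le_max_left _ _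
      · exact le_rfl
    have hg'h : g' ≤ h := by
      intro j; rw [hg', hh]; dsimp only [maxComb]
      rw [add_zero]
      split
      · rename_i hji; subst hji; rw [hfiδ]
      · exact le_max_left _ _
    have step3 : (g', h) ∈ W := by
      have h2 := hmod (g, h) (hsym _ _ step1) (g', g') (hdiag g') 0 0
      have e1 : maxComb g g' 0 0 = g' := by
        funext j; simp only [maxComb, add_zero]; exact max_eq_right (hgg' j)
      have e2 : maxComb h g' 0 0 = h := by
        funext j; simp only [maxComb, add_zero]; exact max_eq_left (hg'h j)
      rw [e1, e2] at h2
      exact h2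
    exact hsym _ _ (htrans _ _ _ step3 step1)
end
end
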